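/- arXiv:1912.06278 — 11 statements merged into one kernel-verified Lean document; each statement's English description precedes it below -/
import Mathlib

section
/- Let n ≤ 4 and let B = [b_1,…,b_n] be an SR-CVP reduced basis of a full-rank lattice Λ(B) in ℝ^n. Then the basis length satisfies l(B) := max_i ‖b_i‖ ≤ √(4n/(5−n)) · λ_n(B). -/
open Finset

noncomputable section

/-- `ℝ^n` with the Euclidean norm. -/
abbrev Euc (n : ℕ) := EuclideanSpace ℝ (Fin n)

/-- The lattice generated by the columns `B 1, …, B n`. -/
def lattice {n : ℕ} (B : Fin n → Euc n) : Set (Euc n) :=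
  {v | ∃ c : Fin n → ℤ, v = ∑ i, (c i : ℝ) • B i}

/-- The sublattice generated by all the columns of `B` except the `i`-th one. -/
def subLattice {n : ℕ} (B : Fin n → Euc n) (i : Fin n) : Set (Euc n) :=
  {v | ∃ c : Fin n → ℤ, c i = 0 ∧ v = ∑ j, (c j : ℝ) • B j}

/-- The `k`-th successive minimum `λ_k(B)` of the lattice generated by `B`. -/
def succMin {n : ℕ} (B : Fin n → Euc n) (k : ℕ) : ℝ :=
  sInf {r : ℝ | ∃ v : Fin k → Euc n, (∀ j, v j ∈ lattice B) ∧
    LinearIndependent ℝ v ∧ ∀ j, ‖v j‖ ≤ r}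

/-- `B` is SR-CVP reduced if no vector of the sublattice generated by the other basis
vectors can shorten a basis vector. -/
def SRCVPReduced {n : ℕ} (B : Fin n → Euc n) : Prop :=
  ∀ i : Fin n, ∀ s ∈ subLattice B i, ‖B i‖ ≤ ‖B i - s‖

open scoped RealInnerProductSpace

/-- Babai-style bound: any point of the span of finitely many vectors is within
squared distance `(∑ ‖w j‖²)/4` of the integer lattice they generate. -/
private lemma babai_lemma {E : Type*} [NormedAddCommGroup E] [InnerProductSpace ℝ E]
    [FiniteDimensional ℝ E] {ι : Type*} [DecidableEq ι] (s : Finset ι) (w : ι → E) :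
    ∀ x ∈ Submodule.span ℝ (w '' ↑s), ∃ c : ι → ℤ, (∀ j ∉ s, c j = 0) ∧
      ‖x - ∑ j ∈ s, (c j : ℝ) • w j‖ ^ 2 ≤ (∑ j ∈ s, ‖w j‖ ^ 2) / 4 := by
  induction s using Finset.induction_on with
  | empty =>
    intro x hx
    simp only [Finset.coe_empty, Set.image_empty, Submodule.span_empty,
      Submodule.mem_bot] at hx
    exact ⟨0, fun j _ => rfl, by simp [hx]⟩
  | @insert a s ha ih =>
    intro x hx
    rw [Finset.coe_insert, Set.image_insert_eq, Submodule.mem_span_insert] at hx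
    obtain ⟨t, z, hz, rfl⟩ := hx
    set K : Submodule ℝ E := Submodule.span ℝ (w '' ↑s) with hK
    set u : E := (Submodule.orthogonalProjection K (w a) : E) with hu
    have hup : w a - u ∈ Kᗮ := K.sub_starProjection_mem_orthogonal (w a)
    have huK : u ∈ K := SetLike.coe_mem _
    set c0 : ℤ := round t with hc0
    have hx'' : (t - (c0 : ℝ)) • u + z ∈ K := K.add_mem (K.smul_mem _ huK) hz
    obtain ⟨c', hc'0, hbound⟩ := ih _ hx''
    refine ⟨Function.update c' a c0, ?_, ?_⟩
    · intro j hj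
      rw [Finset.mem_insert, not_or] at hj
      rw [Function.update_of_ne hj.1]
      exact hc'0 j hj.2
    · have hsum : ∑ j ∈ insert a s, ((Function.update c' a c0 j : ℤ) : ℝ) • w j
          = (c0 : ℝ) • w a + ∑ j ∈ s, ((c' j : ℤ) : ℝ) • w j := by
        rw [Finset.sum_insert ha, Function.update_self]
        congr 1
        refine Finset.sum_congr rfl fun j hj => ?_
        rw [Function.update_of_ne (by rintro rfl; exact ha hj)]
      set r : E := ((t - (c0 : ℝ)) • u + z) - ∑ j ∈ s, ((c' j : ℤ) : ℝ) • w j with hr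
      have hrK : r ∈ K := K.sub_mem hx'' (K.sum_mem fun j hj =>
        K.smul_mem _ (Submodule.subset_span (Set.mem_image_of_mem w hj)))
      have key : (t • w a + z) - ∑ j ∈ insert a s, ((Function.update c' a c0 j : ℤ) : ℝ) • w j
          = (t - (c0 : ℝ)) • (w a - u) + r := by
        rw [hsum, hr]
        module
      have hperp : ⟪(t - (c0 : ℝ)) • (w a - u), r⟫ = (0 : ℝ) :=
        Submodule.inner_left_of_mem_orthogonal hrK (Kᗮ.smul_mem _ hup)
      have hpyth : ‖(t - (c0 : ℝ)) • (w a - u) + r‖ ^ 2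
          = ‖(t - (c0 : ℝ)) • (w a - u)‖ ^ 2 + ‖r‖ ^ 2 := by
        rw [norm_add_sq_real, hperp]; ring
      have h1 : ‖(t - (c0 : ℝ)) • (w a - u)‖ ^ 2 ≤ ‖w a‖ ^ 2 / 4 := by
        rw [norm_smul, Real.norm_eq_abs]
        have h2 : |t - (c0 : ℝ)| ≤ 1 / 2 := abs_sub_round t
        have h3 : ‖w a - u‖ ≤ ‖w a‖ := by
          have h4 : ⟪u, w a - u⟫ = (0 : ℝ) := Submodule.inner_right_of_mem_orthogonal huK hup
          have h5 : ‖u + (w a - u)‖ ^ 2 = ‖u‖ ^ 2 + 2 * (0 : ℝ) + ‖w a - u‖ ^ 2 := by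
            rw [norm_add_sq_real, h4]
          have h6 : u + (w a - u) = w a := by abel
          rw [h6] at h5
          nlinarith [norm_nonneg u, norm_nonneg (w a - u), norm_nonneg (w a)]
        have h7 : |t - (c0 : ℝ)| * ‖w a - u‖ ≤ (1 / 2) * ‖w a‖ :=
          mul_le_mul h2 h3 (norm_nonneg _) (by norm_num)
        nlinarith [mul_nonneg (abs_nonneg (t - (c0 : ℝ))) (norm_nonneg (w a - u)),
          norm_nonneg (w a)]
      rw [key, hpyth, Finset.sum_insert ha]
      linarith
  
set_option maxHeartbeats 1000000 in
theorem srcvp_basis_length_bound {n : ℕ} (hn : 1 ≤ n) (hn4 : n ≤ 4)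
    (B : Fin n → Euc n) (hB : LinearIndependent ℝ B)
    (hred : SRCVPReduced B) :
    ∀ i : Fin n, ‖B i‖ ≤ Real.sqrt (4 * n / ((5 : ℝ) - n)) * succMin B n := by
  intro i0
  haveI : NeZero n := ⟨by omega⟩
  obtain ⟨i, -, hmax⟩ := Finset.exists_max_image Finset.univ (fun j => ‖B j‖)
    ⟨i0, Finset.mem_univ i0⟩
  simp only [Finset.mem_univ, forall_const, true_implies] at hmax
  set l : ℝ := ‖B i‖ with hl
  have hl0 : 0 ≤ l := norm_nonneg _
  set V : Submodule ℝ (Euc n) := Submodule.span ℝ (B '' ↑(Finset.univ.erase i)) with hV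
  set w : Euc n := (Submodule.orthogonalProjection V (B i) : Euc n) with hw
  have hwV : w ∈ V := SetLike.coe_mem _
  have hBiV : B i - w ∈ Vᗮ := V.sub_starProjection_mem_orthogonal (B i)
  set d : ℝ := ‖B i - w‖ with hd
  have hd0 : 0 ≤ d := norm_nonneg _
  -- minimality of the orthogonal projection
  have hmin : ∀ u ∈ V, d ≤ ‖B i - u‖ := by
    intro u hu
    have h1 : ⟪B i - w, w - u⟫ = (0 : ℝ) :=
      Submodule.inner_left_of_mem_orthogonal (V.sub_mem hwV hu) hBiV
    have h2 : B i - u = (B i - w) + (w - u) := by abel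
    have h3 : ‖B i - u‖ ^ 2 = d ^ 2 + ‖w - u‖ ^ 2 := by
      rw [h2, norm_add_sq_real, h1, hd]; ring
    nlinarith [norm_nonneg (B i - u), norm_nonneg (w - u), hd0]
  -- membership of the basis vectors in the lattice
  have hbl : ∀ j, B j ∈ lattice B := by
    intro j
    refine ⟨fun k => if k = j then 1 else 0, ?_⟩
    rw [Finset.sum_eq_single_of_mem j (Finset.mem_univ j)]
    · simp
    · intro k _ hk; simp [hk]
  -- the defining set of succMin is nonempty
  set S : Set ℝ := {r : ℝ | ∃ v : Fin n → Euc n, (∀ j, v j ∈ lattice B) ∧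
    LinearIndependent ℝ v ∧ ∀ j, ‖v j‖ ≤ r} with hS
  have hSnon : S.Nonempty :=
    ⟨∑ j, ‖B j‖, B, hbl, hB, fun j =>
      Finset.single_le_sum (fun k _ => norm_nonneg (B k)) (Finset.mem_univ j)⟩
  -- every admissible r is at least d
  have hdle : ∀ r ∈ S, d ≤ r := by
    rintro r ⟨v, hvlat, hvind, hvnorm⟩
    choose c hc using hvlat
    have hexists : ∃ j, c j i ≠ 0 := by
      by_contra h
      push_neg at h
      have hvV : ∀ j, v j ∈ V := by
        intro j
        rw [hc j, ← Finset.sum_erase Finset.univ (f := fun k => ((c j k : ℤ) : ℝ) • B k)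
          (show ((c j i : ℤ) : ℝ) • B i = 0 by rw [h j]; simp)]
        exact V.sum_mem fun k hk =>
          V.smul_mem _ (Submodule.subset_span (Set.mem_image_of_mem B hk))
      have hfin : Module.finrank ℝ V ≤ n - 1 := by
        haveI := Classical.decEq (Euc n)
        have h1 : Module.finrank ℝ
              (Submodule.span ℝ (↑((Finset.univ.erase i).image B) : Set (Euc n)))
            ≤ ((Finset.univ.erase i).image B).card :=
          finrank_span_finset_le_card _
        rw [hV, ← Finset.coe_image]
        refine h1.trans ?_
        calc ((Finset.univ.erase i).image B).card ≤ (Finset.univ.erase i).card :=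
              Finset.card_image_le
          _ = n - 1 := by
              rw [Finset.card_erase_of_mem (Finset.mem_univ i), Finset.card_univ,
                Fintype.card_fin]
      have hcard : n ≤ Module.finrank ℝ V := by
        let v' : Fin n → V := fun j => ⟨v j, hvV j⟩
        have hind' : LinearIndependent ℝ v' :=
          LinearIndependent.of_comp V.subtype
            (show LinearIndependent ℝ (V.subtype ∘ v') from hvind)
        simpa using hind'.fintype_card_le_finrank
      omega
    obtain ⟨j, hcj⟩ := hexists
    have hkR : ((c j i : ℤ) : ℝ) ≠ 0 := Int.cast_ne_zero.mpr hcj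
    have hk1 : (1 : ℝ) ≤ |((c j i : ℤ) : ℝ)| := by
      rw [← Int.cast_abs]
      exact_mod_cast Int.one_le_abs hcj
    -- decompose v j
    have hdecomp : v j = ((c j i : ℤ) : ℝ) • B i
        + ∑ k ∈ Finset.univ.erase i, ((c j k : ℤ) : ℝ) • B k := by
      rw [hc j, Finset.add_sum_erase Finset.univ (fun k => ((c j k : ℤ) : ℝ) • B k) (Finset.mem_univ i)]
    set s0 : Euc n := ∑ k ∈ Finset.univ.erase i, ((c j k : ℤ) : ℝ) • B k with hs0
    have hs0V : s0 ∈ V := V.sum_mem fun k hk =>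
      V.smul_mem _ (Submodule.subset_span (Set.mem_image_of_mem B hk))
    have huV : B i - (1 / ((c j i : ℤ) : ℝ)) • v j = -((1 / ((c j i : ℤ) : ℝ)) • s0) := by
      rw [hdecomp, smul_add, smul_smul, one_div_mul_cancel hkR, one_smul]
      abel
    have h1 : d ≤ ‖B i - (B i - (1 / ((c j i : ℤ) : ℝ)) • v j)‖ := by
      apply hmin
      rw [huV]
      exact V.neg_mem (V.smul_mem _ hs0V)
    have h2 : ‖B i - (B i - (1 / ((c j i : ℤ) : ℝ)) • v j)‖
        = |1 / ((c j i : ℤ) : ℝ)| * ‖v j‖ := by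
      rw [sub_sub_cancel, norm_smul, Real.norm_eq_abs]
    have h3 : |1 / ((c j i : ℤ) : ℝ)| * ‖v j‖ ≤ ‖v j‖ := by
      rw [abs_div, abs_one]
      have habs : (0 : ℝ) < |((c j i : ℤ) : ℝ)| := abs_pos.mpr hkR
      have := norm_nonneg (v j)
      rw [div_mul_eq_mul_div, one_mul, div_le_iff₀ habs]
      nlinarith
    calc d ≤ ‖v j‖ := by rw [h2] at h1; linarith
      _ ≤ r := hvnorm j
  have hdlam : d ≤ succMin B n := le_csInf hSnon hdle
  have hlam0 : 0 ≤ succMin B n := hd0.trans hdlam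
  -- apply Babai to the projection w
  obtain ⟨c, hc0, hcb⟩ := babai_lemma (Finset.univ.erase i) B w (by rw [← hV]; exact hwV)
  set svec : Euc n := ∑ j ∈ Finset.univ.erase i, ((c j : ℤ) : ℝ) • B j with hsvec
  have hci : c i = 0 := hc0 i (Finset.notMem_erase i _)
  have hsub : svec ∈ subLattice B i :=
    ⟨c, hci, (Finset.sum_erase Finset.univ (f := fun k => ((c k : ℤ) : ℝ) • B k)
      (show ((c i : ℤ) : ℝ) • B i = 0 by rw [hci]; simp))⟩
  have hsvecV : svec ∈ V := V.sum_mem fun k hk =>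
    V.smul_mem _ (Submodule.subset_span (Set.mem_image_of_mem B hk))
  have hred' : l ≤ ‖B i - svec‖ := hred i svec hsub
  have hperp : ⟪B i - w, w - svec⟫ = (0 : ℝ) :=
    Submodule.inner_left_of_mem_orthogonal (V.sub_mem hwV hsvecV) hBiV
  have hpyth : ‖B i - svec‖ ^ 2 = d ^ 2 + ‖w - svec‖ ^ 2 := by
    have h2 : B i - svec = (B i - w) + (w - svec) := by abel
    rw [h2, norm_add_sq_real, hperp, hd]; ring
  -- bound the sum of squared norms
  have hsumb : ∑ j ∈ Finset.univ.erase i, ‖B j‖ ^ 2 ≤ ((n : ℝ) - 1) * l ^ 2 := by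
    have h1 : ∑ j ∈ Finset.univ.erase i, ‖B j‖ ^ 2 ≤ (Finset.univ.erase i).card • l ^ 2 :=
      Finset.sum_le_card_nsmul _ _ _ fun j _ =>
        pow_le_pow_left₀ (norm_nonneg _) (hmax j) 2
    have h2 : (Finset.univ.erase i).card = n - 1 := by
      rw [Finset.card_erase_of_mem (Finset.mem_univ i), Finset.card_univ, Fintype.card_fin]
    rw [h2, nsmul_eq_mul, Nat.cast_sub hn, Nat.cast_one] at h1
    exact h1
  have hnR : (1 : ℝ) ≤ (n : ℝ) := by exact_mod_cast hn
  have hn4R : (n : ℝ) ≤ 4 := by exact_mod_cast hn4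
  have h5n : (0 : ℝ) < 5 - (n : ℝ) := by linarith
  -- the key quadratic inequality
  have hkey : l ^ 2 ≤ (succMin B n) ^ 2 + ((n : ℝ) - 1) * l ^ 2 / 4 := by
    have h1 : l ^ 2 ≤ ‖B i - svec‖ ^ 2 := pow_le_pow_left₀ hl0 hred' 2
    have h2 : d ^ 2 ≤ (succMin B n) ^ 2 := pow_le_pow_left₀ hd0 hdlam 2
    have h3 : ‖w - svec‖ ^ 2 ≤ ((n : ℝ) - 1) * l ^ 2 / 4 := by
      refine hcb.trans ?_
      linarith
    linarith [hpyth ▸ h1]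
  have hl2 : l ^ 2 ≤ 4 * (n : ℝ) / (5 - (n : ℝ)) * (succMin B n) ^ 2 := by
    rw [div_mul_eq_mul_div, le_div_iff₀ h5n]
    nlinarith [sq_nonneg (succMin B n), sq_nonneg l]
  have hfinal : l ≤ Real.sqrt (4 * (n : ℝ) / (5 - (n : ℝ))) * succMin B n := by
    have h1 : l = Real.sqrt (l ^ 2) := (Real.sqrt_sq hl0).symm
    rw [h1]
    have h2 : Real.sqrt (4 * (n : ℝ) / (5 - (n : ℝ))) * succMin B n
        = Real.sqrt (4 * (n : ℝ) / (5 - (n : ℝ)) * (succMin B n) ^ 2) := by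
      rw [Real.sqrt_mul (by positivity), Real.sqrt_sq hlam0]
    rw [h2]
    exact Real.sqrt_le_sqrt hl2
  calc ‖B i0‖ ≤ l := hmax i0
    _ ≤ _ := hfinal
end
end

section
/- Let n ≤ 4 and let B = [b_1,…,b_n] be an SR-CVP reduced basis of a full-rank lattice Λ(B) in ℝ^n. Then Σ_{i=1}^n ‖b_i‖² ≤ (4n/(5−n)) · λ_n(B)². -/
open Finset

set_option maxHeartbeats 1000000

noncomputable section

section Aux

open RealInnerProductSpace

variable {E : Type*} [NormedAddCommGroup E] [InnerProductSpace ℝ E]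

lemma proj_split (W : Submodule ℝ E) [CompleteSpace W] (y : E) :
    ‖y - (Submodule.orthogonalProjectionOnto W y : E)‖ ^ 2 + ‖(Submodule.orthogonalProjectionOnto W y : E)‖ ^ 2 = ‖y‖ ^ 2 := by
  have hperp : y - (Submodule.orthogonalProjectionOnto W y : E) ∈ Wᗮ :=
    Submodule.sub_starProjection_mem_orthogonal (K := W) y
  have hi : ⟪y - (Submodule.orthogonalProjectionOnto W y : E), (Submodule.orthogonalProjectionOnto W y : E)⟫ = 0 :=
    Submodule.inner_left_of_mem_orthogonal (SetLike.coe_mem _) hperp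
  have h := norm_add_sq_real (y - (Submodule.orthogonalProjectionOnto W y : E)) ((Submodule.orthogonalProjectionOnto W y : E))
  rw [sub_add_cancel] at h
  rw [h, hi]; ring

lemma cover : ∀ (m : ℕ) (u : Fin m → E) (t : E), t ∈ Submodule.span ℝ (Set.range u) →
    ∃ z : Fin m → ℤ, ‖t - ∑ j, (z j : ℝ) • u j‖ ^ 2 ≤ (1/4) * ∑ j, ‖u j‖ ^ 2 := by
  intro m
  induction m with
  | zero =>
    intro u t ht
    refine ⟨0, ?_⟩
    rw [Set.range_eq_empty u, Submodule.span_empty, Submodule.mem_bot] at ht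
    simp [ht]
  | succ m ih =>
    intro u t ht
    obtain ⟨x, hx⟩ := (Submodule.mem_span_range_iff_exists_fun ℝ).mp ht
    set W := Submodule.span ℝ (Set.range (u ∘ Fin.castSucc)) with hW
    haveI : FiniteDimensional ℝ W := FiniteDimensional.span_of_finite ℝ (Set.finite_range _)
    set L := Fin.last m with hL
    set k : ℤ := round (x L) with hk
    set p : E := (Submodule.orthogonalProjectionOnto W (u L) : E) with hp
    set q : E := u L - p with hq
    have hqperp : q ∈ Wᗮ := Submodule.sub_starProjection_mem_orthogonal (K := W) (u L)
    set t'' : E := (∑ j : Fin m, x j.castSucc • u j.castSucc) + (x L - (k : ℝ)) • p with ht''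
    have ht''W : t'' ∈ W := by
      apply Submodule.add_mem
      · exact Submodule.sum_mem _ fun j _ => Submodule.smul_mem _ _
          (Submodule.subset_span ⟨j, rfl⟩)
      · exact Submodule.smul_mem _ _ (SetLike.coe_mem _)
    obtain ⟨z, hz⟩ := ih (u ∘ Fin.castSucc) t'' ht''W
    refine ⟨Fin.snoc z k, ?_⟩
    have hsplit : t - ∑ j : Fin (m+1), ((Fin.snoc z k : Fin (m+1) → ℤ) j : ℝ) • u j
        = (t'' - ∑ j : Fin m, (z j : ℝ) • (u ∘ Fin.castSucc) j) + (x L - (k:ℝ)) • q := by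
      rw [← hx, Fin.sum_univ_castSucc, Fin.sum_univ_castSucc
        (f := fun j : Fin (m+1) => ((Fin.snoc z k : Fin (m+1) → ℤ) j : ℝ) • u j)]
      simp only [Fin.snoc_castSucc, Fin.snoc_last, ht'', hq, Function.comp]
      module
    rw [hsplit]
    have hA : (t'' - ∑ j : Fin m, (z j : ℝ) • (u ∘ Fin.castSucc) j) ∈ W := by
      apply Submodule.sub_mem _ ht''W
      exact Submodule.sum_mem _ fun j _ => Submodule.smul_mem _ _ (Submodule.subset_span ⟨j, rfl⟩)
    have hB : (x L - (k:ℝ)) • q ∈ Wᗮ := Submodule.smul_mem _ _ hqperp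
    have hinner : ⟪t'' - ∑ j : Fin m, (z j : ℝ) • (u ∘ Fin.castSucc) j, (x L - (k:ℝ)) • q⟫ = 0 :=
      Submodule.inner_right_of_mem_orthogonal hA hB
    rw [norm_add_sq_real, hinner]
    have hq2 : ‖q‖ ^ 2 ≤ ‖u L‖ ^ 2 := by
      have := proj_split W (u L)
      nlinarith [sq_nonneg ‖p‖]
    have hxk : (x L - (k:ℝ))^2 ≤ 1/4 := by
      have := abs_sub_round (x L)
      have h2 : |x L - (k:ℝ)| ≤ 1/2 := this
      nlinarith [sq_abs (x L - (k:ℝ)), abs_nonneg (x L - (k:ℝ))]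
    have hb2 : ‖(x L - (k:ℝ)) • q‖ ^ 2 ≤ (1/4) * ‖u L‖ ^ 2 := by
      rw [norm_smul, mul_pow, Real.norm_eq_abs, sq_abs]
      nlinarith [sq_nonneg ‖q‖, norm_nonneg q, sq_nonneg (x L - (k:ℝ))]
    rw [Fin.sum_univ_castSucc (f := fun j : Fin (m+1) => ‖u j‖ ^ 2)]
    have : ∑ j : Fin m, ‖(u ∘ Fin.castSucc) j‖ ^ 2 = ∑ j : Fin m, ‖u j.castSucc‖ ^ 2 := rfl
    rw [this] at hz
    nlinarith [hz, hb2]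

lemma key {n : ℕ} (B : Fin n → Euc n) (hred : SRCVPReduced B) (i0 : Fin n)
    (c : Fin n → ℤ) (hc : c i0 ≠ 0) :
    ‖B i0‖ ^ 2 - (1/4) * ((∑ j, ‖B j‖ ^ 2) - ‖B i0‖ ^ 2) ≤ ‖∑ j, (c j : ℝ) • B j‖ ^ 2 := by
  classical
  set u : Fin n → Euc n := fun j => if j = i0 then 0 else B j with hu
  set W := Submodule.span ℝ (Set.range u) with hW
  haveI : FiniteDimensional ℝ W := FiniteDimensional.span_of_finite ℝ (Set.finite_range _)
  have hmemW : ∀ j, j ≠ i0 → B j ∈ W := by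
    intro j hj
    have : u j = B j := by simp [hu, hj]
    rw [← this]; exact Submodule.subset_span ⟨j, rfl⟩
  -- sum of ‖u j‖²
  have husum : ∑ j, ‖u j‖ ^ 2 = (∑ j, ‖B j‖ ^ 2) - ‖B i0‖ ^ 2 := by
    have h1 : ∑ j, ‖u j‖ ^ 2 = ∑ j ∈ univ.erase i0, ‖B j‖ ^ 2 := by
      rw [← Finset.sum_erase_add _ _ (Finset.mem_univ i0)]
      have : ‖u i0‖ ^ 2 = 0 := by simp [hu]
      rw [this, add_zero]
      exact Finset.sum_congr rfl fun j hj => by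
        simp [hu, Finset.ne_of_mem_erase hj]
    have h2 : ∑ j ∈ univ.erase i0, ‖B j‖ ^ 2 + ‖B i0‖ ^ 2 = ∑ j, ‖B j‖ ^ 2 :=
      Finset.sum_erase_add _ _ (Finset.mem_univ i0)
    rw [h1]; linarith
  -- step A : h² ≥ β - Q
  obtain ⟨z, hz⟩ := cover n u (Submodule.orthogonalProjectionOnto W (B i0) : Euc n) (SetLike.coe_mem _)
  set c' : Fin n → ℤ := fun j => if j = i0 then 0 else z j with hc'
  set s : Euc n := ∑ j, (c' j : ℝ) • B j with hs
  have hsu : s = ∑ j, (z j : ℝ) • u j := by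
    apply Finset.sum_congr rfl
    intro j _
    by_cases h : j = i0 <;> simp [hc', hu, h]
  have hsW : s ∈ W := by
    rw [hsu]
    exact Submodule.sum_mem _ fun j _ => Submodule.smul_mem _ _ (Submodule.subset_span ⟨j, rfl⟩)
  have hred0 : ‖B i0‖ ≤ ‖B i0 - s‖ := hred i0 s ⟨c', by simp [hc'], rfl⟩
  have hred2 : ‖B i0‖ ^ 2 ≤ ‖B i0 - s‖ ^ 2 := by
    exact pow_le_pow_left₀ (norm_nonneg _) hred0 2
  set P : Euc n := (Submodule.orthogonalProjectionOnto W (B i0) : Euc n) with hP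
  have hdecomp : B i0 - s = (B i0 - P) + (P - s) := by abel
  have hPs : P - s ∈ W := Submodule.sub_mem _ (SetLike.coe_mem _) hsW
  have hBP : B i0 - P ∈ Wᗮ := Submodule.sub_starProjection_mem_orthogonal (K := W) (B i0)
  have hinner : ⟪B i0 - P, P - s⟫ = 0 :=
    (Submodule.inner_left_of_mem_orthogonal hPs hBP)
  have hns : ‖B i0 - s‖ ^ 2 = ‖B i0 - P‖ ^ 2 + ‖P - s‖ ^ 2 := by
    rw [hdecomp, norm_add_sq_real, hinner]; ring
  have hPz : ‖P - s‖ ^ 2 ≤ (1/4) * ((∑ j, ‖B j‖ ^ 2) - ‖B i0‖ ^ 2) := by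
    rw [← husum]; rw [hsu]; exact hz
  have hstepA : ‖B i0‖ ^ 2 - (1/4) * ((∑ j, ‖B j‖ ^ 2) - ‖B i0‖ ^ 2) ≤ ‖B i0 - P‖ ^ 2 := by
    nlinarith [hred2, hns, hPz]
  -- step B : ‖v‖² ≥ c² h² ≥ h²
  set v : Euc n := ∑ j, (c j : ℝ) • B j with hv
  set Pm : Euc n →L[ℝ] Euc n := W.subtypeL.comp (Submodule.orthogonalProjectionOnto W) with hPm
  have hPmv : ∀ y : Euc n, Pm y = (Submodule.orthogonalProjectionOnto W y : Euc n) := fun y => rfl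
  have hPmfix : ∀ j, j ≠ i0 → Pm (B j) = B j := by
    intro j hj
    rw [hPmv, Submodule.coe_orthogonalProjectionOnto_apply, Submodule.starProjection_eq_self_iff.mpr (hmemW j hj)]
  have hvP : v - Pm v = (c i0 : ℝ) • (B i0 - P) := by
    rw [hv, map_sum]
    rw [← Finset.sum_sub_distrib]
    rw [Finset.sum_eq_single i0]
    · rw [map_smul, smul_sub, hPmv]
    · intro j _ hj
      rw [map_smul, hPmfix j hj, sub_self]
    · intro h; exact absurd (Finset.mem_univ i0) h
  have hProj : ‖v - Pm v‖ ^ 2 + ‖(Pm v : Euc n)‖ ^ 2 = ‖v‖ ^ 2 := proj_split W v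
  have hcsq : (1:ℝ) ≤ (c i0 : ℝ) ^ 2 := by
    have h1 : (1:ℤ) ≤ |c i0| := Int.one_le_abs hc
    have : (1:ℤ) ≤ (c i0)^2 := by nlinarith [sq_abs (c i0)]
    exact_mod_cast this
  have hnv : ‖B i0 - P‖ ^ 2 ≤ ‖v‖ ^ 2 := by
    have h1 : ‖v - Pm v‖ ^ 2 = (c i0 : ℝ)^2 * ‖B i0 - P‖ ^ 2 := by
      rw [hvP, norm_smul, mul_pow, Real.norm_eq_abs, sq_abs]
    nlinarith [sq_nonneg ‖(Pm v : Euc n)‖, norm_nonneg (B i0 - P), sq_nonneg ‖B i0 - P‖]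
  linarith [hstepA, hnv]

end Aux

theorem srcvp_sum_sq_bound {n : ℕ} (hn : 1 ≤ n) (hn4 : n ≤ 4)
    (B : Fin n → Euc n) (hB : LinearIndependent ℝ B)
    (hred : SRCVPReduced B) :
    ∑ i, ‖B i‖ ^ 2 ≤ 4 * n / ((5 : ℝ) - n) * succMin B n ^ 2 := by
  classical
  haveI : NeZero n := ⟨by omega⟩
  set T : ℝ := ∑ i, ‖B i‖ ^ 2 with hT
  have hT0 : 0 ≤ T := Finset.sum_nonneg fun i _ => sq_nonneg _
  have hn1 : (1:ℝ) ≤ (n:ℝ) := by exact_mod_cast hn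
  have h5n : (1:ℝ) ≤ 5 - (n:ℝ) := by
    have : (n:ℝ) ≤ 4 := by exact_mod_cast hn4
    linarith
  set S : Set ℝ := {r : ℝ | ∃ v : Fin n → Euc n, (∀ j, v j ∈ lattice B) ∧
    LinearIndependent ℝ v ∧ ∀ j, ‖v j‖ ≤ r} with hS
  -- nonempty
  have hSne : S.Nonempty := by
    refine ⟨∑ i, ‖B i‖, B, fun j => ?_, hB, fun j => ?_⟩
    · exact ⟨fun i => if i = j then 1 else 0, by
        rw [Finset.sum_eq_single j] <;> simp +contextual⟩
    · exact Finset.single_le_sum (f := fun i => ‖B i‖) (fun i _ => norm_nonneg _)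
        (Finset.mem_univ j)
  set r₀ : ℝ := Real.sqrt ((5 - (n:ℝ)) / (4 * n) * T) with hr₀
  have harg0 : 0 ≤ (5 - (n:ℝ)) / (4 * n) * T := by positivity
  -- every element of S is ≥ r₀
  have hlb : ∀ r ∈ S, r₀ ≤ r := by
    intro r hr
    obtain ⟨v, hvl, hvi, hvr⟩ := hr
    have hr0 : 0 ≤ r := le_trans (norm_nonneg (v 0)) (hvr 0)
    set C : Fin n → Fin n → ℤ := fun j => Classical.choose (hvl j) with hC
    have hv : ∀ j, v j = ∑ i, (C j i : ℝ) • B i := fun j => Classical.choose_spec (hvl j)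
    set M : Matrix (Fin n) (Fin n) ℝ := Matrix.of fun j i => (C j i : ℝ) with hM
    have hMdet : M.det ≠ 0 := by
      intro hdet
      obtain ⟨g, hgne, hgM⟩ := Matrix.exists_vecMul_eq_zero_iff.mpr hdet
      have hzero : ∑ j, g j • v j = 0 := by
        have hcalc : ∑ j, g j • v j = ∑ i, (Matrix.vecMul g M i) • B i := by
          simp_rw [hv, Finset.smul_sum, smul_smul]
          rw [Finset.sum_comm]
          apply Finset.sum_congr rfl
          intro i _
          rw [Matrix.vecMul, dotProduct, Finset.sum_smul]
          rfl
        rw [hcalc, hgM]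
        simp
      have := Fintype.linearIndependent_iff.mp hvi g hzero
      exact hgne (funext this)
    have hperm : ∃ σ : Equiv.Perm (Fin n), ∀ i, M (σ i) i ≠ 0 := by
      by_contra h
      push_neg at h
      apply hMdet
      rw [Matrix.det_apply]
      apply Finset.sum_eq_zero
      intro σ _
      obtain ⟨i, hi⟩ := h σ
      have hp : ∏ j, M (σ j) j = 0 := Finset.prod_eq_zero (Finset.mem_univ i) hi
      rw [hp, smul_zero]
    obtain ⟨σ, hσ⟩ := hperm
    have hkey : ∀ i, ‖B i‖ ^ 2 - (1/4) * (T - ‖B i‖ ^ 2) ≤ ‖v (σ i)‖ ^ 2 := by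
      intro i
      have hci : C (σ i) i ≠ 0 := by
        intro h0
        apply hσ i
        simp [hM, h0]
      have := key B hred i (C (σ i)) hci
      rw [← hv (σ i)] at this
      exact this
    have hsum1 : ∑ i, (‖B i‖ ^ 2 - (1/4) * (T - ‖B i‖ ^ 2)) ≤ ∑ i, ‖v (σ i)‖ ^ 2 :=
      Finset.sum_le_sum fun i _ => hkey i
    have hsum2 : ∑ i, ‖v (σ i)‖ ^ 2 = ∑ j, ‖v j‖ ^ 2 :=
      Equiv.sum_comp σ (fun j => ‖v j‖ ^ 2)
    have hsum3 : ∑ j, ‖v j‖ ^ 2 ≤ (n : ℝ) * r ^ 2 := by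
      calc ∑ j, ‖v j‖ ^ 2 ≤ ∑ _j : Fin n, r ^ 2 :=
            Finset.sum_le_sum fun j _ => pow_le_pow_left₀ (norm_nonneg _) (hvr j) 2
        _ = (n : ℝ) * r ^ 2 := by simp [mul_comm]
    have hsum4 : ∑ i, (‖B i‖ ^ 2 - (1/4) * (T - ‖B i‖ ^ 2)) = (5/4) * T - ((n:ℝ)/4) * T := by
      have h1 : ∀ i : Fin n, ‖B i‖ ^ 2 - (1/4) * (T - ‖B i‖ ^ 2)
          = (5/4) * ‖B i‖ ^ 2 - (1/4) * T := fun i => by ring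
      rw [Finset.sum_congr rfl fun i _ => h1 i, Finset.sum_sub_distrib, ← Finset.mul_sum,
        Finset.sum_const, Finset.card_univ, Fintype.card_fin, nsmul_eq_mul, ← hT]
      ring
    have hfin : (5 - (n:ℝ)) / (4 * n) * T ≤ r ^ 2 := by
      have h4 : (5 - (n:ℝ)) * T ≤ 4 * ((n:ℝ) * r ^ 2) := by linarith [hsum1, hsum2 ▸ hsum1]
      rw [div_mul_eq_mul_div, div_le_iff₀ (by linarith : (0:ℝ) < 4 * n)]
      linarith
    calc r₀ ≤ Real.sqrt (r ^ 2) := Real.sqrt_le_sqrt hfin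
      _ = r := Real.sqrt_sq hr0
  have hmin : r₀ ≤ succMin B n := le_csInf hSne hlb
  have hs0 : 0 ≤ succMin B n := le_trans (Real.sqrt_nonneg _) hmin
  have hsq : (5 - (n:ℝ)) / (4 * n) * T ≤ succMin B n ^ 2 := by
    have h1 : r₀ ^ 2 = (5 - (n:ℝ)) / (4 * n) * T := Real.sq_sqrt harg0
    nlinarith [Real.sqrt_nonneg ((5 - (n:ℝ)) / (4 * n) * T)]
  rw [div_mul_eq_mul_div, le_div_iff₀ (by linarith : (0:ℝ) < 5 - (n:ℝ))]
  have h2 : (4 * (n:ℝ)) * ((5 - (n:ℝ)) / (4 * n) * T) = T * (5 - (n:ℝ)) := by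
    field_simp
  nlinarith [mul_le_mul_of_nonneg_left hsq (by linarith : (0:ℝ) ≤ 4 * (n:ℝ))]
end
end

section
/- Let n ≤ 4 and let B = [b_1,…,b_n] be an SR-CVP reduced basis of a full-rank lattice Λ(B) in ℝ^n. Then the product of the basis lengths satisfies Π_{i=1}^n ‖b_i‖ ≤ (4/(5−n))^{n/2} · λ_n(B)^n. -/
open Finset

noncomputable section

section Aux

variable {E : Type*} [NormedAddCommGroup E] [InnerProductSpace ℝ E] [FiniteDimensional ℝ E]

local notation "⟪" x ", " y "⟫_ℝ" => @inner ℝ _ _ x y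

/-- Pythagoras relative to an orthogonal projection. -/
lemma pyth_aux (K : Submodule ℝ E) (x s : E) (hs : s ∈ K) :
    ‖x - s‖ ^ 2 = ‖x - (Submodule.orthogonalProjection K x : E)‖ ^ 2 +
      ‖(Submodule.orthogonalProjection K x : E) - s‖ ^ 2 := by
  have h : x - s = (x - (Submodule.orthogonalProjection K x : E)) +
      ((Submodule.orthogonalProjection K x : E) - s) := by abel
  rw [h]
  have hz : ⟪x - (Submodule.orthogonalProjection K x : E), (Submodule.orthogonalProjection K x : E) - s⟫_ℝ = 0 :=
    Submodule.starProjection_inner_eq_zero x _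
      (Submodule.sub_mem K (Submodule.coe_mem _) hs)
  simp only [pow_two]
  exact norm_add_sq_eq_norm_sq_add_norm_sq_of_inner_eq_zero _ _ hz

/-- Babai's nearest plane bound: any point of the span of a finite family of vectors is
within squared distance `(1/4) ∑ ‖c k‖²` of an integer combination of the family. -/
lemma nearest_plane :
    ∀ (m : ℕ) (c : Fin m → E) (t : E), t ∈ Submodule.span ℝ (Set.range c) →
      ∃ z : Fin m → ℤ, ‖t - ∑ k, (z k : ℝ) • c k‖ ^ 2 ≤ (1 / 4) * ∑ k, ‖c k‖ ^ 2 := by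
  intro m
  induction m with
  | zero =>
    intro c t ht
    refine ⟨0, ?_⟩
    have hr : Set.range c = ∅ := Set.range_eq_empty c
    rw [hr, Submodule.span_empty, Submodule.mem_bot] at ht
    simp [ht]
  | succ m ih =>
    intro c t ht
    obtain ⟨a, ha⟩ := (Submodule.mem_span_range_iff_exists_fun ℝ).mp ht
    set K := Submodule.span ℝ (Set.range (Fin.init c)) with hKdef
    have hmemK : ∀ k : Fin m, c k.castSucc ∈ K := fun k =>
      Submodule.subset_span ⟨k, rfl⟩
    set cL := c (Fin.last m) with hcL
    set aL := a (Fin.last m) with haL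
    set r : ℤ := round aL with hr
    set u : E := cL - (Submodule.orthogonalProjection K cL : E) with hu
    set t' : E := t - (r : ℝ) • cL with ht'
    -- decompose t'
    have hPt' : t' - (Submodule.orthogonalProjection K t' : E) = (aL - (r : ℝ)) • u := by
      have hdec : ∀ x : E, x - (Submodule.orthogonalProjection K x : E) ∈ Kᗮ :=
        fun x => Submodule.sub_starProjection_mem_orthogonal x
      -- t' = (∑ over castSucc) + (aL - r) • cL
      have ht'' : t' = (∑ k : Fin m, a k.castSucc • c k.castSucc) + (aL - (r : ℝ)) • cL := by
        rw [ht', ← ha, Fin.sum_univ_castSucc]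
        rw [sub_smul]
        abel
      -- use uniqueness of orthogonal projection
      have hm1 : (∑ k : Fin m, a k.castSucc • c k.castSucc) + (aL - (r : ℝ)) •
          (Submodule.orthogonalProjection K cL : E) ∈ K := by
        refine Submodule.add_mem K ?_ ?_
        · exact Submodule.sum_mem K fun k _ => Submodule.smul_mem K _ (hmemK k)
        · exact Submodule.smul_mem K _ (Submodule.coe_mem _)
      have hm2 : t' - ((∑ k : Fin m, a k.castSucc • c k.castSucc) + (aL - (r : ℝ)) •
          (Submodule.orthogonalProjection K cL : E)) ∈ Kᗮ := by
        have : t' - ((∑ k : Fin m, a k.castSucc • c k.castSucc) + (aL - (r : ℝ)) •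
            (Submodule.orthogonalProjection K cL : E)) = (aL - (r : ℝ)) • u := by
          rw [ht'', hu]; rw [smul_sub]; abel
        rw [this]
        exact Submodule.smul_mem _ _ (Submodule.sub_starProjection_mem_orthogonal cL)
      have hproj : (Submodule.orthogonalProjection K t' : E) =
          (∑ k : Fin m, a k.castSucc • c k.castSucc) + (aL - (r : ℝ)) •
          (Submodule.orthogonalProjection K cL : E) := by
        exact Submodule.eq_starProjection_of_mem_orthogonal (K := K) hm1 hm2
      rw [hproj, ht'', hu, smul_sub]
      abel
    -- apply induction hypothesis to the projection of t'
    obtain ⟨z', hz'⟩ := ih (Fin.init c) (Submodule.orthogonalProjection K t' : E) (Submodule.coe_mem _)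
    refine ⟨Fin.snoc z' r, ?_⟩
    have hsum : ∑ k : Fin (m + 1), ((Fin.snoc z' r : Fin (m+1) → ℤ) k : ℝ) • c k =
        (∑ k : Fin m, (z' k : ℝ) • Fin.init c k) + (r : ℝ) • cL := by
      rw [Fin.sum_univ_castSucc]
      simp [Fin.init]
      rfl
    set s' : E := ∑ k : Fin m, (z' k : ℝ) • Fin.init c k with hs'
    have hs'K : s' ∈ K := Submodule.sum_mem K fun k _ =>
      Submodule.smul_mem K _ (Submodule.subset_span ⟨k, rfl⟩)
    have hkey : t - ∑ k : Fin (m+1), ((Fin.snoc z' r : Fin (m+1) → ℤ) k : ℝ) • c k = t' - s' := by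
      rw [hsum, ht']; abel
    rw [hkey]
    -- Pythagoras for t' - s'
    have hpy := pyth_aux K t' s' hs'K
    -- bound the orthogonal part
    have hub : ‖u‖ ^ 2 ≤ ‖cL‖ ^ 2 := by
      have := pyth_aux K cL 0 (Submodule.zero_mem K)
      simp only [sub_zero] at this
      rw [this]
      have : (0:ℝ) ≤ ‖(Submodule.orthogonalProjection K cL : E) - 0‖ ^ 2 := sq_nonneg _
      nlinarith [this]
    have horth : ‖t' - (Submodule.orthogonalProjection K t' : E)‖ ^ 2 ≤ (1/4) * ‖cL‖ ^ 2 := by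
      rw [hPt', norm_smul]
      have h1 : |aL - (r : ℝ)| ≤ 1 / 2 := abs_sub_round aL
      have h2 : ‖(aL - (r:ℝ))‖ = |aL - (r:ℝ)| := rfl
      have hun : (0:ℝ) ≤ ‖u‖ := norm_nonneg u
      rw [mul_pow, h2]
      have h3 : |aL - (r:ℝ)| ^ 2 ≤ 1 / 4 := by nlinarith [abs_nonneg (aL - (r:ℝ))]
      nlinarith [h3, hub, sq_nonneg ‖u‖, sq_nonneg (|aL - (r:ℝ)|)]
    calc ‖t' - s'‖ ^ 2
        = ‖t' - (Submodule.orthogonalProjection K t' : E)‖ ^ 2 +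
          ‖(Submodule.orthogonalProjection K t' : E) - s'‖ ^ 2 := hpy
      _ ≤ (1/4) * ‖cL‖ ^ 2 + (1/4) * ∑ k : Fin m, ‖Fin.init c k‖ ^ 2 :=
          add_le_add horth hz'
      _ = (1/4) * ∑ k : Fin (m+1), ‖c k‖ ^ 2 := by
          rw [Fin.sum_univ_castSucc]
          simp [Fin.init]
          ring

/-- From `x² ≤ y²` with nonnegativity, conclude `x ≤ y`. -/
lemma sq_le_imp {x y : ℝ} (hx : 0 ≤ x) (hy : 0 ≤ y) (h : x ^ 2 ≤ y ^ 2) : x ≤ y := by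
  calc x = Real.sqrt (x ^ 2) := (Real.sqrt_sq hx).symm
    _ ≤ Real.sqrt (y ^ 2) := Real.sqrt_le_sqrt h
    _ = y := Real.sqrt_sq hy

lemma pb_helper {b bs q pb pbs S : ℝ} (h4 : b ^ 2 ≤ bs ^ 2) (h2 : bs ^ 2 = q ^ 2 + pbs ^ 2)
    (h3 : b ^ 2 = q ^ 2 + pb ^ 2) (hz : pbs ^ 2 ≤ 1 / 4 * S) : pb ^ 2 ≤ 1 / 4 * S := by
  linarith

lemma hd_helper {q p w vn α r : ℝ} (h1 : vn ^ 2 = w ^ 2 + p ^ 2) (h2 : w ^ 2 = α ^ 2 * q ^ 2)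
    (h3 : 1 ≤ α ^ 2) (h4 : vn ≤ r) (hq : 0 ≤ q) (hvn : 0 ≤ vn) (hr : 0 ≤ r) : q ≤ r := by
  have hq2 : q ^ 2 ≤ r ^ 2 := by nlinarith [sq_nonneg p, sq_nonneg q]
  exact sq_le_imp hq hr hq2

lemma comb_helper {Mr q p S r en : ℝ} (h3 : Mr ^ 2 = q ^ 2 + p ^ 2) (hPB : p ^ 2 ≤ 1 / 4 * S)
    (hsumc : S ≤ (en - 1) * Mr ^ 2) (hd : q ≤ r) (hq : 0 ≤ q) (hr : 0 ≤ r) :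
    (5 - en) / 4 * Mr ^ 2 ≤ r ^ 2 := by
  nlinarith [mul_self_le_mul_self hq hd]

end Aux

theorem srcvp_prod_norm_bound {n : ℕ} (hn : 1 ≤ n) (hn4 : n ≤ 4)
    (B : Fin n → Euc n) (hB : LinearIndependent ℝ B)
    (hred : SRCVPReduced B) :
    ∏ i, ‖B i‖ ≤ (4 / ((5 : ℝ) - n)) ^ ((n : ℝ) / 2) * succMin B n ^ n := by
  classical
  have hn5 : (0:ℝ) < 5 - n := by
    have h4 : (n:ℝ) ≤ 4 := by exact_mod_cast hn4
    linarith
  have hs5 : (0:ℝ) < Real.sqrt (5 - n) := Real.sqrt_pos.mpr hn5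
  obtain ⟨i₀, -, hi₀⟩ := Finset.exists_max_image (univ : Finset (Fin n)) (fun i => ‖B i‖)
    ⟨⟨0, hn⟩, mem_univ _⟩
  set M := ‖B i₀‖ with hMdef
  have hM0 : 0 ≤ M := norm_nonneg _
  have hle : ∀ i, ‖B i‖ ≤ M := fun i => hi₀ i (mem_univ i)
  set c : Fin n → Euc n := fun k => if k = i₀ then 0 else B k with hc
  set K := Submodule.span ℝ (Set.range c) with hK
  have hBK : ∀ k, k ≠ i₀ → B k ∈ K := by
    intro k hk
    have h1 : c k = B k := if_neg hk
    exact h1 ▸ Submodule.subset_span ⟨k, rfl⟩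
  -- bound on the sum of squared norms of the other basis vectors
  have hsumc : ∑ k, ‖c k‖ ^ 2 ≤ ((n:ℝ) - 1) * M ^ 2 := by
    have h1 : ∀ k : Fin n, ‖c k‖ ^ 2 ≤ M ^ 2 - (if k = i₀ then M ^ 2 else 0) := by
      intro k
      by_cases h : k = i₀
      · simp [hc, h]
      · simp only [hc, if_neg h]
        have := pow_le_pow_left₀ (norm_nonneg (B k)) (hle k) 2
        simpa [h] using this
    calc ∑ k, ‖c k‖ ^ 2 ≤ ∑ k : Fin n, (M ^ 2 - if k = i₀ then M ^ 2 else 0) :=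
          Finset.sum_le_sum (fun k _ => h1 k)
      _ = ((n:ℝ) - 1) * M ^ 2 := by
          rw [Finset.sum_sub_distrib, Finset.sum_const, Finset.sum_ite_eq' univ i₀
            (fun _ => M ^ 2)]
          simp only [mem_univ, if_pos, card_univ, Fintype.card_fin, nsmul_eq_mul]
          ring
  -- the projection of B i₀ onto K is short, by SR-CVP reducedness and nearest plane
  have hPB : ‖(Submodule.orthogonalProjection K (B i₀) : Euc n)‖ ^ 2 ≤ (1/4) * ∑ k, ‖c k‖ ^ 2 := by
    obtain ⟨z, hz⟩ := nearest_plane n c ((Submodule.orthogonalProjection K (B i₀) : Euc n))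
      (Submodule.coe_mem _)
    set s : Euc n := ∑ k, (z k : ℝ) • c k with hs
    have hsl : s ∈ subLattice B i₀ := by
      refine ⟨fun k => if k = i₀ then 0 else z k, if_pos rfl, ?_⟩
      rw [hs]
      refine (Finset.sum_congr rfl ?_).symm
      intro k _
      by_cases h : k = i₀ <;> simp [hc, h]
    have hsK : s ∈ K := Submodule.sum_mem K fun k _ =>
      Submodule.smul_mem K _ (Submodule.subset_span ⟨k, rfl⟩)
    have h1 := hred i₀ s hsl
    have h2 := pyth_aux K (B i₀) s hsK
    have h3 := pyth_aux K (B i₀) 0 (Submodule.zero_mem K)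
    simp only [sub_zero] at h3
    have h4 : ‖B i₀‖ ^ 2 ≤ ‖B i₀ - s‖ ^ 2 := pow_le_pow_left₀ (norm_nonneg _) h1 2
    exact pb_helper h4 h2 h3 hz
  -- key inequality for any r in the successive-minimum set
  have key : ∀ r ∈ {r : ℝ | ∃ v : Fin n → Euc n, (∀ j, v j ∈ lattice B) ∧
      LinearIndependent ℝ v ∧ ∀ j, ‖v j‖ ≤ r}, Real.sqrt (5 - n) / 2 * M ≤ r := by
    rintro r ⟨v, hvlat, hvli, hvle⟩
    have hr0 : 0 ≤ r := le_trans (norm_nonneg (v ⟨0, hn⟩)) (hvle _)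
    choose a haeq using hvlat
    -- some v j has a nonzero i₀-coefficient
    have hex : ∃ j, a j i₀ ≠ 0 := by
      by_contra hcon
      push_neg at hcon
      set W := Submodule.span ℝ (Set.range (fun k : {k : Fin n // k ≠ i₀} => B k)) with hW
      have hvW : ∀ j, v j ∈ W := by
        intro j
        rw [haeq j]
        refine Submodule.sum_mem W ?_
        intro k _
        by_cases hk : k = i₀
        · rw [hk, hcon j]; simp
        · exact Submodule.smul_mem W _ (Submodule.subset_span ⟨⟨k, hk⟩, rfl⟩)
      have hli' : LinearIndependent ℝ (fun j => (⟨v j, hvW j⟩ : W)) := by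
        apply LinearIndependent.of_comp W.subtype
        exact hvli
      have hcard := hli'.fintype_card_le_finrank
      have hfr : Module.finrank ℝ W ≤ n - 1 := by
        refine le_trans (finrank_range_le_card _) ?_
        rw [Fintype.card_subtype_compl, Fintype.card_subtype_eq, Fintype.card_fin]
      rw [Fintype.card_fin] at hcard
      omega
    obtain ⟨j, hj⟩ := hex
    have hfix : ∀ k, k ≠ i₀ → (Submodule.orthogonalProjection K (B k) : Euc n) = B k :=
      fun k hk => Submodule.starProjection_eq_self_iff.mpr (hBK k hk)
    -- the orthogonal component of v j is a j i₀ times that of B i₀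
    have hdiff : v j - (Submodule.orthogonalProjection K (v j) : Euc n) =
        (a j i₀ : ℝ) • (B i₀ - (Submodule.orthogonalProjection K (B i₀) : Euc n)) := by
      have hproj : (Submodule.orthogonalProjection K (v j) : Euc n)
          = ∑ i, (a j i : ℝ) • (Submodule.orthogonalProjection K (B i) : Euc n) := by
        rw [haeq j, map_sum]
        push_cast
        refine Finset.sum_congr rfl ?_
        intro i _
        rw [map_smul]
        rfl
      have hv : v j = ∑ i, (a j i : ℝ) • B i := haeq j
      rw [hproj, hv, ← Finset.sum_sub_distrib]
      rw [Finset.sum_eq_single i₀]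
      · rw [smul_sub]
      · intro b _ hb
        rw [hfix b hb, sub_self]
      · intro h; exact absurd (mem_univ i₀) h
    -- hence the orthogonal component of B i₀ is at most r
    have hd : ‖B i₀ - (Submodule.orthogonalProjection K (B i₀) : Euc n)‖ ≤ r := by
      have h1 := pyth_aux K (v j) 0 (Submodule.zero_mem K)
      simp only [sub_zero] at h1
      have h2 : ‖v j - (Submodule.orthogonalProjection K (v j) : Euc n)‖ ^ 2 =
          ((a j i₀ : ℝ))^2 * ‖B i₀ - (Submodule.orthogonalProjection K (B i₀) : Euc n)‖ ^ 2 := by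
        rw [hdiff, norm_smul, mul_pow]
        congr 1
        rw [Real.norm_eq_abs, sq_abs]
      have h3 : (1:ℝ) ≤ ((a j i₀ : ℝ))^2 := by
        have hab : (1:ℤ) ≤ |a j i₀| := Int.one_le_abs hj
        have hab' : (1:ℝ) ≤ |(a j i₀ : ℝ)| := by
          rw [← Int.cast_abs]
          exact_mod_cast hab
        nlinarith [hab', sq_abs ((a j i₀ : ℝ)), abs_nonneg ((a j i₀ : ℝ))]
      have h4 : ‖v j‖ ≤ r := hvle j
      exact hd_helper h1 h2 h3 h4 (norm_nonneg _) (norm_nonneg _) hr0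
    -- combine
    have h3 := pyth_aux K (B i₀) 0 (Submodule.zero_mem K)
    simp only [sub_zero] at h3
    have hMsq : ((5:ℝ) - n) / 4 * M ^ 2 ≤ r ^ 2 :=
      comb_helper h3 hPB hsumc hd (norm_nonneg _) hr0
    have hsq : (Real.sqrt (5 - n) / 2 * M) ^ 2 ≤ r ^ 2 := by
      have hs2 : (Real.sqrt (5 - (n:ℝ))) ^ 2 = 5 - n := Real.sq_sqrt hn5.le
      calc (Real.sqrt (5 - (n:ℝ)) / 2 * M) ^ 2
          = (Real.sqrt (5 - (n:ℝ))) ^ 2 / 4 * M ^ 2 := by ring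
        _ = ((5:ℝ) - n) / 4 * M ^ 2 := by rw [hs2]
        _ ≤ r ^ 2 := hMsq
    exact sq_le_imp (mul_nonneg (by positivity) hM0) hr0 hsq
  -- the successive-minimum set is nonempty
  have hSne : ({r : ℝ | ∃ v : Fin n → Euc n, (∀ j, v j ∈ lattice B) ∧
      LinearIndependent ℝ v ∧ ∀ j, ‖v j‖ ≤ r}).Nonempty := by
    refine ⟨M, B, fun j => ⟨Pi.single j 1, ?_⟩, hB, hle⟩
    simp [Pi.single_apply, ite_smul]
  have hlam : Real.sqrt (5 - n) / 2 * M ≤ succMin B n := le_csInf hSne key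
  have hlam0 : 0 ≤ succMin B n :=
    le_trans (mul_nonneg (by positivity) hM0) hlam
  have hMle : M ≤ 2 / Real.sqrt (5 - n) * succMin B n := by
    have h2 := mul_le_mul_of_nonneg_left hlam
      (le_of_lt (by positivity : (0:ℝ) < 2 / Real.sqrt (5 - n)))
    calc M = 2 / Real.sqrt (5 - n) * (Real.sqrt (5 - n) / 2 * M) := by
          field_simp
      _ ≤ 2 / Real.sqrt (5 - n) * succMin B n := h2
  have hprod : ∏ i, ‖B i‖ ≤ (2 / Real.sqrt (5 - n) * succMin B n) ^ n := by
    calc ∏ i, ‖B i‖ ≤ ∏ _i : Fin n, (2 / Real.sqrt (5 - n) * succMin B n) := by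
          refine Finset.prod_le_prod (fun i _ => norm_nonneg _) ?_
          intro i _
          exact le_trans (hle i) hMle
      _ = (2 / Real.sqrt (5 - n) * succMin B n) ^ n := by
          rw [Finset.prod_const, Finset.card_univ, Fintype.card_fin]
  have hrpow : (4 / ((5:ℝ) - n)) ^ ((n:ℝ)/2) = (2 / Real.sqrt (5 - n)) ^ n := by
    have hx : (0:ℝ) ≤ 4 / (5 - n) := by positivity
    rw [show ((n:ℝ)/2) = (1/2) * n by ring, Real.rpow_mul hx, ← Real.sqrt_eq_rpow,
      Real.rpow_natCast]
    congr 1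
    have h44 : (4:ℝ) / (5 - n) = (2 / Real.sqrt (5 - n)) ^ 2 := by
      rw [div_pow, sq (Real.sqrt ((5:ℝ) - n)), Real.mul_self_sqrt hn5.le]
      norm_num
    rw [h44, Real.sqrt_sq (by positivity)]
  rw [hrpow, ← mul_pow]
  exact hprod
end
end

section
/- For any full-rank lattice Λ(B) in ℝ^n with successive minima λ_1(B),…,λ_n(B), the covering radius satisfies ρ(B) := sup_{x ∈ ℝ^n} dist(x, Λ(B)) ≤ (1/2)·√(Σ_{i=1}^n λ_i(B)²). -/
open Finset

noncomputable section

lemma mem_lattice_iff {n : ℕ} {B : Fin n → Euc n} {v : Euc n} :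
    v ∈ lattice B ↔ v ∈ Submodule.span ℤ (Set.range B) := by
  rw [Submodule.mem_span_range_iff_exists_fun]
  simp only [lattice, Set.mem_setOf_eq]
  constructor
  · rintro ⟨c, rfl⟩
    exact ⟨c, by simp [Int.cast_smul_eq_zsmul ℝ]⟩
  · rintro ⟨c, rfl⟩
    exact ⟨c, by simp [Int.cast_smul_eq_zsmul ℝ]⟩

lemma basis_mem_lattice {n : ℕ} (B : Fin n → Euc n) (i : Fin n) : B i ∈ lattice B := by
  rw [mem_lattice_iff]; exact Submodule.subset_span ⟨i, rfl⟩

lemma sum_mem_lattice {n m : ℕ} {B : Fin n → Euc n} {w : Fin m → Euc n}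
    (hw : ∀ i, w i ∈ lattice B) (c : Fin m → ℤ) :
    (∑ i, (c i : ℝ) • w i) ∈ lattice B := by
  rw [mem_lattice_iff]
  refine Submodule.sum_mem _ fun i _ => ?_
  rw [Int.cast_smul_eq_zsmul ℝ]
  exact Submodule.smul_mem _ _ (mem_lattice_iff.1 (hw i))

open RealInnerProductSpace in
/-- Key geometric lemma: any point in the span of `w` is within `(1/2)√(Σ‖w i‖²)` of
an integer combination of the `w i`. -/
lemma key_cover {n : ℕ} : ∀ (k : ℕ) (w : Fin k → Euc n) (x : Euc n),
    x ∈ Submodule.span ℝ (Set.range w) →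
    ∃ c : Fin k → ℤ, ‖x - ∑ i, (c i : ℝ) • w i‖ ^ 2 ≤ 1 / 4 * ∑ i, ‖w i‖ ^ 2 := by
  intro k
  induction k with
  | zero =>
    intro w x hx
    have hr : Set.range w = ∅ := Set.range_eq_empty w
    rw [hr, Submodule.span_empty, Submodule.mem_bot] at hx
    exact ⟨0, by simp [hx]⟩
  | succ k ih =>
    intro w x hx
    set v : Fin k → Euc n := fun i => w i.castSucc with hv
    set wl : Euc n := w (Fin.last k) with hwl
    set W : Submodule ℝ (Euc n) := Submodule.span ℝ (Set.range v) with hW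
    haveI : FiniteDimensional ℝ W := FiniteDimensional.span_of_finite ℝ (Set.finite_range v)
    have hx' : x ∈ Submodule.span ℝ (insert wl (Set.range v)) := by
      refine Submodule.span_mono ?_ hx
      rintro _ ⟨i, rfl⟩
      refine Fin.lastCases ?_ ?_ i
      · exact Set.mem_insert _ _
      · intro j; exact Set.mem_insert_of_mem _ ⟨j, rfl⟩
    obtain ⟨a, y, hy, rfl⟩ := Submodule.mem_span_insert.1 hx'
    set P : Euc n := (Submodule.orthogonalProjection W wl : Euc n) with hP
    set u : Euc n := wl - P with hu
    have hPW : P ∈ W := SetLike.coe_mem _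
    have huW : u ∈ Wᗮ := Submodule.sub_starProjection_mem_orthogonal (K := W) wl
    set c0 : ℤ := round a with hc0
    have hzW : y + (a - (c0 : ℝ)) • P ∈ W := W.add_mem hy (W.smul_mem _ hPW)
    obtain ⟨c', hc'⟩ := ih v (y + (a - (c0 : ℝ)) • P) hzW
    refine ⟨Fin.snoc c' c0, ?_⟩
    set p : Euc n := (y + (a - (c0 : ℝ)) • P) - ∑ i, (c' i : ℝ) • v i with hp
    set q : Euc n := (a - (c0 : ℝ)) • u with hq
    have hre : (a • wl + y) - ∑ i : Fin (k+1), ((Fin.snoc c' c0 : Fin (k+1) → ℤ) i : ℝ) • w i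
        = p + q := by
      rw [hp, hq, hu, Fin.sum_univ_castSucc]
      simp only [Fin.snoc_castSucc, Fin.snoc_last, ← hv, ← hwl]
      module
    have hpW : p ∈ W := by
      refine W.sub_mem hzW (Submodule.sum_mem _ fun i _ => W.smul_mem _ ?_)
      exact Submodule.subset_span ⟨i, rfl⟩
    have hqW : q ∈ Wᗮ := Submodule.smul_mem _ _ huW
    have hperp : ⟪p, q⟫ = 0 := Submodule.inner_right_of_mem_orthogonal hpW hqW
    have hpyth : ‖p + q‖ ^ 2 = ‖p‖ ^ 2 + ‖q‖ ^ 2 := by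
      rw [norm_add_sq_real, hperp]; ring
    -- ‖u‖ ≤ ‖wl‖
    have hPu : ⟪P, u⟫ = 0 := Submodule.inner_right_of_mem_orthogonal hPW huW
    have hwlsq : ‖wl‖ ^ 2 = ‖P‖ ^ 2 + ‖u‖ ^ 2 := by
      have h1 : P + u = wl := by rw [hu]; abel
      have h2 := norm_add_sq_real P u
      rw [h1, hPu] at h2; linarith
    have husq : ‖u‖ ^ 2 ≤ ‖wl‖ ^ 2 := by nlinarith [norm_nonneg P]
    have hqbound : ‖q‖ ^ 2 ≤ 1 / 4 * ‖wl‖ ^ 2 := by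
      rw [hq, norm_smul, Real.norm_eq_abs, mul_pow]
      have h1 : |a - (c0 : ℝ)| ≤ 1 / 2 := abs_sub_round a
      have ha2 : |a - (c0 : ℝ)| ^ 2 ≤ 1 / 4 := by nlinarith [abs_nonneg (a - (c0 : ℝ))]
      exact mul_le_mul ha2 husq (sq_nonneg ‖u‖) (by norm_num)
    have hsum : ∑ i : Fin (k+1), ‖w i‖ ^ 2 = (∑ i : Fin k, ‖v i‖ ^ 2) + ‖wl‖ ^ 2 := by
      rw [Fin.sum_univ_castSucc]
    rw [hre, hpyth, hsum]
    linarith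

/-- Existence of `k` linearly independent lattice vectors of norm `< succMin B k + ε`. -/
lemma exists_min_family {n : ℕ} {B : Fin n → Euc n} (hB : LinearIndependent ℝ B)
    {k : ℕ} (hk0 : 0 < k) (hk : k ≤ n) {ε : ℝ} (hε : 0 < ε) :
    ∃ u : Fin k → Euc n, (∀ j, u j ∈ lattice B) ∧ LinearIndependent ℝ u ∧
      ∀ j, ‖u j‖ < succMin B k + ε := by
  set S : Set ℝ := {r : ℝ | ∃ v : Fin k → Euc n, (∀ j, v j ∈ lattice B) ∧
    LinearIndependent ℝ v ∧ ∀ j, ‖v j‖ ≤ r} with hS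
  have hne : S.Nonempty := by
    refine ⟨∑ j, ‖B j‖, fun j => B (Fin.castLE hk j), fun j => basis_mem_lattice B _,
      hB.comp _ (Fin.castLE_injective hk), fun j => ?_⟩
    exact Finset.single_le_sum (f := fun i => ‖B i‖) (fun i _ => norm_nonneg _) (mem_univ _)
  have hbdd : BddBelow S := by
    refine ⟨0, fun r hr => ?_⟩
    obtain ⟨v, _, _, hv⟩ := hr
    exact le_trans (norm_nonneg (v ⟨0, hk0⟩)) (hv _)
  have hlt : sInf S < succMin B k + ε := by
    have : succMin B k = sInf S := rfl
    rw [← this] at *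
    exact lt_add_of_pos_right _ hε
  obtain ⟨r, hrS, hr⟩ := (csInf_lt_iff hbdd hne).1 hlt
  obtain ⟨v, h1, h2, h3⟩ := hrS
  exact ⟨v, h1, h2, fun j => lt_of_le_of_lt (h3 j) hr⟩

/-- Nested family: linearly independent lattice vectors with `‖w j‖ < λ_{j+1} + ε`. -/
lemma exists_nested_family {n : ℕ} {B : Fin n → Euc n} (hB : LinearIndependent ℝ B)
    {ε : ℝ} (hε : 0 < ε) : ∀ k, k ≤ n → ∃ w : Fin k → Euc n,
      (∀ j, w j ∈ lattice B) ∧ LinearIndependent ℝ w ∧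
      ∀ j : Fin k, ‖w j‖ < succMin B ((j : ℕ) + 1) + ε := by
  intro k
  induction k with
  | zero =>
    intro _
    exact ⟨fun _ => 0, fun j => j.elim0, linearIndependent_empty_type, fun j => j.elim0⟩
  | succ k ih =>
    intro hk
    obtain ⟨w, hwlat, hwli, hwn⟩ := ih (le_trans (Nat.le_succ k) hk)
    obtain ⟨u, hulat, huli, hun⟩ := exists_min_family hB (Nat.succ_pos k) hk hε
    have hexj : ∃ j, u j ∉ Submodule.span ℝ (Set.range w) := by
      by_contra h
      push_neg at h
      have h1 : Submodule.span ℝ (Set.range u) ≤ Submodule.span ℝ (Set.range w) :=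
        Submodule.span_le.2 (by rintro _ ⟨j, rfl⟩; exact h j)
      haveI : FiniteDimensional ℝ (Submodule.span ℝ (Set.range w)) :=
        FiniteDimensional.span_of_finite ℝ (Set.finite_range w)
      have h2 := finrank_span_eq_card huli
      have h3 := finrank_span_eq_card hwli
      have h4 := Submodule.finrank_mono h1
      rw [h2, h3] at h4
      simp at h4
    obtain ⟨j, hj⟩ := hexj
    refine ⟨Fin.snoc w (u j), ?_, linearIndependent_fin_snoc.2 ⟨hwli, hj⟩, ?_⟩
    · intro i
      refine Fin.lastCases ?_ ?_ i
      · simpa using hulat j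
      · intro i'; simpa using hwlat i'
    · intro i
      refine Fin.lastCases ?_ ?_ i
      · simpa using hun j
      · intro i'; simpa using hwn i'

theorem covering_radius_le_half_sqrt_sum_succMin_sq {n : ℕ}
    (B : Fin n → Euc n) (hB : LinearIndependent ℝ B) :
    ⨆ x : Euc n, Metric.infDist x (lattice B) ≤
      1 / 2 * Real.sqrt (∑ i : Fin n, succMin B ((i : ℕ) + 1) ^ 2) := by
  refine ciSup_le fun x => ?_
  set f : ℝ → ℝ := fun ε => 1 / 2 * Real.sqrt (∑ i : Fin n, (succMin B ((i : ℕ) + 1) + ε) ^ 2)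
    with hf
  have hcont : Continuous f := by
    apply Continuous.mul continuous_const
    exact Real.continuous_sqrt.comp (continuous_finset_sum _ fun i _ =>
      (continuous_const.add continuous_id).pow 2)
  have hf0 : f 0 = 1 / 2 * Real.sqrt (∑ i : Fin n, succMin B ((i : ℕ) + 1) ^ 2) := by
    simp [hf]
  have hev : ∀ ε : ℝ, 0 < ε → Metric.infDist x (lattice B) ≤ f ε := by
    intro ε hε
    obtain ⟨w, hwlat, hwli, hwn⟩ := exists_nested_family hB hε n le_rfl
    have hspan : Submodule.span ℝ (Set.range w) = ⊤ := by
      apply Submodule.eq_top_of_finrank_eq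
      rw [finrank_span_eq_card hwli, finrank_euclideanSpace_fin, Fintype.card_fin]
    obtain ⟨c, hc⟩ := key_cover n w x (by rw [hspan]; trivial)
    have hmem : (∑ i, (c i : ℝ) • w i) ∈ lattice B := sum_mem_lattice hwlat c
    have h1 : Metric.infDist x (lattice B) ≤ ‖x - ∑ i, (c i : ℝ) • w i‖ := by
      rw [← dist_eq_norm]
      exact Metric.infDist_le_dist_of_mem hmem
    have h2 : ∑ i : Fin n, ‖w i‖ ^ 2 ≤ ∑ i : Fin n, (succMin B ((i : ℕ) + 1) + ε) ^ 2 := by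
      refine Finset.sum_le_sum fun i _ => ?_
      exact pow_le_pow_left₀ (norm_nonneg _) (le_of_lt (hwn i)) 2
    have h3 : ‖x - ∑ i, (c i : ℝ) • w i‖ ^ 2 ≤
        1 / 4 * ∑ i : Fin n, (succMin B ((i : ℕ) + 1) + ε) ^ 2 := by
      calc ‖x - ∑ i, (c i : ℝ) • w i‖ ^ 2 ≤ 1 / 4 * ∑ i : Fin n, ‖w i‖ ^ 2 := hc
        _ ≤ _ := by linarith
    have h4 : ‖x - ∑ i, (c i : ℝ) • w i‖ ≤ f ε := by
      have hnn : (0:ℝ) ≤ ‖x - ∑ i, (c i : ℝ) • w i‖ := norm_nonneg _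
      rw [hf]
      have h5 := Real.sqrt_le_sqrt h3
      rw [Real.sqrt_sq hnn] at h5
      have h6 : Real.sqrt (1 / 4 * ∑ i : Fin n, (succMin B ((i : ℕ) + 1) + ε) ^ 2)
          = 1 / 2 * Real.sqrt (∑ i : Fin n, (succMin B ((i : ℕ) + 1) + ε) ^ 2) := by
        rw [Real.sqrt_mul (by norm_num : (0:ℝ) ≤ 1 / 4)]
        congr 1
        rw [show (1 / 4 : ℝ) = (1 / 2) ^ 2 by norm_num]
        exact Real.sqrt_sq (by norm_num)
      rw [h6] at h5
      exact h5
    exact le_trans h1 h4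
  have htend : Filter.Tendsto f (nhdsWithin 0 (Set.Ioi 0)) (nhds (f 0)) :=
    (hcont.tendsto 0).mono_left nhdsWithin_le_nhds
  have := ge_of_tendsto htend (Filter.eventually_of_mem self_mem_nhdsWithin
    (fun ε (hε : ε ∈ Set.Ioi (0:ℝ)) => hev ε hε))
  rwa [hf0] at this
end
end

section
/- Let B = [b_1,…,b_n] be a basis of a full-rank lattice Λ(B) in ℝ^n. For every index i, the component of b_i orthogonal to the span of the other basis vectors is at most the last successive minimum: ‖π^⊥_{B_{[n]∖i}}(b_i)‖ ≤ λ_n(B). -/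
open Finset

noncomputable section

theorem orth_component_le_last_succMin {n : ℕ}
    (B : Fin n → Euc n) (hB : LinearIndependent ℝ B) (i : Fin n) :
    ‖(Submodule.orthogonalProjectionOnto (Submodule.span ℝ (B '' {j | j ≠ i}))ᗮ (B i) : Euc n)‖ ≤
      succMin B n := by
  classical
  set W := Submodule.span ℝ (B '' {j | j ≠ i}) with hW
  set P := Submodule.orthogonalProjectionOnto Wᗮ with hP
  -- projection kills W
  have hPW : ∀ x ∈ W, P x = 0 := fun x hx =>
    Submodule.orthogonalProjectionOnto_eq_zero_iff.2 (Submodule.le_orthogonal_orthogonal W hx)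
  have hPnorm : ∀ x : Euc n, ‖(P x : Euc n)‖ ≤ ‖x‖ := by
    intro x
    calc ‖(P x : Euc n)‖ = ‖P x‖ := rfl
    _ ≤ ‖P‖ * ‖x‖ := P.le_opNorm x
    _ ≤ 1 * ‖x‖ :=
        mul_le_mul_of_nonneg_right (Submodule.orthogonalProjectionOnto_norm_le Wᗮ) (norm_nonneg x)
    _ = ‖x‖ := one_mul _
  -- B i not in W
  have hBiW : B i ∉ W := by
    intro h
    have := hB.notMem_span_image (s := {j | j ≠ i}) (x := i) (by simp)
    exact this h
  apply le_csInf
  · refine ⟨∑ j, ‖B j‖, B, fun j => ⟨fun k => if k = j then 1 else 0, ?_⟩, hB, fun j => ?_⟩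
    · simp
    · exact Finset.single_le_sum (f := fun k => ‖B k‖) (fun k _ => norm_nonneg _) (mem_univ j)
  · rintro r ⟨v, hvlat, hvli, hvr⟩
    -- some v j not in W
    have hWne : W ≠ ⊤ := fun h => hBiW (h ▸ Submodule.mem_top)
    have hex : ∃ j, v j ∉ W := by
      by_contra h
      push_neg at h
      have hspan : Submodule.span ℝ (Set.range v) ≤ W := Submodule.span_le.2 (by
        rintro x ⟨j, rfl⟩; exact h j)
      haveI : Nonempty (Fin n) := ⟨i⟩
      have h1 : (n : ℕ) ≤ Module.finrank ℝ W := by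
        have := Submodule.finrank_mono hspan
        have h2 := hvli.span_eq_top_of_card_eq_finrank (by simp)
        rw [h2] at this
        simpa using this
      have h3 : Module.finrank ℝ W < n := by
        have := Submodule.finrank_lt (K := ℝ) hWne
        simpa using this
      omega
    obtain ⟨j, hj⟩ := hex
    obtain ⟨c, hc⟩ := hvlat j
    have hci : c i ≠ 0 := by
      intro h0
      apply hj
      rw [hc]
      apply Submodule.sum_mem
      intro k _
      by_cases hk : k = i
      · simp [hk, h0]
      · exact Submodule.smul_mem _ _ (Submodule.subset_span ⟨k, hk, rfl⟩)
    -- P (v j) = c i • P (B i)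
    have hPv : (P (v j) : Euc n) = (c i : ℝ) • (P (B i) : Euc n) := by
      rw [hc]
      rw [map_sum]
      push_cast
      rw [Finset.sum_eq_single i]
      · simp
      · intro k _ hk
        have : P (B k) = 0 := hPW _ (Submodule.subset_span ⟨k, hk, rfl⟩)
        simp [this]
      · simp
    have h1 : (1 : ℝ) ≤ |(c i : ℝ)| := by
      rw [← Int.cast_abs]
      exact_mod_cast Int.one_le_abs hci
    have := hPnorm (v j)
    rw [hPv, norm_smul] at this
    have hnn : (0:ℝ) ≤ ‖(P (B i) : Euc n)‖ := norm_nonneg _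
    calc ‖(P (B i) : Euc n)‖ = 1 * ‖(P (B i) : Euc n)‖ := (one_mul _).symm
      _ ≤ ‖(c i : ℝ)‖ * ‖(P (B i) : Euc n)‖ := by
          apply mul_le_mul_of_nonneg_right _ hnn
          simpa [Real.norm_eq_abs] using h1
      _ ≤ ‖v j‖ := this
      _ ≤ r := hvr j
end
end

section
/- Let B = [b_1,…,b_n] be an SR-CVP reduced basis of a full-rank lattice Λ(B) in ℝ^n with n ≥ 2. For each i let θ_i ∈ [0, π/2] be the angle between b_i and the subspace span(B_{[n]∖i}) (so ‖b_i‖² cos²θ_i = ‖b_i‖² − ‖π^⊥_{B_{[n]∖i}}(b_i)‖²), and let θ_max = max_i θ_i. Then cos²θ_max ≤ (n−1)/4. -/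
open Finset

noncomputable section

lemma round_approx {E : Type*} [NormedAddCommGroup E] [InnerProductSpace ℝ E]
    {ι : Type*} [DecidableEq ι] (v : ι → E) (s : Finset ι) :
    ∀ t ∈ Submodule.span ℝ (v '' ↑s), ∃ c : ι → ℤ, (∀ j ∉ s, c j = 0) ∧
      ‖t - ∑ j ∈ s, (c j : ℝ) • v j‖ ^ 2 ≤ (1/4) * ∑ j ∈ s, ‖v j‖ ^ 2 := by
  induction s using Finset.induction_on with
  | empty =>
    intro t ht
    simp only [Finset.coe_empty, Set.image_empty, Submodule.span_empty,
      Submodule.mem_bot] at ht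
    exact ⟨0, fun j _ => rfl, by simp [ht]⟩
  | insert a s ha ih =>
    intro t ht
    set W := Submodule.span ℝ (v '' ↑s) with hW
    haveI : FiniteDimensional ℝ W :=
      FiniteDimensional.span_of_finite ℝ ((s.finite_toSet).image v)
    have himg : v '' ↑(insert a s) = insert (v a) (v '' ↑s) := by
      simp [Finset.coe_insert, Set.image_insert_eq]
    rw [himg, Submodule.span_insert] at ht
    obtain ⟨y, hy, z, hz, rfl⟩ := Submodule.mem_sup.mp ht
    obtain ⟨α, rfl⟩ := Submodule.mem_span_singleton.mp hy
    set P : E := (Submodule.orthogonalProjection W (v a) : E) with hP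
    have hPW : P ∈ W := (Submodule.orthogonalProjection W (v a)).2
    set w : E := v a - P with hw
    have hwo : w ∈ Wᗮ := Submodule.sub_starProjection_mem_orthogonal (v a)
    set c₀ : ℤ := round α with hc₀
    have hu : (α - c₀) • P + z ∈ W := W.add_mem (W.smul_mem _ hPW) hz
    obtain ⟨c, hc, hbd⟩ := ih _ hu
    refine ⟨Function.update c a c₀, ?_, ?_⟩
    · intro j hj
      rw [Function.update_of_ne (fun h : j = a => hj (by rw [h]; exact Finset.mem_insert_self a s))]
      exact hc j (fun h => hj (Finset.mem_insert_of_mem h))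
    · have hsum : ∑ j ∈ insert a s, ((Function.update c a c₀ j : ℝ)) • v j
          = (c₀ : ℝ) • v a + ∑ j ∈ s, (c j : ℝ) • v j := by
        rw [Finset.sum_insert ha, Function.update_self]
        congr 1
        exact Finset.sum_congr rfl fun j hj => by
          rw [Function.update_of_ne (fun h : j = a => ha (h ▸ hj))]
      rw [hsum]
      have hrw : α • v a + z - ((c₀ : ℝ) • v a + ∑ j ∈ s, (c j : ℝ) • v j)
          = (α - c₀) • w + (((α - c₀) • P + z) - ∑ j ∈ s, (c j : ℝ) • v j) := by
        rw [hw]; module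
      rw [hrw]
      set d : E := ((α - c₀) • P + z) - ∑ j ∈ s, (c j : ℝ) • v j with hd
      have hdW : d ∈ W := W.sub_mem hu (Submodule.sum_mem W fun j hj =>
        W.smul_mem _ (Submodule.subset_span ⟨j, hj, rfl⟩))
      have hinner : (inner ℝ ((α - (c₀:ℝ)) • w) d : ℝ) = 0 := by
        rw [real_inner_smul_left]
        rw [real_inner_comm, hwo d hdW, mul_zero]
      have hpyth : ‖(α - (c₀:ℝ)) • w + d‖ ^ 2 = ‖(α - (c₀:ℝ)) • w‖ ^ 2 + ‖d‖ ^ 2 := by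
        rw [norm_add_sq_real, hinner]; ring
      rw [hpyth]
      have hwle : ‖w‖ ^ 2 ≤ ‖v a‖ ^ 2 := by
        have : v a = P + w := by rw [hw]; abel
        have hin : (inner ℝ P w : ℝ) = 0 := hwo P hPW
        have hva : ‖v a‖ ^ 2 = ‖P‖ ^ 2 + ‖w‖ ^ 2 := by
          rw [this, norm_add_sq_real, hin]; ring
        nlinarith [sq_nonneg ‖P‖]
      have habs : |α - (c₀:ℝ)| ≤ 1/2 := abs_sub_round α
      have hs1 : ‖(α - (c₀:ℝ)) • w‖ ^ 2 ≤ (1/4) * ‖v a‖ ^ 2 := by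
        rw [norm_smul, mul_pow, Real.norm_eq_abs]
        have h2 : |α - (c₀:ℝ)| ^ 2 ≤ 1/4 := by
          nlinarith [abs_nonneg (α - (c₀:ℝ))]
        exact mul_le_mul h2 hwle (sq_nonneg ‖w‖) (by norm_num)
      rw [Finset.sum_insert ha]
      linarith

theorem srcvp_angle_bound {n : ℕ} (hn : 2 ≤ n)
    (B : Fin n → Euc n) (hB : LinearIndependent ℝ B)
    (hred : SRCVPReduced B)
    (θ : Fin n → ℝ) (hθ : ∀ i, θ i ∈ Set.Icc 0 (Real.pi / 2))
    (hcosθ : ∀ i, ‖B i‖ ^ 2 * Real.cos (θ i) ^ 2 =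
      ‖B i‖ ^ 2 -
        ‖(Submodule.orthogonalProjection (Submodule.span ℝ (B '' {j | j ≠ i}))ᗮ (B i) : Euc n)‖ ^ 2)
    (θmax : ℝ) (hθmax : IsGreatest (Set.range θ) θmax) :
    Real.cos θmax ^ 2 ≤ ((n : ℝ) - 1) / 4 := by
  have hne : (Finset.univ : Finset (Fin n)).Nonempty := ⟨⟨0, by omega⟩, Finset.mem_univ _⟩
  obtain ⟨i, -, hi⟩ := Finset.exists_max_image Finset.univ (fun j => ‖B j‖) hne
  set W := Submodule.span ℝ (B '' {j | j ≠ i}) with hWdef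
  set q : Euc n := (Submodule.orthogonalProjection Wᗮ (B i) : Euc n) with hqdef
  have hq : q ∈ Wᗮ := (Submodule.orthogonalProjection Wᗮ (B i)).2
  set p : Euc n := B i - q with hpdef
  have hpW : p ∈ W := by
    have h1 : p ∈ Wᗮᗮ := Submodule.sub_starProjection_mem_orthogonal (K := Wᗮ) (B i)
    rwa [Submodule.orthogonal_orthogonal] at h1
  have hset : (↑((Finset.univ : Finset (Fin n)).erase i) : Set (Fin n)) = {j | j ≠ i} := by
    ext j; simp
  obtain ⟨c, hc, hbd⟩ := round_approx B ((Finset.univ : Finset (Fin n)).erase i) p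
    (by rw [hset]; exact hpW)
  have hci : c i = 0 := hc i (Finset.notMem_erase i Finset.univ)
  set s₀ : Euc n := ∑ j ∈ (Finset.univ : Finset (Fin n)).erase i, (c j : ℝ) • B j with hs₀
  have hs₀full : s₀ = ∑ j, (c j : ℝ) • B j :=
    Finset.sum_erase _ (by rw [hci]; simp)
  have hs₀W : s₀ ∈ W := Submodule.sum_mem W fun j hj => W.smul_mem _
    (Submodule.subset_span ⟨j, (Finset.mem_erase.mp hj).1, rfl⟩)
  have hredi : ‖B i‖ ≤ ‖B i - s₀‖ := hred i s₀ ⟨c, hci, hs₀full⟩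
  -- Pythagoras facts
  have hinner : ∀ x ∈ W, (inner ℝ x q : ℝ) = 0 := fun x hx => hq x hx
  have hBi : ‖B i‖ ^ 2 = ‖p‖ ^ 2 + ‖q‖ ^ 2 := by
    have : B i = p + q := by rw [hpdef]; abel
    rw [this, norm_add_sq_real, hinner p hpW]; ring
  have hsplit : ‖B i - s₀‖ ^ 2 = ‖p - s₀‖ ^ 2 + ‖q‖ ^ 2 := by
    have : B i - s₀ = (p - s₀) + q := by rw [hpdef]; abel
    rw [this, norm_add_sq_real, hinner (p - s₀) (W.sub_mem hpW hs₀W)]; ring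
  have hred2 : ‖B i‖ ^ 2 ≤ ‖B i - s₀‖ ^ 2 :=
    pow_le_pow_left₀ (norm_nonneg _) hredi 2
  have hple : ‖p‖ ^ 2 ≤ ‖p - s₀‖ ^ 2 := by linarith
  -- sum bound
  have hsumle : ∑ j ∈ (Finset.univ : Finset (Fin n)).erase i, ‖B j‖ ^ 2
      ≤ ((n : ℝ) - 1) * ‖B i‖ ^ 2 := by
    have hcard : ((Finset.univ : Finset (Fin n)).erase i).card = n - 1 := by
      rw [Finset.card_erase_of_mem (Finset.mem_univ i), Finset.card_univ, Fintype.card_fin]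
    calc ∑ j ∈ (Finset.univ : Finset (Fin n)).erase i, ‖B j‖ ^ 2
        ≤ ∑ _j ∈ (Finset.univ : Finset (Fin n)).erase i, ‖B i‖ ^ 2 :=
          Finset.sum_le_sum fun j _ =>
            pow_le_pow_left₀ (norm_nonneg _) (hi j (Finset.mem_univ j)) 2
      _ = ((n : ℝ) - 1) * ‖B i‖ ^ 2 := by
          rw [Finset.sum_const, hcard, nsmul_eq_mul]
          congr 1
          push_cast [Nat.cast_sub (by omega : 1 ≤ n)]
          ring
  have hBi0 : (0:ℝ) < ‖B i‖ ^ 2 := by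
    exact pow_pos (norm_pos_iff.mpr (hB.ne_zero i)) 2
  have hcosi : Real.cos (θ i) ^ 2 ≤ ((n : ℝ) - 1) / 4 := by
    have h1 : ‖B i‖ ^ 2 * Real.cos (θ i) ^ 2 = ‖p‖ ^ 2 := by
      rw [hcosθ i]; rw [← hWdef, ← hqdef]; linarith
    have h2 : ‖B i‖ ^ 2 * Real.cos (θ i) ^ 2 ≤ ((n : ℝ) - 1) / 4 * ‖B i‖ ^ 2 := by
      rw [h1]; linarith
    have := (mul_le_mul_iff_left₀ hBi0).mpr (le_refl (((n:ℝ)-1)/4))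
    nlinarith
  -- transfer to θmax
  obtain ⟨i₀, hi₀⟩ := hθmax.1
  have hle : θ i ≤ θmax := hθmax.2 ⟨i, rfl⟩
  have hmaxpi : θmax ≤ Real.pi := by
    rw [← hi₀]; linarith [(hθ i₀).2, Real.pi_pos]
  have hcosle : Real.cos θmax ≤ Real.cos (θ i) :=
    Real.cos_le_cos_of_nonneg_of_le_pi (hθ i).1 hmaxpi hle
  have hcosnn : 0 ≤ Real.cos θmax := by
    apply Real.cos_nonneg_of_mem_Icc
    constructor
    · rw [← hi₀]; linarith [(hθ i₀).1, Real.pi_pos]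
    · rw [← hi₀]; exact (hθ i₀).2
  calc Real.cos θmax ^ 2 ≤ Real.cos (θ i) ^ 2 := pow_le_pow_left₀ hcosnn hcosle 2
    _ ≤ ((n : ℝ) - 1) / 4 := hcosi
end
end

section
/- Let τ ∈ (0,1] and let B = [b_1,…,b_n] be a basis of a full-rank lattice Λ(B) in ℝ^n such that for every i and every s ∈ Λ(B_{[n]∖i}) one has τ‖b_i‖² ≤ ‖b_i − s‖² (the termination condition of SR with threshold τ). If n < 4τ + 1, then l(B) := max_i ‖b_i‖ ≤ √(4n/(4τ − n + 1)) · λ_n(B). -/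
open Finset

noncomputable section

lemma nearPlane {n : ℕ} (B : Fin n → Euc n) (t : Finset (Fin n)) :
    ∀ w ∈ Submodule.span ℝ (B '' t), ∃ c : Fin n → ℤ, (∀ j, j ∉ t → c j = 0) ∧
      ‖w - ∑ j, (c j : ℝ) • B j‖ ^ 2 ≤ (1/4) * ∑ j ∈ t, ‖B j‖ ^ 2 := by
  induction t using Finset.induction with
  | empty =>
    intro w hw
    simp only [Finset.coe_empty, Set.image_empty, Submodule.span_empty,
      Submodule.mem_bot] at hw
    exact ⟨0, fun j _ => rfl, by simp [hw]⟩
  | @insert a s ha ih =>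
    intro w hw
    rw [Finset.coe_insert, Set.image_insert_eq] at hw
    obtain ⟨x, z, hz, rfl⟩ := Submodule.mem_span_insert.mp hw
    set V := Submodule.span ℝ (B '' (s : Set (Fin n))) with hV
    set pa : Euc n := (Submodule.orthogonalProjectionOnto V (B a) : Euc n) with hpa
    set r : ℤ := round x with hr
    have hw' : (x - r) • pa + z ∈ V :=
      V.add_mem (V.smul_mem _ (SetLike.coe_mem _)) hz
    obtain ⟨c', hc'0, hc'b⟩ := ih ((x - r) • pa + z) hw'
    have hc'a : c' a = 0 := hc'0 a ha
    refine ⟨Function.update c' a r, fun j hj => ?_, ?_⟩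
    · have hja : j ≠ a := fun h => hj (by rw [h]; exact Finset.mem_insert_self a s)
      rw [Function.update_of_ne hja]
      exact hc'0 j fun h => hj (Finset.mem_insert_of_mem h)
    · have hsum : ∑ j, ((Function.update c' a r j : ℤ) : ℝ) • B j
          = (r : ℝ) • B a + ∑ j, ((c' j : ℝ)) • B j := by
        rw [Fintype.sum_eq_add_sum_compl a, Fintype.sum_eq_add_sum_compl a
          fun j => ((c' j : ℝ)) • B j, Function.update_self, hc'a]
        simp only [Int.cast_zero, zero_smul, zero_add]
        congr 1
        refine Finset.sum_congr rfl fun j hj => ?_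
        rw [Function.update_of_ne (by simpa using hj)]
      have key : (x • B a + z) - ∑ j, ((Function.update c' a r j : ℤ) : ℝ) • B j
          = (x - r) • (B a - pa) + (((x - r) • pa + z) - ∑ j, ((c' j : ℝ)) • B j) := by
        rw [hsum]; module
      have hmemV : (((x - r) • pa + z) - ∑ j, ((c' j : ℝ)) • B j) ∈ V := by
        refine V.sub_mem hw' (Submodule.sum_mem _ fun j _ => ?_)
        by_cases hjs : j ∈ s
        · exact V.smul_mem _ (Submodule.subset_span ⟨j, by simpa using hjs, rfl⟩)
        · rw [hc'0 j hjs]; simp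
      have hmemO : (x - r) • (B a - pa) ∈ Vᗮ :=
        Submodule.smul_mem _ _ (Submodule.sub_starProjection_mem_orthogonal (K := V) (B a))
      rw [key, norm_add_sq_real, Submodule.inner_left_of_mem_orthogonal hmemV hmemO]
      have h1 : ‖(x - (r:ℝ)) • (B a - pa)‖ ^ 2 ≤ (1/4) * ‖B a‖ ^ 2 := by
        rw [norm_smul]
        have hx : |x - (r:ℝ)| ≤ 1/2 := abs_sub_round x
        have hpn : ‖B a - pa‖ ≤ ‖B a‖ := by
          have := Submodule.orthogonalProjectionFn_norm_sq V (B a)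
          rw [Submodule.orthogonalProjectionFn_eq] at this
          nlinarith [norm_nonneg (B a - pa), norm_nonneg ((Submodule.orthogonalProjectionOnto V (B a) : Euc n)), norm_nonneg (B a)]
        have h2 : ‖(x - (r:ℝ))‖ = |x - (r:ℝ)| := Real.norm_eq_abs _
        rw [mul_pow, h2]
        have : |x - (r:ℝ)| ^ 2 ≤ (1/2) ^ 2 := by
          apply pow_le_pow_left₀ (abs_nonneg _) hx
        nlinarith [norm_nonneg (B a - pa), norm_nonneg (B a), sq_nonneg ‖B a - pa‖]
      rw [Finset.sum_insert ha]
      linarith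

lemma arith_key (τ nn M2 A Bq Sg Vk r2 : ℝ) (h1 : τ * M2 ≤ A + Bq)
    (h2 : Bq ≤ (1:ℝ)/4 * Sg) (h3 : Sg ≤ (nn - 1) * M2) (h4 : A ≤ Vk) (h5 : Vk ≤ r2) :
    M2 * (4 * τ - nn + 1) ≤ 4 * r2 := by nlinarith

set_option maxHeartbeats 2000000 in
set_option maxHeartbeats 2000000 in
theorem sr_tau_basis_length_bound {n : ℕ} (τ : ℝ) (hτ0 : 0 < τ) (hτ1 : τ ≤ 1)
    (B : Fin n → Euc n) (hB : LinearIndependent ℝ B)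
    (hred : ∀ i : Fin n, ∀ s ∈ subLattice B i, τ * ‖B i‖ ^ 2 ≤ ‖B i - s‖ ^ 2)
    (hn : (n : ℝ) < 4 * τ + 1) :
    ∀ i : Fin n, ‖B i‖ ≤ Real.sqrt (4 * n / (4 * τ - n + 1)) * succMin B n := by
  intro i
  classical
  unfold succMin
  have hn1 : 1 ≤ n := i.pos
  have hn1' : (1:ℝ) ≤ n := by exact_mod_cast hn1
  set D : ℝ := 4 * τ - n + 1 with hD
  have hD0 : 0 < D := by simp only [hD]; linarith
  set S := {r : ℝ | ∃ v : Fin n → Euc n, (∀ j, v j ∈ lattice B) ∧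
    LinearIndependent ℝ v ∧ ∀ j, ‖v j‖ ≤ r} with hS
  -- maximal basis vector
  obtain ⟨i₀, -, hi₀⟩ := Finset.exists_max_image (univ : Finset (Fin n))
    (fun j => ‖B j‖) ⟨i, mem_univ i⟩
  set tset : Finset (Fin n) := {i₀}ᶜ with htset
  have hi₀t : i₀ ∉ tset := by simp [htset]
  have htcard : tset.card = n - 1 := by
    simp [htset, Finset.card_compl]
  set W : Submodule ℝ (Euc n) := Submodule.span ℝ (B '' (tset : Set (Fin n))) with hW
  have hBW : ∀ j, j ≠ i₀ → B j ∈ W := fun j hj =>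
    Submodule.subset_span ⟨j, by simp [htset, hj], rfl⟩
  -- key bound for every r ∈ S
  have key : ∀ r ∈ S, ‖B i₀‖ ^ 2 * D ≤ 4 * r ^ 2 ∧ 0 ≤ r := by
    intro r hr
    obtain ⟨v, hvl, hvi, hvb⟩ := hr
    have hr0 : 0 ≤ r := le_trans (norm_nonneg (v i)) (hvb i)
    simp only [lattice, Set.mem_setOf_eq] at hvl
    choose c hc using hvl
    -- some v k has nonzero coefficient at i₀
    have hex : ∃ k, c k i₀ ≠ 0 := by
      by_contra hcon
      push_neg at hcon
      have hmem : ∀ k, v k ∈ W := by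
        intro k
        rw [hc k]
        refine Submodule.sum_mem _ fun j _ => ?_
        by_cases hj : j = i₀
        · rw [hj, hcon k]; simp
        · exact W.smul_mem _ (hBW j hj)
      set v' : Fin n → W := fun k => ⟨v k, hmem k⟩ with hv'
      have hvi' : LinearIndependent ℝ v' :=
        LinearIndependent.of_comp W.subtype hvi
      have h1 : n ≤ Module.finrank ℝ W := by
        simpa using hvi'.fintype_card_le_finrank
      have h2 : Module.finrank ℝ W ≤ n - 1 := by
        rw [hW, ← Finset.coe_image]
        refine le_trans (finrank_span_finset_le_card _) ?_
        exact le_trans (Finset.card_image_le) htcard.le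
      omega
    obtain ⟨k, hk⟩ := hex
    -- orthogonal decomposition of B i₀
    set P : Euc n := (Submodule.orthogonalProjectionOnto W (B i₀) : Euc n) with hP
    set p : Euc n := B i₀ - P with hp
    have hpO : p ∈ Wᗮ := Submodule.sub_starProjection_mem_orthogonal (K := W) (B i₀)
    have hPW : P ∈ W := SetLike.coe_mem _
    -- nearest plane
    obtain ⟨c₀, hc₀0, hc₀b⟩ := nearPlane B tset P hPW
    have hc₀i : c₀ i₀ = 0 := hc₀0 i₀ hi₀t
    set s₀ : Euc n := ∑ j, ((c₀ j : ℝ)) • B j with hs₀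
    have hs₀W : s₀ ∈ W := by
      refine Submodule.sum_mem _ fun j _ => ?_
      by_cases hj : j = i₀
      · rw [hj, hc₀i]; simp
      · exact W.smul_mem _ (hBW j hj)
    have hred0 : τ * ‖B i₀‖ ^ 2 ≤ ‖B i₀ - s₀‖ ^ 2 :=
      hred i₀ s₀ ⟨c₀, hc₀i, rfl⟩
    -- ‖B i₀ - s₀‖² = ‖p‖² + ‖P - s₀‖²
    have hdecomp : ‖B i₀ - s₀‖ ^ 2 = ‖p‖ ^ 2 + ‖P - s₀‖ ^ 2 := by
      have heq : B i₀ - s₀ = p + (P - s₀) := by rw [hp]; abel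
      rw [heq, norm_add_sq_real,
        Submodule.inner_left_of_mem_orthogonal (W.sub_mem hPW hs₀W) hpO]
      ring
    -- bound ∑ over tset
    have hsumb : ∑ j ∈ tset, ‖B j‖ ^ 2 ≤ ((n:ℝ) - 1) * ‖B i₀‖ ^ 2 := by
      calc ∑ j ∈ tset, ‖B j‖ ^ 2 ≤ tset.card • ‖B i₀‖ ^ 2 :=
            Finset.sum_le_card_nsmul _ _ _ fun j _ =>
              pow_le_pow_left₀ (norm_nonneg _) (hi₀ j (mem_univ j)) 2
        _ = ((n - 1 : ℕ) : ℝ) * ‖B i₀‖ ^ 2 := by rw [htcard, nsmul_eq_mul]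
        _ = ((n:ℝ) - 1) * ‖B i₀‖ ^ 2 := by
            rw [Nat.cast_sub hn1]; norm_num
    -- lower bound on ‖v k‖²
    have hvk : v k = ((c k i₀ : ℝ)) • p + (((c k i₀ : ℝ)) • P +
        ∑ j ∈ tset, ((c k j : ℝ)) • B j) := by
      rw [hc k, Fintype.sum_eq_add_sum_compl i₀ (fun j => ((c k j : ℝ)) • B j), hp]
      simp only [htset]
      module
    have hrestW : ((c k i₀ : ℝ)) • P + ∑ j ∈ tset, ((c k j : ℝ)) • B j ∈ W := by
      refine W.add_mem (W.smul_mem _ hPW) (Submodule.sum_mem _ fun j hj => ?_)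
      exact W.smul_mem _ (hBW j (by simpa [htset] using hj))
    have hvknorm : ‖v k‖ ^ 2 = (c k i₀ : ℝ) ^ 2 * ‖p‖ ^ 2 +
        ‖((c k i₀ : ℝ)) • P + ∑ j ∈ tset, ((c k j : ℝ)) • B j‖ ^ 2 := by
      rw [hvk, norm_add_sq_real,
        Submodule.inner_left_of_mem_orthogonal hrestW (Wᗮ.smul_mem _ hpO),
        norm_smul]
      simp [mul_pow]
    have hck1 : (1:ℝ) ≤ (c k i₀ : ℝ) ^ 2 := by
      have h := Int.one_le_abs hk
      have h2 : (1:ℤ) ≤ (c k i₀) ^ 2 := by nlinarith [sq_abs (c k i₀)]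
      exact_mod_cast h2
    have hpvk : ‖p‖ ^ 2 ≤ ‖v k‖ ^ 2 := by
      nlinarith [norm_nonneg (((c k i₀ : ℝ)) • P + ∑ j ∈ tset, ((c k j : ℝ)) • B j),
        sq_nonneg ‖p‖]
    have hvkr : ‖v k‖ ^ 2 ≤ r ^ 2 := pow_le_pow_left₀ (norm_nonneg _) (hvb k) 2
    refine ⟨?_, hr0⟩
    simp only [hD]
    exact arith_key τ (n:ℝ) (‖B i₀‖ ^ 2) (‖p‖ ^ 2) (‖P - s₀‖ ^ 2)
      (∑ j ∈ tset, ‖B j‖ ^ 2) (‖v k‖ ^ 2) (r ^ 2)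
      (by linarith [hred0, hdecomp]) hc₀b hsumb hpvk hvkr
  -- conclude
  have hKpos : 0 < Real.sqrt (4 * n / D) := Real.sqrt_pos.mpr (by positivity)
  have hSne : S.Nonempty := by
    refine ⟨∑ j, ‖B j‖, B, fun j => ⟨Pi.single j 1, ?_⟩, hB, fun j =>
      Finset.single_le_sum (fun j' _ => norm_nonneg (B j')) (mem_univ j)⟩
    simp [Pi.single_apply, ite_smul]
  have hfin : ‖B i‖ / Real.sqrt (4 * n / D) ≤ sInf S := by
    refine le_csInf hSne fun r hr => ?_
    obtain ⟨hr1, hr0⟩ := key r hr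
    rw [div_le_iff₀ hKpos]
    have hBi2 : ‖B i‖ ^ 2 ≤ 4 * n / D * r ^ 2 := by
      have h1 : ‖B i‖ ^ 2 ≤ ‖B i₀‖ ^ 2 :=
        pow_le_pow_left₀ (norm_nonneg _) (hi₀ i (mem_univ i)) 2
      have h2 : ‖B i‖ ^ 2 * D ≤ ‖B i₀‖ ^ 2 * D :=
        mul_le_mul_of_nonneg_right h1 hD0.le
      have h3 : (4:ℝ) * r ^ 2 ≤ 4 * n * r ^ 2 := by nlinarith [sq_nonneg r]
      rw [div_mul_eq_mul_div, le_div_iff₀ hD0]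
      linarith
    calc ‖B i‖ = Real.sqrt (‖B i‖ ^ 2) := (Real.sqrt_sq (norm_nonneg _)).symm
      _ ≤ Real.sqrt (4 * n / D * r ^ 2) := Real.sqrt_le_sqrt hBi2
      _ = Real.sqrt (4 * n / D) * r := by
          rw [Real.sqrt_mul (by positivity), Real.sqrt_sq hr0]
      _ = r * Real.sqrt (4 * n / D) := mul_comm _ _
  rw [div_le_iff₀ hKpos] at hfin
  linarith [hfin]
end
end

section
/- Let ε ≥ 1 and let B = [b_1,…,b_n] be a basis of a full-rank lattice Λ(B) in ℝ^n such that for every i there exists s_i ∈ Λ(B_{[n]∖i}) with ‖π_{B_{[n]∖i}}(b_i) − s_i‖² ≤ ε · ρ(B_{[n]∖i})² (an ε-approximate CVP solution within span(B_{[n]∖i})) and ‖b_i‖ ≤ ‖b_i − s_i‖. If n < 4/ε + 1, then l(B) := max_i ‖b_i‖ ≤ √(4n/(4 − εn + ε)) · λ_n(B). -/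
open Finset

noncomputable section

/-- The covering radius of the sublattice `Λ(B_{[n]∖i})` within its span. -/
def covRadSub {n : ℕ} (B : Fin n → Euc n) (i : Fin n) : ℝ :=
  sSup ((fun x => Metric.infDist x (subLattice B i)) ''
    ↑(Submodule.span ℝ (B '' {j | j ≠ i})))

/-! ### Auxiliary lemmas -/

lemma pyth {n : ℕ} (W : Submodule ℝ (Euc n)) (v : Euc n) :
    ‖(Submodule.orthogonalProjectionOnto W v : Euc n)‖^2 + ‖v - Submodule.orthogonalProjectionOnto W v‖^2 = ‖v‖^2 := by
  have h : inner ℝ ((Submodule.orthogonalProjectionOnto W v : Euc n)) (v - Submodule.orthogonalProjectionOnto W v) = (0:ℝ) := by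
    rw [real_inner_comm]
    exact Submodule.starProjection_inner_eq_zero v _ (Submodule.orthogonalProjectionOnto W v).2
  have h2 := norm_add_sq_real ((Submodule.orthogonalProjectionOnto W v : Euc n)) (v - Submodule.orthogonalProjectionOnto W v)
  rw [h, add_sub_cancel] at h2
  linarith

lemma nearestPlane {n : ℕ} (B : Fin n → Euc n) (s : Finset (Fin n)) :
    ∀ x ∈ Submodule.span ℝ (B '' ↑s), ∃ c : Fin n → ℤ, (∀ j, j ∉ s → c j = 0) ∧
      ‖x - ∑ j, (c j : ℝ) • B j‖ ^ 2 ≤ (1/4) * ∑ j ∈ s, ‖B j‖ ^ 2 := by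
  induction s using Finset.induction_on with
  | empty =>
    intro x hx
    simp only [Finset.coe_empty, Set.image_empty, Submodule.span_empty, Submodule.mem_bot] at hx
    exact ⟨0, fun j _ => rfl, by simp [hx]⟩
  | @insert a s ha ih =>
    intro x hx
    rw [Finset.coe_insert, Set.image_insert_eq, Submodule.span_insert] at hx
    obtain ⟨y, hy, z, hz, rfl⟩ := Submodule.mem_sup.mp hx
    obtain ⟨t, rfl⟩ := Submodule.mem_span_singleton.mp hy
    set W := Submodule.span ℝ (B '' ↑s) with hW
    have hPBa : (Submodule.orthogonalProjectionOnto W (B a) : Euc n) ∈ W := (Submodule.orthogonalProjectionOnto W (B a)).2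
    set t' : ℤ := round t with ht'
    have hy2 : (t - t') • (Submodule.orthogonalProjectionOnto W (B a) : Euc n) + z ∈ W :=
      W.add_mem (W.smul_mem _ hPBa) hz
    obtain ⟨c', hc's, hc'⟩ := ih _ hy2
    have hc'a : c' a = 0 := hc's a ha
    refine ⟨fun j => c' j + (if j = a then t' else 0), ?_, ?_⟩
    · intro j hj
      rw [Finset.mem_insert] at hj
      push_neg at hj
      simp [hc's j hj.2, hj.1]
    · have hsum : ∑ j, (((c' j + if j = a then t' else 0 : ℤ)) : ℝ) • B j
          = (∑ j, (c' j : ℝ) • B j) + (t' : ℝ) • B a := by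
        push_cast
        simp_rw [add_smul]
        rw [Finset.sum_add_distrib]
        congr 1
        simp [ite_smul]
      set u := B a - (Submodule.orthogonalProjectionOnto W (B a) : Euc n) with hu
      have key : t • B a + z - ∑ j, (((c' j + if j = a then t' else 0 : ℤ)) : ℝ) • B j
          = (t - t') • u + (((t - t') • (Submodule.orthogonalProjectionOnto W (B a) : Euc n) + z)
              - ∑ j, (c' j : ℝ) • B j) := by
        rw [hsum, hu]
        module
      have hqW : (((t - t') • (Submodule.orthogonalProjectionOnto W (B a) : Euc n) + z)
              - ∑ j, (c' j : ℝ) • B j) ∈ W := by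
        refine W.sub_mem hy2 (Submodule.sum_mem _ fun j _ => ?_)
        by_cases hj : j ∈ s
        · exact W.smul_mem _ (Submodule.subset_span ⟨j, by simpa using hj, rfl⟩)
        · simp [hc's j hj]
      have horth : inner ℝ ((t - (t':ℝ)) • u) ((((t - t') • (Submodule.orthogonalProjectionOnto W (B a) : Euc n) + z)
              - ∑ j, (c' j : ℝ) • B j)) = (0:ℝ) := by
        rw [real_inner_smul_left, show inner ℝ u _ = (0:ℝ) from Submodule.starProjection_inner_eq_zero (B a) _ hqW, mul_zero]
      rw [key]
      rw [norm_add_sq_real, horth]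
      have h1 : ‖(t - (t':ℝ)) • u‖ ^ 2 ≤ (1/4) * ‖B a‖ ^ 2 := by
        rw [norm_smul, mul_pow]
        have hub : ‖u‖ ^ 2 ≤ ‖B a‖ ^ 2 := by
          have := pyth W (B a)
          rw [← hu] at this
          nlinarith [sq_nonneg ‖(Submodule.orthogonalProjectionOnto W (B a) : Euc n)‖]
        have habs : ‖t - (t':ℝ)‖ ^ 2 ≤ 1/4 := by
          rw [Real.norm_eq_abs]
          have := abs_sub_round t
          nlinarith [abs_nonneg (t - (t':ℝ))]
        nlinarith [sq_nonneg ‖u‖, norm_nonneg u, norm_nonneg (B a), sq_nonneg ‖B a‖]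
      rw [Finset.sum_insert ha]
      nlinarith [hc']

lemma subLattice_mem_span {n : ℕ} (B : Fin n → Euc n) (i : Fin n) {v : Euc n}
    (hv : v ∈ subLattice B i) : v ∈ Submodule.span ℝ (B '' {j | j ≠ i}) := by
  obtain ⟨c, hci, rfl⟩ := hv
  refine Submodule.sum_mem _ fun j _ => ?_
  by_cases hj : j = i
  · simp [hj, hci]
  · exact Submodule.smul_mem _ _ (Submodule.subset_span ⟨j, hj, rfl⟩)

lemma erase_coe {n : ℕ} (i : Fin n) :
    ((Finset.univ.erase i : Finset (Fin n)) : Set (Fin n)) = {j | j ≠ i} := by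
  ext j; simp

lemma covRadSub_sq_le {n : ℕ} (B : Fin n → Euc n) (i : Fin n) :
    covRadSub B i ^ 2 ≤ (1/4) * ∑ j ∈ Finset.univ.erase i, ‖B j‖ ^ 2 := by
  set K := (1/4) * ∑ j ∈ Finset.univ.erase i, ‖B j‖ ^ 2 with hK
  have hK0 : 0 ≤ K := by
    apply mul_nonneg (by norm_num)
    exact Finset.sum_nonneg fun j _ => sq_nonneg _
  have hub : covRadSub B i ≤ Real.sqrt K := by
    apply Real.sSup_le _ (Real.sqrt_nonneg K)
    rintro r ⟨x, hx, rfl⟩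
    have hx' : x ∈ Submodule.span ℝ (B '' ↑(Finset.univ.erase i)) := by
      rwa [erase_coe]
    obtain ⟨c, hc0, hc⟩ := nearestPlane B (Finset.univ.erase i) x hx'
    have hmem : (∑ j, (c j : ℝ) • B j) ∈ subLattice B i :=
      ⟨c, hc0 i (by simp), rfl⟩
    calc Metric.infDist x (subLattice B i) ≤ dist x (∑ j, (c j : ℝ) • B j) :=
          Metric.infDist_le_dist_of_mem hmem
      _ = ‖x - ∑ j, (c j : ℝ) • B j‖ := by rw [dist_eq_norm]
      _ = Real.sqrt (‖x - ∑ j, (c j : ℝ) • B j‖ ^ 2) := (Real.sqrt_sq (norm_nonneg _)).symm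
      _ ≤ Real.sqrt K := Real.sqrt_le_sqrt hc
  have hlb : 0 ≤ covRadSub B i := by
    apply Real.sSup_nonneg
    rintro r ⟨x, hx, rfl⟩
    exact Metric.infDist_nonneg
  calc covRadSub B i ^ 2 ≤ Real.sqrt K ^ 2 := by
        exact pow_le_pow_left₀ hlb hub 2
    _ = K := Real.sq_sqrt hK0

lemma dist_le_succMin {n : ℕ} (B : Fin n → Euc n) (hB : LinearIndependent ℝ B) (i : Fin n) :
    ‖B i - (Submodule.orthogonalProjectionOnto (Submodule.span ℝ (B '' {j | j ≠ i})) (B i) : Euc n)‖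
      ≤ succMin B n := by
  have : Nonempty (Fin n) := ⟨i⟩
  set W := Submodule.span ℝ (B '' {j | j ≠ i}) with hW
  set d := ‖B i - (Submodule.orthogonalProjectionOnto W (B i) : Euc n)‖ with hd
  apply le_csInf
  · -- nonempty
    refine ⟨∑ j, ‖B j‖, B, fun j => ?_, hB, fun j => ?_⟩
    · exact ⟨fun k => if k = j then 1 else 0, by simp [ite_smul]⟩
    · exact Finset.single_le_sum (f := fun j => ‖B j‖) (fun k _ => norm_nonneg _) (Finset.mem_univ j)
  · rintro r ⟨v, hlat, hli, hnorm⟩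
    -- some v k is outside W
    have hspan : Submodule.span ℝ (Set.range v) = ⊤ := by
      apply hli.span_eq_top_of_card_eq_finrank
      simp [finrank_euclideanSpace_fin]
    have hBiW : B i ∉ W := hB.notMem_span_image (by simp : i ∉ {j | j ≠ i})
    have hex : ∃ k, v k ∉ W := by
      by_contra h
      push_neg at h
      apply hBiW
      have : Submodule.span ℝ (Set.range v) ≤ W :=
        Submodule.span_le.mpr (Set.range_subset_iff.mpr h)
      rw [hspan] at this
      exact this Submodule.mem_top
    obtain ⟨k, hk⟩ := hex
    obtain ⟨c, hvk⟩ := hlat k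
    have hci : c i ≠ 0 := by
      intro h0
      apply hk
      rw [hvk]
      exact subLattice_mem_span B i ⟨c, h0, rfl⟩
    set w₀ := ∑ j ∈ Finset.univ.erase i, (c j : ℝ) • B j with hw₀
    have hw₀W : w₀ ∈ W := by
      refine Submodule.sum_mem _ fun j hj => ?_
      exact Submodule.smul_mem _ _ (Submodule.subset_span
        ⟨j, (Finset.mem_erase.mp hj).1, rfl⟩)
    have hvk' : v k = (c i : ℝ) • B i + w₀ := by
      rw [hvk, hw₀, ← Finset.add_sum_erase _ _ (Finset.mem_univ i)]
    have hproj : (Submodule.orthogonalProjectionOnto W (v k) : Euc n)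
        = (c i : ℝ) • (Submodule.orthogonalProjectionOnto W (B i) : Euc n) + w₀ := by
      rw [hvk', map_add, map_smul, Submodule.coe_add, Submodule.coe_smul,
        show ((W.orthogonalProjectionOnto w₀ : Euc n)) = w₀ from Submodule.starProjection_eq_self_iff.mpr hw₀W]
    have hdiff : v k - (Submodule.orthogonalProjectionOnto W (v k) : Euc n)
        = (c i : ℝ) • (B i - (Submodule.orthogonalProjectionOnto W (B i) : Euc n)) := by
      rw [hproj, hvk', smul_sub]
      abel
    have h1 : d ≤ ‖v k - (Submodule.orthogonalProjectionOnto W (v k) : Euc n)‖ := by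
      rw [hdiff, norm_smul, Real.norm_eq_abs, ← Int.cast_abs]
      have : (1 : ℝ) ≤ |(c i : ℤ)| := by exact_mod_cast Int.one_le_abs hci
      nlinarith [norm_nonneg (B i - (Submodule.orthogonalProjectionOnto W (B i) : Euc n))]
    have h2 : ‖v k - (Submodule.orthogonalProjectionOnto W (v k) : Euc n)‖ ≤ ‖v k‖ := by
      have := pyth W (v k)
      have h3 : 0 ≤ ‖v k - (Submodule.orthogonalProjectionOnto W (v k) : Euc n)‖ := norm_nonneg _
      nlinarith [sq_nonneg ‖(Submodule.orthogonalProjectionOnto W (v k) : Euc n)‖, norm_nonneg (v k)]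
    exact h1.trans (h2.trans (hnorm k))

theorem sr_epsCVP_basis_length_bound {n : ℕ} (ε : ℝ) (hε : 1 ≤ ε)
    (B : Fin n → Euc n) (hB : LinearIndependent ℝ B)
    (hred : ∀ i : Fin n, ∃ s ∈ subLattice B i,
      ‖(Submodule.orthogonalProjectionOnto (Submodule.span ℝ (B '' {j | j ≠ i})) (B i) : Euc n) - s‖ ^ 2 ≤
          ε * covRadSub B i ^ 2 ∧
        ‖B i‖ ≤ ‖B i - s‖)
    (hn : (n : ℝ) < 4 / ε + 1) :
    ∀ i : Fin n, ‖B i‖ ≤ Real.sqrt (4 * n / (4 - ε * n + ε)) * succMin B n := by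
  intro i
  have hn1 : 1 ≤ n := i.pos
  have hε0 : (0:ℝ) < ε := lt_of_lt_of_le one_pos hε
  set lam := succMin B n with hlam
  have hlam0 : 0 ≤ lam := by
    apply Real.sInf_nonneg
    rintro r ⟨v, _, _, hnorm⟩
    exact le_trans (norm_nonneg (v i)) (hnorm i)
  -- key inequality for each index
  have key : ∀ j : Fin n, ‖B j‖ ^ 2 ≤ lam ^ 2 + (ε/4) * ∑ l ∈ Finset.univ.erase j, ‖B l‖ ^ 2 := by
    intro j
    obtain ⟨s, hsmem, hcvp, hshort⟩ := hred j
    set W := Submodule.span ℝ (B '' {l | l ≠ j}) with hW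
    have hsW : s ∈ W := subLattice_mem_span B j hsmem
    set p := (Submodule.orthogonalProjectionOnto W (B j) : Euc n) with hp
    have horth : inner ℝ (B j - p) (p - s) = (0:ℝ) :=
      Submodule.starProjection_inner_eq_zero (B j) _
        (W.sub_mem (Submodule.orthogonalProjectionOnto W (B j)).2 hsW)
    have hsplit : ‖B j - s‖ ^ 2 = ‖B j - p‖ ^ 2 + ‖p - s‖ ^ 2 := by
      have h := norm_add_sq_real (B j - p) (p - s)
      rw [horth] at h
      have : B j - p + (p - s) = B j - s := by abel
      rw [this] at h
      linarith
    have hss : ‖B j‖ ^ 2 ≤ ‖B j - s‖ ^ 2 := pow_le_pow_left₀ (norm_nonneg _) hshort 2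
    have hdle : ‖B j - p‖ ≤ lam := dist_le_succMin B hB j
    have hd2 : ‖B j - p‖ ^ 2 ≤ lam ^ 2 := pow_le_pow_left₀ (norm_nonneg _) hdle 2
    have hcov : ε * covRadSub B j ^ 2 ≤ ε * ((1/4) * ∑ l ∈ Finset.univ.erase j, ‖B l‖ ^ 2) :=
      mul_le_mul_of_nonneg_left (covRadSub_sq_le B j) (le_of_lt hε0)
    have := hcvp.trans hcov
    nlinarith [this, hsplit, hss, hd2]
  -- take the index of maximal norm
  obtain ⟨i₀, -, hmax⟩ := Finset.exists_max_image Finset.univ (fun j => ‖B j‖) ⟨i, Finset.mem_univ i⟩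
  set M := ‖B i₀‖ with hM
  have hM0 : 0 ≤ M := norm_nonneg _
  have hsum : ∑ l ∈ Finset.univ.erase i₀, ‖B l‖ ^ 2 ≤ ((n:ℝ) - 1) * M ^ 2 := by
    calc ∑ l ∈ Finset.univ.erase i₀, ‖B l‖ ^ 2
        ≤ ∑ l ∈ Finset.univ.erase i₀, M ^ 2 :=
          Finset.sum_le_sum fun l _ =>
            pow_le_pow_left₀ (norm_nonneg _) (hmax l (Finset.mem_univ l)) 2
      _ = ((Finset.univ.erase i₀).card : ℝ) * M ^ 2 := by
          rw [Finset.sum_const, nsmul_eq_mul]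
      _ = ((n:ℝ) - 1) * M ^ 2 := by
          rw [Finset.card_erase_of_mem (Finset.mem_univ i₀)]
          simp only [Finset.card_univ, Fintype.card_fin]
          rw [Nat.cast_sub hn1]
          norm_num
  have hδ : 0 < 4 - ε * n + ε := by
    have : (n:ℝ) * ε < (4 / ε + 1) * ε := by
      exact mul_lt_mul_of_pos_right hn hε0
    rw [add_mul, div_mul_cancel₀ _ (ne_of_gt hε0), one_mul] at this
    nlinarith
  have hMkey : M ^ 2 * (4 - ε * n + ε) ≤ 4 * lam ^ 2 := by
    have h := key i₀
    have h2 : (ε/4) * ∑ l ∈ Finset.univ.erase i₀, ‖B l‖ ^ 2 ≤ (ε/4) * (((n:ℝ) - 1) * M ^ 2) :=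
      mul_le_mul_of_nonneg_left hsum (by positivity)
    nlinarith
  have hfrac : M ^ 2 ≤ (4 * n / (4 - ε * n + ε)) * lam ^ 2 := by
    rw [div_mul_eq_mul_div, le_div_iff₀ hδ]
    have hn' : (1:ℝ) ≤ (n:ℝ) := by exact_mod_cast hn1
    nlinarith [sq_nonneg lam, hMkey]
  have hBi : ‖B i‖ ^ 2 ≤ (4 * n / (4 - ε * n + ε)) * lam ^ 2 := by
    have := pow_le_pow_left₀ (norm_nonneg (B i)) (hmax i (Finset.mem_univ i)) 2
    linarith
  have hc0 : 0 ≤ 4 * (n:ℝ) / (4 - ε * n + ε) := by positivity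
  calc ‖B i‖ = Real.sqrt (‖B i‖ ^ 2) := (Real.sqrt_sq (norm_nonneg _)).symm
    _ ≤ Real.sqrt ((4 * n / (4 - ε * n + ε)) * lam ^ 2) := Real.sqrt_le_sqrt hBi
    _ = Real.sqrt (4 * n / (4 - ε * n + ε)) * lam := by
        rw [Real.sqrt_mul hc0, Real.sqrt_sq hlam0]
end
end

section
/- Let b_1,…,b_n be independent random vectors in ℝ^n whose entries are i.i.d. standard normal N(0,1), and let a_2,…,a_n be fixed integers, not all zero, with S = Σ_{i=2}^n a_i². Then Pr( ‖b_1 + Σ_{i=2}^n a_i b_i‖² ≤ ‖b_1‖² ) ≤ (1 + S/4)^{−n/2}. -/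
open Finset MeasureTheory ProbabilityTheory

noncomputable section

open Real
open scoped ENNReal

/-- Core 1-d Gaussian integral: `∫ exp(-(A x² + B x + C)) dγ`. -/
lemma gauss_lint_core (A B C : ℝ) (hA : -(1/2) < A) :
    ∫⁻ x, ENNReal.ofReal (Real.exp (-(A * x ^ 2 + B * x + C))) ∂(gaussianReal 0 1)
      = ENNReal.ofReal ((Real.sqrt (1 + 2 * A))⁻¹ *
          Real.exp (B ^ 2 / (2 * (1 + 2 * A)) - C)) := by
  set P : ℝ := A + 1/2 with hP
  have hP0 : 0 < P := by simp only [hP]; linarith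
  have h2P : 1 + 2 * A = 2 * P := by simp only [hP]; ring
  set D : ℝ := (Real.sqrt (2 * π))⁻¹ * Real.exp (B ^ 2 / (4 * P) - C) with hD
  have hD0 : 0 ≤ D := by positivity
  have hPne : P ≠ 0 := hP0.ne'
  have hg : ∀ x : ℝ, gaussianPDFReal 0 1 x * Real.exp (-(A * x ^ 2 + B * x + C))
      = D * Real.exp (-P * (x + B / (2 * P)) ^ 2) := by
    intro x
    simp only [gaussianPDFReal, NNReal.coe_one, mul_one, sub_zero, hD]
    rw [mul_assoc, ← Real.exp_add, mul_assoc, ← Real.exp_add]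
    congr 1
    field_simp
    ring_nf
    rw [mul_inv_cancel_right₀ hPne, mul_inv_cancel_right₀ hPne,
      show x ^ 2 * P ^ 2 * P⁻¹ = x ^ 2 * P by rw [pow_two P, ← mul_assoc, mul_inv_cancel_right₀ hPne], hP]
    congr 1
    ring
  rw [gaussianReal_of_var_ne_zero 0 one_ne_zero,
    lintegral_withDensity_eq_lintegral_mul _ (measurable_gaussianPDF 0 1) (by fun_prop)]
  have : ∀ x : ℝ, (gaussianPDF 0 1 * fun x => ENNReal.ofReal (Real.exp (-(A * x ^ 2 + B * x + C)))) x
      = ENNReal.ofReal (gaussianPDFReal 0 1 x * Real.exp (-(A * x ^ 2 + B * x + C))) := by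
    intro x
    simp only [Pi.mul_apply, gaussianPDF]
    rw [← ENNReal.ofReal_mul (gaussianPDFReal_nonneg 0 1 x)]
  simp_rw [this, hg]
  have hint : Integrable (fun x : ℝ => D * Real.exp (-P * (x + B / (2 * P)) ^ 2)) := by
    exact (((integrable_exp_neg_mul_sq hP0).comp_add_right (B / (2 * P)))).const_mul D
  rw [← ofReal_integral_eq_lintegral_ofReal hint
      (Filter.Eventually.of_forall fun x => by positivity)]
  congr 1
  rw [MeasureTheory.integral_const_mul, integral_add_right_eq_self (fun x => Real.exp (-P * x ^ 2)) (B / (2 * P)),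
    integral_gaussian]
  have hsq : Real.sqrt (π / P) = Real.sqrt (2 * π) * (Real.sqrt (2 * P))⁻¹ := by
    rw [← Real.sqrt_inv, ← Real.sqrt_mul (by positivity)]
    congr 1
    field_simp
  rw [hD, hsq, h2P]
  have h2pi : Real.sqrt (2 * π) ≠ 0 := by positivity
  have : B ^ 2 / (4 * P) = B ^ 2 / (2 * (2 * P)) := by ring_nf
  rw [this]
  field_simp

/-- shifted quadratic: `∫ exp(-c(ax+β)²) dγ`. -/
lemma gauss_lint_quad (c a β : ℝ) (hc : 0 ≤ c) :
    ∫⁻ x, ENNReal.ofReal (Real.exp (-(c * (a * x + β) ^ 2))) ∂(gaussianReal 0 1)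
      = ENNReal.ofReal ((Real.sqrt (1 + 2 * c * a ^ 2))⁻¹ *
          Real.exp (-(c / (1 + 2 * c * a ^ 2)) * β ^ 2)) := by
  have h1 : (0:ℝ) < 1 + 2 * c * a ^ 2 := by positivity
  have h := gauss_lint_core (c * a ^ 2) (2 * c * a * β) (c * β ^ 2) (by nlinarith)
  simp only [show ∀ x : ℝ, -(c * (a * x + β) ^ 2)
      = -(c * a ^ 2 * x ^ 2 + 2 * c * a * β * x + c * β ^ 2) from fun x => by ring]
  rw [h, show 1 + 2 * (c * a ^ 2) = 1 + 2 * c * a ^ 2 by ring]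
  congr 2
  field_simp
  ring

/-- positive quadratic: `∫ exp(c x²) dγ` for `c < 1/2`. -/
lemma gauss_lint_sq (c : ℝ) (hc : c < 1/2) :
    ∫⁻ x, ENNReal.ofReal (Real.exp (c * x ^ 2)) ∂(gaussianReal 0 1)
      = ENNReal.ofReal ((Real.sqrt (1 - 2 * c))⁻¹) := by
  have h := gauss_lint_core (-c) 0 0 (by linarith)
  simp only [show ∀ x : ℝ, c * x ^ 2 = -(-c * x ^ 2 + 0 * x + 0) from fun x => by ring]
  rw [h, show 1 + 2 * -c = 1 - 2 * c by ring]
  norm_num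

/-- Fubini for a product of single-coordinate functions over a finite power measure. -/
lemma lintegral_pi_prod {ι : Type*} [Fintype ι] [DecidableEq ι] {E : Type*} [MeasurableSpace E]
    (μ : Measure E) [SigmaFinite μ] (x₀ : ι → E) (f : ι → E → ℝ≥0∞)
    (hf : ∀ i, Measurable (f i)) :
    ∫⁻ x : ι → E, ∏ i, f i (x i) ∂(Measure.pi fun _ => μ) = ∏ i, ∫⁻ y, f i y ∂μ := by
  have hmeas : Measurable fun y : ι → E => ∏ i, f i (y i) :=
    Finset.measurable_prod _ fun i _ => (hf i).comp (measurable_pi_apply i)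
  have key : ∀ s : Finset ι, ∀ x : ι → E,
      (∫⋯∫⁻_s, (fun y => ∏ i, f i (y i)) ∂(fun _ => μ)) x
        = (∏ i ∈ s, ∫⁻ y, f i y ∂μ) * ∏ i ∈ sᶜ, f i (x i) := by
    intro s
    induction s using Finset.induction_on with
    | empty => intro x; simp
    | insert k t hk ih =>
      intro x
      rw [lmarginal_insert _ hmeas hk]
      have hsplit : ∀ y : E, (∫⋯∫⁻_t, (fun y => ∏ i, f i (y i)) ∂(fun _ => μ))
          (Function.update x k y)
          = (∏ i ∈ t, ∫⁻ y, f i y ∂μ) * (f k y * ∏ i ∈ (insert k t)ᶜ, f i (x i)) := by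
        intro y
        rw [ih]
        congr 1
        have hkc : k ∈ tᶜ := Finset.mem_compl.2 hk
        rw [← Finset.insert_erase hkc, Finset.prod_insert (Finset.notMem_erase k _),
          Function.update_self, ← Finset.compl_insert]
        congr 1
        refine Finset.prod_congr rfl fun i hi => ?_
        rw [Function.update_of_ne]
        rintro rfl
        exact (Finset.mem_compl.1 hi) (Finset.mem_insert_self i t)
      simp_rw [hsplit]
      rw [lintegral_const_mul _ ((hf k).mul_const _), lintegral_mul_const _ (hf k),
        Finset.prod_insert hk]
      ring
  rw [lintegral_eq_lmarginal_univ x₀, key Finset.univ x₀]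
  simp

/-- Pull a factor independent of the marginalized coordinates out of `lmarginal`. -/
lemma lmarginal_mul_indep {ι : Type*} [DecidableEq ι] {E : ι → Type*}
    [∀ i, MeasurableSpace (E i)] (μ : ∀ i, Measure (E i)) (s : Finset ι)
    (g f : (∀ i, E i) → ℝ≥0∞)
    (hg : ∀ x y, (∀ i ∉ s, x i = y i) → g x = g y) (hgtop : ∀ x, g x ≠ ⊤)
    (x : ∀ i, E i) :
    (∫⋯∫⁻_s, (fun y => g y * f y) ∂μ) x = g x * (∫⋯∫⁻_s, f ∂μ) x := by
  simp only [lmarginal]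
  have h : ∀ y, g (Function.updateFinset x s y) = g x := fun y =>
    hg _ _ fun i hi => by simp [Function.updateFinset, hi]
  simp_rw [h]
  exact lintegral_const_mul' _ _ (hgtop x)

lemma ofReal_finset_prod {ι : Type*} (s : Finset ι) (f : ι → ℝ) (hf : ∀ i, 0 ≤ f i) :
    ENNReal.ofReal (∏ i ∈ s, f i) = ∏ i ∈ s, ENNReal.ofReal (f i) := by
  induction s using Finset.cons_induction with
  | empty => simp
  | cons i s hi ih => rw [Finset.prod_cons, Finset.prod_cons, ENNReal.ofReal_mul (hf i), ih]

lemma meas_aux {n : ℕ} (a : Fin n → ℝ) (u : Finset (Fin n))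
    (ρ : (Fin n → Fin n → ℝ) → Fin n → ℝ) (hρ : Measurable ρ) (c : ℝ) :
    Measurable fun b : Fin n → Fin n → ℝ =>
      ENNReal.ofReal (Real.exp (-(c * ∑ j, (∑ i ∈ u, a i * b i j + ρ b j) ^ 2))) := by
  apply Measurable.ennreal_ofReal
  apply Real.measurable_exp.comp
  apply Measurable.neg
  apply Measurable.const_mul
  apply Finset.measurable_sum
  intro j _
  apply Measurable.pow_const
  apply Measurable.add
  · refine Finset.measurable_sum _ fun i _ => ?_
    have h : Measurable fun b : Fin n → Fin n → ℝ => b i j :=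
      (measurable_pi_apply j).comp (measurable_pi_apply i)
    exact h.const_mul _
  · exact (measurable_pi_apply j).comp hρ

lemma lmarginal_gauss_vec {n : ℕ} (a : Fin n → ℝ) (s : Finset (Fin n)) :
    ∀ (c : ℝ), 0 ≤ c →
    ∀ (ρ : (Fin n → Fin n → ℝ) → Fin n → ℝ), Measurable ρ →
    (∀ x y : Fin n → Fin n → ℝ, (∀ i ∉ s, x i = y i) → ρ x = ρ y) →
    ∀ x : Fin n → Fin n → ℝ,
    (∫⋯∫⁻_s, (fun b => ENNReal.ofReal (Real.exp
        (-(c * ∑ j, (∑ i ∈ s, a i * b i j + ρ b j) ^ 2))))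
      ∂(fun _ : Fin n => (Measure.pi fun _ : Fin n => gaussianReal 0 1))) x
      = ENNReal.ofReal (((Real.sqrt (1 + 2 * c * ∑ i ∈ s, a i ^ 2))⁻¹) ^ n *
          Real.exp (-(c / (1 + 2 * c * ∑ i ∈ s, a i ^ 2)) * ∑ j, ρ x j ^ 2)) := by
  induction s using Finset.induction_on with
  | empty =>
    intro c hc ρ hρm hρ x
    simp [Real.sqrt_one]
  | insert k t hk ih =>
    intro c hc ρ hρm hρ x
    set St : ℝ := ∑ i ∈ t, a i ^ 2 with hSt
    have hSt0 : 0 ≤ St := Finset.sum_nonneg fun i _ => sq_nonneg _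
    set T : ℝ := 1 + 2 * c * St with hTdef
    clear_value St
    have hT : 0 < T := by nlinarith
    clear_value T
    set ρ' : (Fin n → Fin n → ℝ) → Fin n → ℝ := fun b j => a k * b k j + ρ b j with hρ'def
    have hρ'm : Measurable ρ' := by
      apply measurable_pi_lambda
      intro j
      exact (((measurable_pi_apply j).comp (measurable_pi_apply k)).const_mul _).add
        ((measurable_pi_apply j).comp hρm)
    have hρ' : ∀ x y : Fin n → Fin n → ℝ, (∀ i ∉ t, x i = y i) → ρ' x = ρ' y := by
      intro x y h
      funext j
      have hxy : ρ x = ρ y := hρ x y fun i hi => h i fun hit => hi (Finset.mem_insert_of_mem hit)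
      simp only [hρ'def, h k hk, hxy]
    have hfun : (fun b : Fin n → Fin n → ℝ => ENNReal.ofReal (Real.exp
          (-(c * ∑ j, (∑ i ∈ insert k t, a i * b i j + ρ b j) ^ 2))))
        = fun b => ENNReal.ofReal (Real.exp
          (-(c * ∑ j, (∑ i ∈ t, a i * b i j + ρ' b j) ^ 2))) := by
      funext b
      have h : ∀ j : Fin n, (∑ i ∈ insert k t, a i * b i j + ρ b j)
          = (∑ i ∈ t, a i * b i j + ρ' b j) := by
        intro j
        rw [Finset.sum_insert hk]
        simp only [hρ'def]
        ring
      simp_rw [h]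
    rw [hfun, lmarginal_insert _ (meas_aux a t ρ' hρ'm c) hk]
    have hstep : ∀ y : Fin n → ℝ,
        (∫⋯∫⁻_t, (fun b => ENNReal.ofReal (Real.exp
            (-(c * ∑ j, (∑ i ∈ t, a i * b i j + ρ' b j) ^ 2))))
          ∂(fun _ : Fin n => (Measure.pi fun _ : Fin n => gaussianReal 0 1)))
          (Function.update x k y)
        = ENNReal.ofReal (((Real.sqrt T)⁻¹) ^ n *
            Real.exp (-(c / T) * ∑ j, (a k * y j + ρ x j) ^ 2)) := by
      intro y
      rw [ih c hc ρ' hρ'm hρ' (Function.update x k y)]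
      have h1 : ρ (Function.update x k y) = ρ x := by
        refine hρ _ _ fun i hi => Function.update_of_ne ?_ _ _
        rintro rfl
        exact hi (Finset.mem_insert_self i t)
      simp only [hρ'def, Function.update_self, h1, ← hSt, ← hTdef]
    rw [lintegral_congr hstep]
    have hpull : ∀ y : Fin n → ℝ,
        ENNReal.ofReal (((Real.sqrt T)⁻¹) ^ n *
            Real.exp (-(c / T) * ∑ j, (a k * y j + ρ x j) ^ 2))
        = ENNReal.ofReal (((Real.sqrt T)⁻¹) ^ n) *
            ∏ j, ENNReal.ofReal (Real.exp (-(c / T * (a k * y j + ρ x j) ^ 2))) := by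
      intro y
      rw [ENNReal.ofReal_mul (by positivity)]
      congr 1
      rw [← ofReal_finset_prod _ _ (fun j => (Real.exp_pos _).le), ← Real.exp_sum]
      congr 2
      rw [Finset.mul_sum Finset.univ (fun j => (a k * y j + ρ x j) ^ 2) (-(c / T))]
      exact Finset.sum_congr rfl fun j _ => neg_mul _ _
    simp_rw [hpull]
    rw [lintegral_const_mul' _ _ ENNReal.ofReal_ne_top,
      lintegral_pi_prod (gaussianReal 0 1) (fun _ => (0:ℝ))
        (fun j => fun z => ENNReal.ofReal (Real.exp (-(c / T * (a k * z + ρ x j) ^ 2))))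
        (fun j => by fun_prop)]
    have hquad : ∀ j : Fin n,
        ∫⁻ z, ENNReal.ofReal (Real.exp (-(c / T * (a k * z + ρ x j) ^ 2))) ∂(gaussianReal 0 1)
        = ENNReal.ofReal ((Real.sqrt (1 + 2 * (c / T) * a k ^ 2))⁻¹ *
            Real.exp (-(c / T / (1 + 2 * (c / T) * a k ^ 2)) * ρ x j ^ 2)) :=
      fun j => gauss_lint_quad (c / T) (a k) (ρ x j) (div_nonneg hc hT.le)
    simp_rw [hquad]
    -- now pure algebra in ℝ≥0∞ / ℝ
    set U : ℝ := 1 + 2 * (c / T) * a k ^ 2 with hUdef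
    clear_value U
    have hU : 0 < U := by
      have h0 : 0 ≤ c / T := div_nonneg hc hT.le
      nlinarith [mul_nonneg h0 (sq_nonneg (a k))]
    set V : ℝ := 1 + 2 * c * ∑ i ∈ insert k t, a i ^ 2 with hVdef
    clear_value V
    have hTU : T * U = V := by
      rw [hVdef, Finset.sum_insert hk, hUdef, hTdef, hSt]
      field_simp
      ring
    have hV : 0 < V := by rw [← hTU]; positivity
    have hKu : (Real.sqrt T)⁻¹ * (Real.sqrt U)⁻¹ = (Real.sqrt V)⁻¹ := by
      rw [← mul_inv, ← Real.sqrt_mul hT.le, hTU]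
    have hcc : c / T / U = c / V := by rw [div_div, hTU]
    rw [← ofReal_finset_prod _ _ (fun j => by positivity),
      ← ENNReal.ofReal_mul (by positivity)]
    congr 1
    rw [Finset.prod_mul_distrib, Finset.prod_const, Finset.card_univ, Fintype.card_fin,
      ← mul_assoc, ← mul_pow, hKu]
    congr 1
    rw [← Real.exp_sum]
    congr 1
    simp_rw [hcc]
    rw [Finset.mul_sum Finset.univ (fun j => ρ x j ^ 2) (-(c / V))]

/-- The law of `n` independent random vectors in `ℝ^n` whose entries are
i.i.d. standard normal `N(0,1)`. -/
def gaussBasisLaw (n : ℕ) : Measure (Fin n → Fin n → ℝ) :=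
  Measure.pi fun _ : Fin n => Measure.pi fun _ : Fin n => gaussianReal 0 1

theorem gauss_prob_shorter_combination_le {n : ℕ} (hn : 0 < n) (a : Fin n → ℤ)
    (ha : ∃ i : Fin n, i ≠ ⟨0, hn⟩ ∧ a i ≠ 0)
    (S : ℝ) (hS : S = ∑ i ∈ univ.erase (⟨0, hn⟩ : Fin n), (a i : ℝ) ^ 2) :
    gaussBasisLaw n
        {b : Fin n → Fin n → ℝ |
          ‖(EuclideanSpace.equiv (Fin n) ℝ).symm (b ⟨0, hn⟩) +
              ∑ i ∈ univ.erase (⟨0, hn⟩ : Fin n),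
                (a i : ℝ) • (EuclideanSpace.equiv (Fin n) ℝ).symm (b i)‖ ^ 2 ≤
            ‖(EuclideanSpace.equiv (Fin n) ℝ).symm (b ⟨0, hn⟩)‖ ^ 2} ≤
      ENNReal.ofReal ((1 + S / 4) ^ (-(n : ℝ) / 2)) := by
  classical
  set z : Fin n := ⟨0, hn⟩ with hz
  set s₀ : Finset (Fin n) := univ.erase z with hs₀
  set A : Fin n → ℝ := fun i => (a i : ℝ) with hA
  have hzs : z ∉ s₀ := Finset.notMem_erase z univ
  have hS' : S = ∑ i ∈ s₀, A i ^ 2 := hS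
  have hS0 : 0 ≤ S := by
    rw [hS']; exact Finset.sum_nonneg fun i _ => sq_nonneg _
  -- norms via coordinates
  have hnorm : ∀ w : Fin n → ℝ,
      ‖(EuclideanSpace.equiv (Fin n) ℝ).symm w‖ ^ 2 = ∑ j, w j ^ 2 := by
    intro w
    rw [EuclideanSpace.norm_eq, Real.sq_sqrt (Finset.sum_nonneg fun j _ => by positivity)]
    refine Finset.sum_congr rfl fun j _ => ?_
    simp [Real.norm_eq_abs, sq_abs]
  have hvec : ∀ b : Fin n → Fin n → ℝ,
      (EuclideanSpace.equiv (Fin n) ℝ).symm (b z) +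
          ∑ i ∈ s₀, A i • (EuclideanSpace.equiv (Fin n) ℝ).symm (b i)
        = (EuclideanSpace.equiv (Fin n) ℝ).symm (b z + ∑ i ∈ s₀, A i • b i) := by
    intro b
    rw [map_add, map_sum]
    try congr 1
    all_goals exact Finset.sum_congr rfl fun i _ => (map_smul _ _ _).symm
  -- the two quadratic quantities
  set N0 : (Fin n → Fin n → ℝ) → ℝ := fun b => ∑ j, b z j ^ 2 with hN0
  set N1 : (Fin n → Fin n → ℝ) → ℝ :=
    fun b => ∑ j, (∑ i ∈ s₀, A i * b i j + b z j) ^ 2 with hN1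
  have hmem : ∀ b : Fin n → Fin n → ℝ,
      b ∈ {b : Fin n → Fin n → ℝ |
          ‖(EuclideanSpace.equiv (Fin n) ℝ).symm (b z) +
              ∑ i ∈ s₀, A i • (EuclideanSpace.equiv (Fin n) ℝ).symm (b i)‖ ^ 2 ≤
            ‖(EuclideanSpace.equiv (Fin n) ℝ).symm (b z)‖ ^ 2} → N1 b ≤ N0 b := by
    intro b hb
    simp only [Set.mem_setOf_eq, hvec b, hnorm] at hb
    refine le_trans (le_of_eq ?_) hb
    refine Finset.sum_congr rfl fun j _ => ?_
    simp only [Pi.add_apply, Finset.sum_apply, Pi.smul_apply, smul_eq_mul]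
    ring
  -- the Chernoff-type dominating function
  set g : (Fin n → Fin n → ℝ) → ℝ≥0∞ :=
    fun b => ENNReal.ofReal (Real.exp (1/4 * N0 b)) with hg
  set f : (Fin n → Fin n → ℝ) → ℝ≥0∞ :=
    fun b => ENNReal.ofReal (Real.exp (-(1/4 * N1 b))) with hf
  have hgf : ∀ b, g b * f b = ENNReal.ofReal (Real.exp (1/4 * (N0 b - N1 b))) := by
    intro b
    rw [hg, hf, ← ENNReal.ofReal_mul (Real.exp_pos _).le, ← Real.exp_add]
    congr 2
    ring
  have hfmeas : Measurable f := by
    apply Measurable.ennreal_ofReal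
    apply Real.measurable_exp.comp
    apply Measurable.neg
    apply Measurable.const_mul
    apply Finset.measurable_sum
    intro j _
    apply Measurable.pow_const
    apply Measurable.add
    · refine Finset.measurable_sum _ fun i _ => ?_
      have h : Measurable fun b : Fin n → Fin n → ℝ => b i j :=
        (measurable_pi_apply j).comp (measurable_pi_apply i)
      exact h.const_mul _
    · exact (measurable_pi_apply j).comp (measurable_pi_apply z)
  have hgmeas : Measurable g := by
    apply Measurable.ennreal_ofReal
    apply Real.measurable_exp.comp
    apply Measurable.const_mul
    refine Finset.measurable_sum _ fun j _ => ?_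
    exact ((measurable_pi_apply j).comp (measurable_pi_apply z)).pow_const 2
  have hFmeas : Measurable fun b => g b * f b := hgmeas.mul hfmeas
  -- step 1: the probability is at most the integral of g * f
  have step1 : gaussBasisLaw n
      {b : Fin n → Fin n → ℝ |
          ‖(EuclideanSpace.equiv (Fin n) ℝ).symm (b z) +
              ∑ i ∈ s₀, A i • (EuclideanSpace.equiv (Fin n) ℝ).symm (b i)‖ ^ 2 ≤
            ‖(EuclideanSpace.equiv (Fin n) ℝ).symm (b z)‖ ^ 2}
      ≤ ∫⁻ b, g b * f b ∂(gaussBasisLaw n) := by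
    set E := {b : Fin n → Fin n → ℝ |
          ‖(EuclideanSpace.equiv (Fin n) ℝ).symm (b z) +
              ∑ i ∈ s₀, A i • (EuclideanSpace.equiv (Fin n) ℝ).symm (b i)‖ ^ 2 ≤
            ‖(EuclideanSpace.equiv (Fin n) ℝ).symm (b z)‖ ^ 2}
    calc gaussBasisLaw n E = ∫⁻ _ in E, 1 ∂(gaussBasisLaw n) := (setLIntegral_one E).symm
      _ ≤ ∫⁻ b in E, g b * f b ∂(gaussBasisLaw n) := by
          refine setLIntegral_mono hFmeas fun b hb => ?_
          rw [hgf b]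
          refine ENNReal.one_le_ofReal.mpr (Real.one_le_exp ?_)
          have := hmem b hb
          nlinarith
      _ ≤ ∫⁻ b, g b * f b ∂(gaussBasisLaw n) := setLIntegral_le_lintegral E _
  refine le_trans step1 ?_
  -- step 2: compute the integral
  have hgdep : ∀ x y : Fin n → Fin n → ℝ, (∀ i ∉ s₀, x i = y i) → g x = g y := by
    intro x y h
    simp only [hg, hN0, h z hzs]
  have hρdep : ∀ x y : Fin n → Fin n → ℝ, (∀ i ∉ s₀, x i = y i) →
      (fun j => x z j) = fun j => y z j := by
    intro x y h
    rw [h z hzs]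
  have hcomp : ∫⁻ b, g b * f b ∂(gaussBasisLaw n)
      = ∫⁻ y : Fin n → ℝ, g (Function.update (fun _ _ => (0:ℝ)) z y) *
          ENNReal.ofReal ((Real.sqrt (1 + 2 * (1/4) * S))⁻¹ ^ n *
            Real.exp (-(1/4 / (1 + 2 * (1/4) * S)) * ∑ j, y j ^ 2))
          ∂(Measure.pi fun _ : Fin n => gaussianReal 0 1) := by
    rw [show gaussBasisLaw n = Measure.pi fun _ : Fin n =>
        Measure.pi fun _ : Fin n => gaussianReal 0 1 from rfl]
    rw [lintegral_eq_lmarginal_univ (fun _ _ => (0:ℝ)),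
      lmarginal_erase _ hFmeas (Finset.mem_univ z)]
    refine lintegral_congr fun y => ?_
    rw [← hs₀]
    rw [lmarginal_mul_indep _ _ _ _ hgdep (fun x => ENNReal.ofReal_ne_top) _]
    congr 1
    have := lmarginal_gauss_vec A s₀ (1/4) (by norm_num) (fun b => b z)
      (measurable_pi_apply z) hρdep (Function.update (fun _ _ => (0:ℝ)) z y)
    rw [hf]
    rw [show (fun b : Fin n → Fin n → ℝ => ENNReal.ofReal (Real.exp (-(1/4 * N1 b))))
        = fun b => ENNReal.ofReal (Real.exp
            (-(1/4 * ∑ j, (∑ i ∈ s₀, A i * b i j + (fun j => b z j) j) ^ 2))) from rfl]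
    rw [this, ← hS', Function.update_self]
  rw [hcomp]
  -- pull out the constant and integrate coordinatewise
  have hT : (0:ℝ) < 1 + 2 * (1/4) * S := by nlinarith
  set c₂ : ℝ := 1/4 - 1/4 / (1 + 2 * (1/4) * S) with hc₂
  have hc₂0 : 0 ≤ c₂ := by
    rw [hc₂]
    have : 1/4 / (1 + 2 * (1/4) * S) ≤ 1/4 := by
      apply div_le_self (by norm_num)
      nlinarith
    linarith
  have hc₂half : c₂ < 1/2 := by
    rw [hc₂]
    have : 0 < 1/4 / (1 + 2 * (1/4) * S) := by positivity
    linarith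
  clear_value c₂
  have hcomb : ∀ y : Fin n → ℝ, g (Function.update (fun _ _ => (0:ℝ)) z y) *
      ENNReal.ofReal ((Real.sqrt (1 + 2 * (1/4) * S))⁻¹ ^ n *
        Real.exp (-(1/4 / (1 + 2 * (1/4) * S)) * ∑ j, y j ^ 2))
      = ENNReal.ofReal ((Real.sqrt (1 + 2 * (1/4) * S))⁻¹ ^ n) *
          ∏ j, ENNReal.ofReal (Real.exp (c₂ * y j ^ 2)) := by
    intro y
    rw [hg, hN0]
    simp only [Function.update_self]
    rw [← ofReal_finset_prod _ _ (fun j => (Real.exp_pos _).le), ← Real.exp_sum,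
      ← ENNReal.ofReal_mul (Real.exp_pos _).le, ← ENNReal.ofReal_mul (by positivity)]
    congr 1
    rw [mul_left_comm]
    congr 1
    rw [← Real.exp_add]
    congr 1
    rw [show ∑ j, c₂ * y j ^ 2 = c₂ * ∑ j, y j ^ 2 from (Finset.mul_sum _ _ _).symm, hc₂]
    ring
  simp_rw [hcomb]
  rw [lintegral_const_mul' _ _ ENNReal.ofReal_ne_top,
    lintegral_pi_prod (gaussianReal 0 1) (fun _ => (0:ℝ))
      (fun j => fun u => ENNReal.ofReal (Real.exp (c₂ * u ^ 2)))
      (fun j => by fun_prop)]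
  simp_rw [gauss_lint_sq c₂ hc₂half]
  rw [Finset.prod_const, Finset.card_univ, Fintype.card_fin,
    ← ENNReal.ofReal_pow (by positivity), ← ENNReal.ofReal_mul (by positivity), ← mul_pow]
  -- final real computation
  refine le_of_eq ?_
  congr 1
  have h1 : (0:ℝ) < 1 - 2 * c₂ := by linarith
  have hprod : (Real.sqrt (1 + 2 * (1/4) * S))⁻¹ * (Real.sqrt (1 - 2 * c₂))⁻¹
      = (Real.sqrt (1 + S / 4))⁻¹ := by
    rw [← mul_inv, ← Real.sqrt_mul (by positivity)]
    congr 2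
    rw [hc₂]
    field_simp
    ring
  rw [hprod]
  have hx : (0:ℝ) < 1 + S / 4 := by linarith
  rw [Real.sqrt_eq_rpow, ← Real.rpow_neg hx.le, ← Real.rpow_natCast ((1 + S/4) ^ (-(1/2):ℝ)) n,
    ← Real.rpow_mul hx.le]
  congr 1
  ring
end
end

section
/- Let B = [b_1,…,b_n] be an invertible real n×n matrix with columns b_i, let D = B^{−⊤} with columns d_1,…,d_n (the dual basis, satisfying ⟨d_i, b_j⟩ = δ_{ij}), and let b_i* denote the i-th Gram–Schmidt vector of B. Then for every i: (a) ‖π^⊥_{B_{[n]∖i}}(b_i)‖ = 1/‖d_i‖, and (b) ‖b_i*‖ ≥ 1/‖d_i‖. -/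
noncomputable section

instance finWFLT (n : ℕ) : WellFoundedLT (Fin n) := inferInstance

lemma mem_orth_span' {E : Type*} [NormedAddCommGroup E] [InnerProductSpace ℝ E] (s : Set E)
    (v : E) (h : ∀ u ∈ s, inner ℝ u v = (0:ℝ)) : v ∈ (Submodule.span ℝ s)ᗮ := by
  rw [Submodule.mem_orthogonal]
  intro u hu
  induction hu using Submodule.span_induction with
  | mem x hx => exact h x hx
  | zero => simp
  | add x y _ _ hx hy => simp [inner_add_left, hx, hy]
  | smul c x _ hx => simp [inner_smul_left, hx]

lemma starProj_congr {E : Type*} [NormedAddCommGroup E] [InnerProductSpace ℝ E]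
    {K K' : Submodule ℝ E} [K.HasOrthogonalProjection] [K'.HasOrthogonalProjection]
    (h : K = K') (x : E) :
    (K.orthogonalProjectionOnto x : E) = (K'.orthogonalProjectionOnto x : E) := by
  subst h; rfl

theorem dual_basis_norm_eq_inv_orth_component {n : ℕ}
    (B : Matrix (Fin n) (Fin n) ℝ) (hB : IsUnit B.det)
    (col : Fin n → Euc n)
    (hcol : ∀ i, col i = (EuclideanSpace.equiv (Fin n) ℝ).symm (B.transpose i))
    (d : Fin n → Euc n)
    (hd : ∀ i, d i = (EuclideanSpace.equiv (Fin n) ℝ).symm (B⁻¹ i)) :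
    ∀ i : Fin n,
      ‖(Submodule.orthogonalProjectionOnto (Submodule.span ℝ (col '' {j | j ≠ i}))ᗮ (col i) : Euc n)‖ =
          1 / ‖d i‖ ∧
        ‖InnerProductSpace.gramSchmidt ℝ col i‖ ≥ 1 / ‖d i‖ := by
  intro i
  have hinner : ∀ j k : Fin n, (inner ℝ (d j) (col k) : ℝ) = if j = k then 1 else 0 := by
    intro j k
    have h1 : B⁻¹ * B = 1 := Matrix.nonsing_inv_mul B hB
    have h2 := congrFun (congrFun h1 j) k
    rw [hd, hcol]
    simp only [PiLp.inner_apply, RCLike.inner_apply, conj_trivial]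
    simpa [Matrix.mul_apply, Matrix.one_apply, Matrix.transpose_apply, mul_comm] using h2
  have hdne : d i ≠ 0 := by
    intro h
    have := hinner i i
    simp [h] at this
  have hdnorm : (0:ℝ) < ‖d i‖ := norm_pos_iff.2 hdne
  -- any vector orthogonal to all columns is zero
  have htop : ∀ x : Euc n, (∀ j, (inner ℝ (col j) x : ℝ) = 0) → x = 0 := by
    intro x hx
    have hv : Matrix.vecMul (fun m => x m) B = 0 := by
      funext j
      have := hx j
      rw [hcol] at this
      simp only [PiLp.inner_apply, RCLike.inner_apply, conj_trivial] at this
      simpa [Matrix.vecMul, dotProduct, Matrix.transpose_apply, mul_comm] using this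
    have : (fun m => x m) = 0 := by
      have h2 : Matrix.vecMul (Matrix.vecMul (fun m => x m) B) B⁻¹ = 0 := by rw [hv]; simp
      rwa [Matrix.vecMul_vecMul, Matrix.mul_nonsing_inv B hB, Matrix.vecMul_one] at h2
    ext m
    exact congrFun this m
  -- the orthogonal complement of the other columns is spanned by d i
  have hSperp : (Submodule.span ℝ (col '' {j | j ≠ i}))ᗮ = ℝ ∙ d i := by
    refine le_antisymm ?_ ?_
    · intro x hx
      rw [Submodule.mem_orthogonal] at hx
      have hx' : ∀ j, j ≠ i → (inner ℝ (col j) x : ℝ) = 0 := fun j hj =>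
        hx (col j) (Submodule.subset_span ⟨j, hj, rfl⟩)
      have hzero : x - (inner ℝ (col i) x : ℝ) • d i = 0 := by
        apply htop
        intro j
        rw [inner_sub_right, inner_smul_right]
        rcases eq_or_ne j i with rfl | hj
        · rw [real_inner_comm (d j) (col j), hinner]
          simp
        · rw [real_inner_comm (d i) (col j), hinner, hx' j hj, if_neg (Ne.symm hj)]
          simp
      rw [sub_eq_zero] at hzero
      rw [hzero]
      exact Submodule.smul_mem _ _ (Submodule.mem_span_singleton_self _)
    · rw [Submodule.span_singleton_le_iff_mem]
      apply mem_orth_span'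
      rintro _ ⟨j, hj, rfl⟩
      rw [real_inner_comm, hinner i j, if_neg (Ne.symm hj)]
  have hproj : (Submodule.orthogonalProjectionOnto (Submodule.span ℝ (col '' {j | j ≠ i}))ᗮ (col i) : Euc n)
      = (1 / ‖d i‖ ^ 2) • d i := by
    rw [starProj_congr hSperp, ← Submodule.starProjection_apply,
      Submodule.starProjection_singleton, hinner i i]
    simp
  have hnorm : ‖(Submodule.orthogonalProjectionOnto (Submodule.span ℝ (col '' {j | j ≠ i}))ᗮ (col i) : Euc n)‖
      = 1 / ‖d i‖ := by
    rw [hproj, norm_smul]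
    rw [norm_div, norm_one, norm_pow, norm_norm]
    field_simp
  refine ⟨hnorm, ?_⟩
  -- Gram–Schmidt vector is the projection onto the complement of earlier columns
  have hKS : Submodule.span ℝ (col '' Set.Iio i) ≤ Submodule.span ℝ (col '' {j | j ≠ i}) :=
    Submodule.span_mono (Set.image_mono fun j hj => ne_of_lt hj)
  have hgsmem : InnerProductSpace.gramSchmidt ℝ col i ∈ (Submodule.span ℝ (col '' Set.Iio i))ᗮ := by
    rw [← InnerProductSpace.span_gramSchmidt_Iio ℝ col i]
    apply mem_orth_span'
    rintro _ ⟨j, hj, rfl⟩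
    exact InnerProductSpace.gramSchmidt_orthogonal ℝ col (ne_of_lt hj)
  have hdiff : col i - InnerProductSpace.gramSchmidt ℝ col i ∈ Submodule.span ℝ (col '' Set.Iio i) := by
    rw [← InnerProductSpace.span_gramSchmidt_Iio ℝ col i]
    have := InnerProductSpace.gramSchmidt_def ℝ col i
    have h3 : col i - InnerProductSpace.gramSchmidt ℝ col i
        = ∑ j ∈ Finset.Iio i, (Submodule.orthogonalProjectionOnto (ℝ ∙ InnerProductSpace.gramSchmidt ℝ col j) (col i) : Euc n) := by
      rw [this]; simp only [Submodule.starProjection_apply]; abel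
    rw [h3]
    apply Submodule.sum_mem
    intro j hj
    have hmem : (Submodule.orthogonalProjectionOnto (ℝ ∙ InnerProductSpace.gramSchmidt ℝ col j) (col i) : Euc n)
        ∈ (ℝ ∙ InnerProductSpace.gramSchmidt ℝ col j) := (Submodule.orthogonalProjectionOnto _ (col i)).2
    have hjm : InnerProductSpace.gramSchmidt ℝ col j ∈ InnerProductSpace.gramSchmidt ℝ col '' Set.Iio i :=
      ⟨j, Finset.mem_Iio.mp hj, rfl⟩
    exact Submodule.span_mono (Set.singleton_subset_iff.2 hjm) hmem
  have hgs : (Submodule.orthogonalProjectionOnto (Submodule.span ℝ (col '' Set.Iio i))ᗮ (col i) : Euc n)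
      = InnerProductSpace.gramSchmidt ℝ col i :=
    Submodule.eq_starProjection_of_mem_orthogonal hgsmem
      (Submodule.le_orthogonal_orthogonal _ hdiff)
  have hcompare := Submodule.orthogonalProjectionOnto_starProjection_of_le
    (Submodule.orthogonal_le hKS) (col i)
  calc (1:ℝ) / ‖d i‖
      = ‖(Submodule.orthogonalProjectionOnto (Submodule.span ℝ (col '' {j | j ≠ i}))ᗮ (col i) : Euc n)‖ :=
        hnorm.symm
    _ = ‖(Submodule.orthogonalProjectionOnto (Submodule.span ℝ (col '' {j | j ≠ i}))ᗮ
          ((Submodule.orthogonalProjectionOnto (Submodule.span ℝ (col '' Set.Iio i))ᗮ (col i) : Euc n)) : Euc n)‖ := by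
        exact congrArg (fun y : (Submodule.span ℝ (col '' {j | j ≠ i}))ᗮ => ‖(y : Euc n)‖)
          hcompare.symm
    _ ≤ ‖((Submodule.orthogonalProjectionOnto (Submodule.span ℝ (col '' Set.Iio i))ᗮ (col i) : Euc n))‖ := by
        refine le_trans (ContinuousLinearMap.le_opNorm
          (Submodule.orthogonalProjectionOnto (Submodule.span ℝ (col '' {j | j ≠ i}))ᗮ) _) ?_
        calc ‖Submodule.orthogonalProjectionOnto (Submodule.span ℝ (col '' {j | j ≠ i}))ᗮ‖ *
              ‖((Submodule.orthogonalProjectionOnto (Submodule.span ℝ (col '' Set.Iio i))ᗮ (col i) : Euc n))‖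
            ≤ 1 * ‖((Submodule.orthogonalProjectionOnto (Submodule.span ℝ (col '' Set.Iio i))ᗮ (col i) : Euc n))‖ :=
              mul_le_mul_of_nonneg_right (Submodule.orthogonalProjectionOnto_norm_le _) (norm_nonneg _)
          _ = _ := one_mul _
    _ = ‖InnerProductSpace.gramSchmidt ℝ col i‖ := by rw [hgs]
end
end

section
/- Let n ≥ 2, let u, v be nonzero vectors in ℝ^n with angle θ = arccos(⟨u,v⟩/(‖u‖‖v‖)), and let a be a uniformly random vector on the unit sphere S^{n−1}. Then Pr( sign(⟨a,u⟩) ≠ sign(⟨a,v⟩) ) = θ/π. Consequently, the angular hash family F = { f_a : f_a(x) = 1 if ⟨a,x⟩ ≥ 0, else 0 } is (θ_1, θ_2, 1 − θ_1/π, 1 − θ_2/π)-sensitive for the angular distance D(u,v) = arccos(⟨u,v⟩/(‖u‖‖v‖)) for any θ_1 < θ_2. -/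
open MeasureTheory

noncomputable section

/-- The uniform probability measure on the unit sphere `S^{n-1}` of `ℝ^n`. -/
def unifSphere (n : ℕ) : Measure (Metric.sphere (0 : Euc n) 1) :=
  ((volume : Measure (Euc n)).toSphere Set.univ)⁻¹ • (volume : Measure (Euc n)).toSphere

/-- The angular hash associated with the vector `a`: `x ↦ 1` if `⟨a, x⟩ ≥ 0`, else `0`. -/
def angHash {n : ℕ} (a x : Euc n) : ℕ := if 0 ≤ (inner ℝ a x : ℝ) then 1 else 0

open Set
open scoped ENNReal RealInnerProductSpace Pointwise

private lemma cos_nonneg_iff_core {ψ : ℝ} (h1 : -(2*Real.pi) < ψ) (h2 : ψ < Real.pi) :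
    0 ≤ Real.cos ψ ↔ (|ψ| ≤ Real.pi/2 ∨ ψ ≤ -(3*Real.pi/2)) := by
  have hπ := Real.pi_pos
  constructor
  · intro h
    by_contra hc
    push_neg at hc
    obtain ⟨ha, hb⟩ := hc
    rw [lt_abs] at ha
    rcases ha with hpos | hneg
    · have : Real.cos ψ < 0 := Real.cos_neg_of_pi_div_two_lt_of_lt hpos (by linarith)
      linarith
    · have : Real.cos (-ψ) < 0 := Real.cos_neg_of_pi_div_two_lt_of_lt hneg (by linarith)
      rw [Real.cos_neg] at this
      linarith
  · rintro (h | h)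
    · exact Real.cos_nonneg_of_mem_Icc ⟨(abs_le.mp h).1, (abs_le.mp h).2⟩
    · have := Real.cos_nonneg_of_mem_Icc (x := ψ + 2*Real.pi) ⟨by linarith, by linarith⟩
      rwa [Real.cos_add_two_pi] at this

private lemma angle_measure {θ : ℝ} (h0 : 0 ≤ θ) (hπ : θ ≤ Real.pi) :
    volume {φ : ℝ | φ ∈ Ioo (-Real.pi) Real.pi ∧
        ¬ ((0 ≤ Real.cos φ) ↔ (0 ≤ Real.cos (φ - θ)))}
      = ENNReal.ofReal (2*θ) := by
  have hπ' := Real.pi_pos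
  set π := Real.pi
  set P1 : Set ℝ := {φ | -(π/2) ≤ φ ∧ φ < θ - π/2 ∧ θ - 3*π/2 < φ} with hP1
  set P2 : Set ℝ := {φ | π/2 < φ ∧ φ < π ∧ φ ≤ θ + π/2} with hP2
  set P3 : Set ℝ := {φ | -π < φ ∧ φ ≤ θ - 3*π/2 ∧ φ < -(π/2)} with hP3
  have hset : {φ : ℝ | φ ∈ Ioo (-π) π ∧ ¬ ((0 ≤ Real.cos φ) ↔ (0 ≤ Real.cos (φ - θ)))}
      = P1 ∪ P2 ∪ P3 := by
    ext φ
    simp only [hP1, hP2, hP3, mem_setOf_eq, mem_Ioo, mem_union]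
    constructor
    · rintro ⟨⟨hl, hr⟩, hne⟩
      have hc1 : (0 ≤ Real.cos φ) ↔ (-(π/2) ≤ φ ∧ φ ≤ π/2) := by
        rw [cos_nonneg_iff_core (by linarith) hr, abs_le]
        constructor
        · rintro (h | h)
          · exact h
          · exact absurd h (by push_neg; linarith)
        · exact Or.inl
      have hc2 : (0 ≤ Real.cos (φ - θ)) ↔
          ((θ - π/2 ≤ φ ∧ φ ≤ θ + π/2) ∨ φ ≤ θ - 3*π/2) := by
        rw [cos_nonneg_iff_core (by linarith) (by linarith), abs_le]
        constructor
        · rintro (h | h)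
          · exact Or.inl ⟨by linarith [h.1], by linarith [h.2]⟩
          · exact Or.inr (by linarith)
        · rintro (h | h)
          · exact Or.inl ⟨by linarith [h.1], by linarith [h.2]⟩
          · exact Or.inr (by linarith)
      rw [hc1, hc2] at hne
      by_cases hA : -(π/2) ≤ φ ∧ φ ≤ π/2
      · have hB : ¬ ((θ - π/2 ≤ φ ∧ φ ≤ θ + π/2) ∨ φ ≤ θ - 3*π/2) :=
          fun hb => hne (iff_of_true hA hb)
        push_neg at hB
        obtain ⟨hB1, hB2⟩ := hB
        have hlt : φ < θ - π/2 := by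
          by_contra hx
          push_neg at hx
          have := hB1 hx
          linarith [hA.2]
        left; left
        exact ⟨hA.1, hlt, by linarith⟩
      · have hB : (θ - π/2 ≤ φ ∧ φ ≤ θ + π/2) ∨ φ ≤ θ - 3*π/2 := by
          by_contra hb
          exact hne (iff_of_false hA hb)
        rcases not_and_or.mp hA with h | h <;> push_neg at h
        · rcases hB with ⟨hb1, hb2⟩ | hb3
          · exact absurd hb1 (by push_neg; linarith)
          · right; exact ⟨hl, hb3, by linarith⟩
        · rcases hB with ⟨hb1, hb2⟩ | hb3
          · left; right; exact ⟨by linarith, hr, hb2⟩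
          · exact absurd hb3 (by push_neg; linarith)
    · intro hmem
      have hIoo : -π < φ ∧ φ < π := by
        rcases hmem with (⟨a, b, c⟩ | ⟨a, b, c⟩) | ⟨a, b, c⟩
        · exact ⟨by linarith, by linarith⟩
        · exact ⟨by linarith, b⟩
        · exact ⟨a, by linarith⟩
      refine ⟨hIoo, ?_⟩
      have hc1 : (0 ≤ Real.cos φ) ↔ (-(π/2) ≤ φ ∧ φ ≤ π/2) := by
        rw [cos_nonneg_iff_core (by linarith [hIoo.1]) hIoo.2, abs_le]
        constructor
        · rintro (h | h)
          · exact h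
          · exact absurd h (by push_neg; linarith [hIoo.1])
        · exact Or.inl
      have hc2 : (0 ≤ Real.cos (φ - θ)) ↔
          ((θ - π/2 ≤ φ ∧ φ ≤ θ + π/2) ∨ φ ≤ θ - 3*π/2) := by
        rw [cos_nonneg_iff_core (by linarith [hIoo.1]) (by linarith [hIoo.2]), abs_le]
        constructor
        · rintro (h | h)
          · exact Or.inl ⟨by linarith [h.1], by linarith [h.2]⟩
          · exact Or.inr (by linarith)
        · rintro (h | h)
          · exact Or.inl ⟨by linarith [h.1], by linarith [h.2]⟩
          · exact Or.inr (by linarith)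
      rw [hc1, hc2]
      rcases hmem with (⟨a, b, c⟩ | ⟨a, b, c⟩) | ⟨a, b, c⟩
      · intro hiff
        rcases hiff.mp ⟨a, by linarith⟩ with h | h
        · linarith [h.1]
        · linarith
      · intro hiff
        have := hiff.mpr (Or.inl ⟨by linarith, c⟩)
        linarith [this.2]
      · intro hiff
        have := hiff.mpr (Or.inr b)
        linarith [this.2]
  rw [hset]
  have m1 : volume P1 = ENNReal.ofReal θ := by
    apply le_antisymm
    · refine le_trans (measure_mono (?_ : P1 ⊆ Ico (-(π/2)) (θ - π/2))) ?_
      · rintro φ ⟨a, b, c⟩; exact ⟨a, b⟩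
      · rw [Real.volume_Ico]
        exact le_of_eq (by ring_nf)
    · refine le_trans ?_ (measure_mono (?_ : Ioo (-(π/2)) (θ - π/2) ⊆ P1))
      · rw [Real.volume_Ioo]
        exact le_of_eq (by ring_nf)
      · rintro φ ⟨a, b⟩; exact ⟨le_of_lt a, b, by linarith⟩
  have m2 : volume P2 = ENNReal.ofReal (min (θ + π/2) π - π/2) := by
    apply le_antisymm
    · refine le_trans (measure_mono (?_ : P2 ⊆ Ioc (π/2) (min (θ + π/2) π))) ?_
      · rintro φ ⟨a, b, c⟩; exact ⟨a, le_min c (le_of_lt b)⟩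
      · rw [Real.volume_Ioc]
    · refine le_trans ?_ (measure_mono (?_ : Ioo (π/2) (min (θ + π/2) π) ⊆ P2))
      · rw [Real.volume_Ioo]
      · rintro φ ⟨a, b⟩
        exact ⟨a, lt_of_lt_of_le b (min_le_right _ _), le_of_lt (lt_of_lt_of_le b (min_le_left _ _))⟩
  have m3 : volume P3 = ENNReal.ofReal (θ - π/2) := by
    apply le_antisymm
    · refine le_trans (measure_mono (?_ : P3 ⊆ Ioc (-π) (θ - 3*π/2))) ?_
      · rintro φ ⟨a, b, c⟩; exact ⟨a, b⟩
      · rw [Real.volume_Ioc]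
        exact le_of_eq (by ring_nf)
    · refine le_trans ?_ (measure_mono (?_ : Ioo (-π) (θ - 3*π/2) ⊆ P3))
      · rw [Real.volume_Ioo]
        exact le_of_eq (by ring_nf)
      · rintro φ ⟨a, b⟩; exact ⟨a, le_of_lt b, by linarith⟩
  have hm1 : MeasurableSet P1 := by
    have : P1 = Ico (-(π/2)) (θ - π/2) ∩ Ioi (θ - 3*π/2) := by
      ext φ; simp only [hP1, mem_setOf_eq, mem_inter_iff, mem_Ico, mem_Ioi]; tauto
    rw [this]; exact measurableSet_Ico.inter measurableSet_Ioi
  have hm2 : MeasurableSet P2 := by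
    have : P2 = Ioo (π/2) π ∩ Iic (θ + π/2) := by
      ext φ; simp only [hP2, mem_setOf_eq, mem_inter_iff, mem_Ioo, mem_Iic]; tauto
    rw [this]; exact measurableSet_Ioo.inter measurableSet_Iic
  have hm3 : MeasurableSet P3 := by
    have : P3 = Ioc (-π) (θ - 3*π/2) ∩ Iio (-(π/2)) := by
      ext φ; simp only [hP3, mem_setOf_eq, mem_inter_iff, mem_Ioc, mem_Iio]; tauto
    rw [this]; exact measurableSet_Ioc.inter measurableSet_Iio
  have hd12 : Disjoint P1 P2 := by
    rw [Set.disjoint_left]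
    rintro φ ⟨a, b, c⟩ ⟨d, e, f⟩; linarith
  have hd3 : Disjoint (P1 ∪ P2) P3 := by
    rw [Set.disjoint_left]
    rintro φ (⟨a, b, c⟩ | ⟨a, b, c⟩) ⟨d, e, f⟩ <;> linarith
  rw [measure_union hd3 hm3, measure_union hd12 hm2, m1, m2, m3]
  rcases le_total θ (π/2) with hth | hth
  · have : min (θ + π/2) π = θ + π/2 := min_eq_left (by linarith)
    rw [this]
    have h3 : ENNReal.ofReal (θ - π/2) = 0 := ENNReal.ofReal_eq_zero.mpr (by linarith)
    rw [h3, add_zero]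
    rw [← ENNReal.ofReal_add h0 (by linarith)]
    ring_nf
  · have : min (θ + π/2) π = π := min_eq_right (by linarith)
    rw [this]
    rw [← ENNReal.ofReal_add h0 (by linarith), ← ENNReal.ofReal_add (by linarith) (by linarith)]
    ring_nf

private lemma lintegral_polar (g : ℝ × ℝ → ℝ≥0∞) :
    ∫⁻ p, g p = ∫⁻ p in polarCoord.target, ENNReal.ofReal p.1 * g (polarCoord.symm p) := by
  set B : ℝ × ℝ → ℝ × ℝ →L[ℝ] ℝ × ℝ := fun p =>
    LinearMap.toContinuousLinearMap (Matrix.toLin (Module.Basis.finTwoProd ℝ) (Module.Basis.finTwoProd ℝ)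
      !![Real.cos p.2, -p.1 * Real.sin p.2; Real.sin p.2, p.1 * Real.cos p.2]) with hB
  have hder : ∀ p ∈ polarCoord.target,
      HasFDerivWithinAt polarCoord.symm (B p) polarCoord.target p :=
    fun p _ => (hasFDerivAt_polarCoord_symm p).hasFDerivWithinAt
  have B_det : ∀ p : ℝ × ℝ, (B p).det = p.1 := by
    intro p
    conv_rhs => rw [← one_mul p.1, ← Real.cos_sq_add_sin_sq p.2]
    simp only [hB, neg_mul, LinearMap.det_toContinuousLinearMap, LinearMap.det_toLin,
      Matrix.det_fin_two_of, sub_neg_eq_add]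
    ring
  calc ∫⁻ p, g p = ∫⁻ p in polarCoord.source, g p := by
        rw [Measure.restrict_congr_set polarCoord_source_ae_eq_univ, Measure.restrict_univ]
    _ = ∫⁻ p in polarCoord.symm '' polarCoord.target, g p := by
        rw [polarCoord.symm_image_target_eq_source]
    _ = ∫⁻ p in polarCoord.target, ENNReal.ofReal |(B p).det| * g (polarCoord.symm p) :=
        lintegral_image_eq_lintegral_abs_det_fderiv_mul volume
          polarCoord.open_target.measurableSet hder polarCoord.symm.injOn g
    _ = ∫⁻ p in polarCoord.target, ENNReal.ofReal p.1 * g (polarCoord.symm p) := by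
        apply setLIntegral_congr_fun polarCoord.open_target.measurableSet
        intro p hp
        beta_reduce
        rw [B_det, abs_of_pos hp.1]

private lemma lintegral_cone (D : ℝ × ℝ → Prop) [DecidablePred D]
    (hD : MeasurableSet {w : ℝ × ℝ | D w})
    (hscale : ∀ r : ℝ, 0 < r → ∀ a c : ℝ, D (r*a, r*c) ↔ D (a, c))
    (G : ℝ → ℝ≥0∞) (hG : Measurable G) :
    ∫⁻ w : ℝ × ℝ, (if D w then G (w.1^2 + w.2^2) else 0)
      = (∫⁻ r in Ioi (0:ℝ), ENNReal.ofReal r * G (r^2))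
        * volume {φ : ℝ | φ ∈ Ioo (-Real.pi) Real.pi ∧ D (Real.cos φ, Real.sin φ)} := by
  rw [lintegral_polar]
  have hcongr : ∀ p ∈ polarCoord.target,
      ENNReal.ofReal p.1 * (if D (polarCoord.symm p) then G ((polarCoord.symm p).1^2
          + (polarCoord.symm p).2^2) else 0)
      = (ENNReal.ofReal p.1 * G (p.1^2)) * (if D (Real.cos p.2, Real.sin p.2) then 1 else 0) := by
    rintro ⟨r, φ⟩ ⟨hr, hφ⟩
    simp only [polarCoord_symm_apply]
    have hq : (r * Real.cos φ)^2 + (r * Real.sin φ)^2 = r^2 := by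
      have := Real.sin_sq_add_cos_sq φ
      nlinarith
    have hDiff : D (r * Real.cos φ, r * Real.sin φ) ↔ D (Real.cos φ, Real.sin φ) :=
      hscale r hr _ _
    by_cases h : D (Real.cos φ, Real.sin φ)
    · rw [if_pos (hDiff.mpr h), if_pos h, hq, mul_one]
    · rw [if_neg (fun hx => h (hDiff.mp hx)), if_neg h, mul_zero, mul_zero]
  rw [setLIntegral_congr_fun polarCoord.open_target.measurableSet
    hcongr]
  have htarget : polarCoord.target = Ioi (0:ℝ) ×ˢ Ioo (-Real.pi) Real.pi := rfl
  rw [htarget]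
  have : (volume : Measure (ℝ × ℝ)).restrict (Ioi (0:ℝ) ×ˢ Ioo (-Real.pi) Real.pi)
      = ((volume : Measure ℝ).restrict (Ioi (0:ℝ))).prod
        ((volume : Measure ℝ).restrict (Ioo (-Real.pi) Real.pi)) := by
    rw [Measure.volume_eq_prod, Measure.prod_restrict]
  rw [this]
  have hf : AEMeasurable (fun r : ℝ => ENNReal.ofReal r * G (r^2))
      ((volume : Measure ℝ).restrict (Ioi (0:ℝ))) :=
    (ENNReal.measurable_ofReal.comp measurable_id).aemeasurable.mul
      ((hG.comp (measurable_id.pow_const 2)).aemeasurable)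
  have hg : AEMeasurable (fun φ : ℝ => (if D (Real.cos φ, Real.sin φ) then (1:ℝ≥0∞) else 0))
      ((volume : Measure ℝ).restrict (Ioo (-Real.pi) Real.pi)) := by
    have hms : MeasurableSet {φ : ℝ | D (Real.cos φ, Real.sin φ)} :=
      (Real.continuous_cos.prodMk Real.continuous_sin).measurable hD
    exact (Measurable.ite hms measurable_const measurable_const).aemeasurable
  rw [lintegral_prod_mul hf hg]
  congr 1
  have : ∀ φ : ℝ, (if D (Real.cos φ, Real.sin φ) then (1:ℝ≥0∞) else 0)
      = Set.indicator {φ : ℝ | D (Real.cos φ, Real.sin φ)} (fun _ => 1) φ := by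
    intro φ; rw [Set.indicator_apply]; rfl
  rw [lintegral_congr this]
  have hms : MeasurableSet {φ : ℝ | D (Real.cos φ, Real.sin φ)} :=
    (Real.continuous_cos.prodMk Real.continuous_sin).measurable hD
  rw [lintegral_indicator hms, setLIntegral_one, Measure.restrict_apply hms]
  congr 1
  ext φ
  simp only [mem_inter_iff, mem_setOf_eq]
  tauto

private lemma vol_cone_mul {n : ℕ} (hn : 2 ≤ n)
    (b : OrthonormalBasis (Fin n) ℝ (EuclideanSpace ℝ (Fin n)))
    (D : ℝ × ℝ → Prop) (hD : MeasurableSet {w : ℝ × ℝ | D w})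
    (hscale : ∀ r : ℝ, 0 < r → ∀ a c : ℝ, D (r*a, r*c) ↔ D (a, c)) :
    volume {x : EuclideanSpace ℝ (Fin n) | ‖x‖ < 1 ∧
        D (b.repr x ⟨0, by omega⟩, b.repr x ⟨1, by omega⟩)}
        * ENNReal.ofReal (2*Real.pi)
      = volume {φ : ℝ | φ ∈ Ioo (-Real.pi) Real.pi ∧ D (Real.cos φ, Real.sin φ)}
        * volume (Metric.ball (0 : EuclideanSpace ℝ (Fin n)) 1) := by
  classical
  set i0 : Fin n := ⟨0, by omega⟩ with hi0
  set i1 : Fin n := ⟨1, by omega⟩ with hi1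
  set p : Fin n → Prop := fun i => (i : ℕ) < 2 with hp
  set K := ({i : Fin n // ¬ p i} → ℝ) with hK
  set κ : Fin 2 ≃ {i : Fin n // p i} :=
    { toFun := fun j => ⟨⟨j.1, lt_of_lt_of_le j.2 hn⟩, j.2⟩
      invFun := fun i => ⟨i.1.1, i.2⟩
      left_inv := fun j => rfl
      right_inv := fun i => Subtype.ext (Fin.ext rfl) } with hκ
  set f3 : ({i : Fin n // p i} → ℝ) → ℝ × ℝ := fun z => (z (κ 0), z (κ 1)) with hf3
  have h3 : MeasurePreserving f3 volume ((volume : Measure ℝ).prod (volume : Measure ℝ)) := by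
    have h3a : MeasurePreserving
        (⇑(MeasurableEquiv.piCongrLeft (fun _ : {i : Fin n // p i} => ℝ) κ).symm)
        volume volume :=
      (volume_measurePreserving_piCongrLeft (fun _ => ℝ) κ).symm _
    have h3b : MeasurePreserving (⇑(MeasurableEquiv.finTwoArrow : (Fin 2 → ℝ) ≃ᵐ ℝ × ℝ))
        volume ((volume : Measure ℝ).prod (volume : Measure ℝ)) := by
      have := measurePreserving_finTwoArrow (volume : Measure ℝ)
      rwa [← volume_pi] at this
    exact h3b.comp h3a
  set Φ : EuclideanSpace ℝ (Fin n) → (ℝ × ℝ) × K :=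
    (Prod.map f3 (id : K → K)) ∘ (⇑(MeasurableEquiv.piEquivPiSubtypeProd (fun _ : Fin n => ℝ) p))
      ∘ (⇑(MeasurableEquiv.toLp 2 (Fin n → ℝ)).symm) with hΦdef
  have hΦ : MeasurePreserving Φ volume (((volume : Measure (ℝ × ℝ))).prod (volume : Measure K)) := by
    have MP1 := EuclideanSpace.volume_preserving_symm_measurableEquiv_toLp (Fin n)
    have MP2 : MeasurePreserving (⇑(MeasurableEquiv.piEquivPiSubtypeProd (fun _ : Fin n => ℝ) p))
        volume ((volume : Measure ({i : Fin n // p i} → ℝ)).prod (volume : Measure K)) := by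
      have := volume_preserving_piEquivPiSubtypeProd (fun _ : Fin n => ℝ) p
      rwa [Measure.volume_eq_prod] at this
    exact (h3.prod (MeasurePreserving.id _)).comp (MP2.comp MP1)
  have hΦx : ∀ x : EuclideanSpace ℝ (Fin n),
      Φ x = ((x i0, x i1), fun i : {i : Fin n // ¬ p i} => x i.1) := fun x => rfl
  set R : K → ℝ := fun y => ∑ i, (y i)^2 with hR
  have hRmeas : Measurable R :=
    Finset.measurable_sum _ (fun i _ => (measurable_pi_apply i).pow_const 2)
  set G : ℝ → ℝ≥0∞ := fun t => volume {y : K | R y < 1 - t} with hG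
  have hGanti : Antitone G := fun s t hst =>
    measure_mono (fun y hy => lt_of_lt_of_le hy (sub_le_sub_left hst 1))
  have hGmeas : Measurable G := hGanti.measurable
  have key : ∀ (D' : ℝ × ℝ → Prop), MeasurableSet {w : ℝ × ℝ | D' w} →
      (∀ r : ℝ, 0 < r → ∀ a c : ℝ, D' (r*a, r*c) ↔ D' (a, c)) →
      volume {x : EuclideanSpace ℝ (Fin n) | ‖x‖ < 1 ∧ D' (b.repr x i0, b.repr x i1)}
        = (∫⁻ r in Ioi (0:ℝ), ENNReal.ofReal r * G (r^2))
          * volume {φ : ℝ | φ ∈ Ioo (-Real.pi) Real.pi ∧ D' (Real.cos φ, Real.sin φ)} := by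
    intro D' hD' hscale'
    have happ : ∀ (i : Fin n), Measurable fun y : EuclideanSpace ℝ (Fin n) => y i :=
      fun i => (measurable_pi_apply i).comp (MeasurableEquiv.toLp 2 (Fin n → ℝ)).symm.measurable
    have hymeas : MeasurableSet {y : EuclideanSpace ℝ (Fin n) | ‖y‖ < 1 ∧ D' (y i0, y i1)} := by
      refine MeasurableSet.inter ?_ ?_
      · exact (isOpen_lt continuous_norm continuous_const).measurableSet
      · exact ((happ i0).prodMk (happ i1)) hD'
    have h1 : {x : EuclideanSpace ℝ (Fin n) | ‖x‖ < 1 ∧ D' (b.repr x i0, b.repr x i1)}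
        = ⇑b.repr ⁻¹' {y : EuclideanSpace ℝ (Fin n) | ‖y‖ < 1 ∧ D' (y i0, y i1)} := by
      ext x
      simp only [mem_setOf_eq, mem_preimage, LinearIsometryEquiv.norm_map]
    set S : Set ((ℝ × ℝ) × K) := {z | D' z.1 ∧ (z.1.1^2 + z.1.2^2) + R z.2 < 1} with hS
    have hSmeas : MeasurableSet S := by
      refine MeasurableSet.inter ?_ ?_
      · exact measurable_fst hD'
      · have hm : Measurable fun z : (ℝ × ℝ) × K => (z.1.1^2 + z.1.2^2) + R z.2 :=
          ((measurable_fst.fst.pow_const 2).add (measurable_fst.snd.pow_const 2)).add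
            (hRmeas.comp measurable_snd)
        exact measurableSet_lt hm measurable_const
    have h2 : {y : EuclideanSpace ℝ (Fin n) | ‖y‖ < 1 ∧ D' (y i0, y i1)} = Φ ⁻¹' S := by
      ext y
      have hnorm : ‖y‖ < 1 ↔ ∑ i, (y i)^2 < 1 := by
        rw [EuclideanSpace.norm_eq]
        rw [show (1:ℝ) = Real.sqrt 1 by simp]
        rw [Real.sqrt_lt_sqrt_iff (by positivity)]
        simp [sq_abs]
      have hsplit : ∑ i : Fin n, (y i)^2
          = ((y i0)^2 + (y i1)^2) + ∑ i : {i : Fin n // ¬ p i}, (y i.1)^2 := by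
        rw [← Fintype.sum_subtype_add_sum_subtype p (fun i => (y i)^2)]
        congr 1
        rw [← Equiv.sum_comp κ (fun i : {i : Fin n // p i} => (y i.1)^2), Fin.sum_univ_two]
        rfl
      rw [mem_preimage, hΦx y]
      simp only [mem_setOf_eq, hS]
      rw [hnorm, hsplit]
      tauto
    rw [h1, (b.measurePreserving_repr).measure_preimage hymeas.nullMeasurableSet, h2,
      hΦ.measure_preimage hSmeas.nullMeasurableSet]
    rw [Measure.prod_apply hSmeas]
    have hslice : ∀ w : ℝ × ℝ,
        volume (Prod.mk w ⁻¹' S) = (if D' w then G (w.1^2 + w.2^2) else 0) := by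
      intro w
      by_cases h : D' w
      · have hpre : Prod.mk w ⁻¹' S = {y : K | R y < 1 - (w.1^2 + w.2^2)} := by
          ext y
          simp only [mem_preimage, hS, mem_setOf_eq, h, true_and]
          constructor <;> intro <;> linarith
        rw [hpre, if_pos h]
      · have hpre : Prod.mk w ⁻¹' S = (∅ : Set K) := by
          ext y
          simp [hS, h]
        rw [hpre, if_neg h, measure_empty]
    rw [lintegral_congr hslice]
    exact lintegral_cone D' hD' hscale' G hGmeas
  have hball : Metric.ball (0 : EuclideanSpace ℝ (Fin n)) 1
      = {x : EuclideanSpace ℝ (Fin n) | ‖x‖ < 1 ∧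
          (fun _ : ℝ × ℝ => True) (b.repr x i0, b.repr x i1)} := by
    ext x
    simp [mem_ball_zero_iff]
  rw [key D hD hscale, hball,
    key (fun _ => True) (by simp) (by intro r hr a c; simp)]
  have htrue : {φ : ℝ | φ ∈ Ioo (-Real.pi) Real.pi ∧ True} = Ioo (-Real.pi) Real.pi := by
    ext φ; simp
  rw [htrue, Real.volume_Ioo, show Real.pi - -Real.pi = 2*Real.pi by ring]
  ring

private lemma exists_onb {n : ℕ} (hn : 2 ≤ n) (e₁ e₂ : EuclideanSpace ℝ (Fin n))
    (h1 : ‖e₁‖ = 1) (h2 : ‖e₂‖ = 1) (h12 : ⟪e₁, e₂⟫ = 0) :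
    ∃ b : OrthonormalBasis (Fin n) ℝ (EuclideanSpace ℝ (Fin n)),
      b ⟨0, by omega⟩ = e₁ ∧ b ⟨1, by omega⟩ = e₂ := by
  classical
  set i0 : Fin n := ⟨0, by omega⟩ with hi0
  set i1 : Fin n := ⟨1, by omega⟩ with hi1
  have hne : i0 ≠ i1 := by
    simp only [hi0, hi1, Ne, Fin.mk.injEq]
    omega
  have card : Module.finrank ℝ (EuclideanSpace ℝ (Fin n)) = Fintype.card (Fin n) := by
    simp [finrank_euclideanSpace]
  set f : Fin n → EuclideanSpace ℝ (Fin n) := fun i => if i = i0 then e₁ else e₂ with hf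
  have horth : Orthonormal ℝ (({i0, i1} : Set (Fin n)).restrict f) := by
    rw [orthonormal_iff_ite]
    have h21 : ⟪e₂, e₁⟫ = 0 := by rw [real_inner_comm]; exact h12
    rintro ⟨i, hi⟩ ⟨j, hj⟩
    simp only [Set.restrict_apply, Subtype.mk.injEq]
    rcases hi with hi | hi <;> rcases hj with hj | hj <;> subst hi <;> subst hj
    · rw [if_pos rfl]
      show ⟪f i0, f i0⟫ = 1
      simp only [hf, if_pos rfl]
      rw [real_inner_self_eq_norm_mul_norm, h1]; norm_num
    · rw [if_neg hne]
      show ⟪f i0, f i1⟫ = 0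
      simp [hf, Ne.symm hne, h12]
    · rw [if_neg (Ne.symm hne)]
      show ⟪f i1, f i0⟫ = 0
      simp [hf, Ne.symm hne, h21]
    · rw [if_pos rfl]
      show ⟪f i1, f i1⟫ = 1
      simp only [hf, if_neg (Ne.symm hne)]
      rw [real_inner_self_eq_norm_mul_norm, h2]; norm_num
  obtain ⟨b, hb⟩ := horth.exists_orthonormalBasis_extension_of_card_eq card
  refine ⟨b, ?_, ?_⟩
  · simpa [hf] using hb i0 (by simp)
  · simpa [hf, Ne.symm hne] using hb i1 (by simp)

private lemma exists_unit_orthogonal {n : ℕ} (hn : 2 ≤ n) (e₁ : EuclideanSpace ℝ (Fin n))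
    (h1 : ‖e₁‖ = 1) :
    ∃ e₂ : EuclideanSpace ℝ (Fin n), ‖e₂‖ = 1 ∧ ⟪e₁, e₂⟫ = 0 := by
  classical
  set i0 : Fin n := ⟨0, by omega⟩ with hi0
  set i1 : Fin n := ⟨1, by omega⟩ with hi1
  have hne : i0 ≠ i1 := by
    simp only [hi0, hi1, Ne, Fin.mk.injEq]
    omega
  have card : Module.finrank ℝ (EuclideanSpace ℝ (Fin n)) = Fintype.card (Fin n) := by
    simp [finrank_euclideanSpace]
  set f : Fin n → EuclideanSpace ℝ (Fin n) := fun _ => e₁ with hf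
  have horth : Orthonormal ℝ (({i0} : Set (Fin n)).restrict f) := by
    rw [orthonormal_iff_ite]
    rintro ⟨i, hi⟩ ⟨j, hj⟩
    rcases hi with hi; rcases hj with hj; subst hi; subst hj
    simp only [Set.restrict_apply, hf, Subtype.mk.injEq, eq_self_iff_true, if_true]
    show ⟪e₁, e₁⟫ = 1
    rw [real_inner_self_eq_norm_mul_norm, h1]; norm_num
  obtain ⟨b, hb⟩ := horth.exists_orthonormalBasis_extension_of_card_eq card
  have hb0 : b i0 = e₁ := hb i0 (by simp)
  refine ⟨b i1, b.orthonormal.1 i1, ?_⟩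
  rw [← hb0]
  exact b.orthonormal.2 hne


private lemma angHash_ne_iff {n : ℕ} (a x y : Euc n) :
    angHash a x ≠ angHash a y ↔ ¬ ((0 ≤ ⟪a, x⟫) ↔ (0 ≤ ⟪a, y⟫)) := by
  unfold angHash
  by_cases h1 : (0:ℝ) ≤ inner ℝ a x <;> by_cases h2 : (0:ℝ) ≤ inner ℝ a y
  · rw [if_pos h1, if_pos h2]
    exact iff_of_false (by norm_num) (not_not_intro (iff_of_true h1 h2))
  · rw [if_pos h1, if_neg h2]
    exact iff_of_true (by norm_num) (fun hiff => h2 (hiff.mp h1))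
  · rw [if_neg h1, if_pos h2]
    exact iff_of_true (by norm_num) (fun hiff => h1 (hiff.mpr h2))
  · rw [if_neg h1, if_neg h2]
    exact iff_of_false (by norm_num) (not_not_intro (iff_of_false h1 h2))

private lemma pos_mul_nonneg_iff {t : ℝ} (ht : 0 < t) (x : ℝ) : 0 ≤ t * x ↔ 0 ≤ x := by
  constructor
  · intro h
    by_contra hx
    push_neg at hx
    nlinarith
  · exact fun h => mul_nonneg ht.le h

set_option maxHeartbeats 2000000 in
theorem angular_hash_sign_disagreement_prob {n : ℕ} (hn : 2 ≤ n)
    (u v : Euc n) (hu : u ≠ 0) (hv : v ≠ 0)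
    (θ : ℝ) (hθ : θ = Real.arccos ((inner ℝ u v : ℝ) / (‖u‖ * ‖v‖))) :
    unifSphere n {a : Metric.sphere (0 : Euc n) 1 |
        angHash (a : Euc n) u ≠ angHash (a : Euc n) v} = ENNReal.ofReal (θ / Real.pi) ∧
      ∀ θ₁ θ₂ : ℝ, θ₁ < θ₂ →
        (θ ≤ θ₁ →
          ENNReal.ofReal (1 - θ₁ / Real.pi) ≤
            unifSphere n {a : Metric.sphere (0 : Euc n) 1 |
              angHash (a : Euc n) u = angHash (a : Euc n) v}) ∧
        (θ₂ ≤ θ →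
          unifSphere n {a : Metric.sphere (0 : Euc n) 1 |
              angHash (a : Euc n) u = angHash (a : Euc n) v} ≤
            ENNReal.ofReal (1 - θ₂ / Real.pi)) := by
  classical
  have hπ := Real.pi_pos
  have hun : (0:ℝ) < ‖u‖ := norm_pos_iff.mpr hu
  have hvn : (0:ℝ) < ‖v‖ := norm_pos_iff.mpr hv
  set c : ℝ := (inner ℝ u v : ℝ) / (‖u‖ * ‖v‖) with hc
  set u' : Euc n := ‖u‖⁻¹ • u with hu'
  set v' : Euc n := ‖v‖⁻¹ • v with hv'
  have hnu' : ‖u'‖ = 1 := norm_smul_inv_norm hu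
  have hnv' : ‖v'‖ = 1 := norm_smul_inv_norm hv
  have hinner_u'v' : ⟪u', v'⟫ = c := by
    rw [hu', hv', real_inner_smul_left, real_inner_smul_right, hc]
    field_simp
  have hc_le : |c| ≤ 1 := by
    rw [← hinner_u'v']
    calc |⟪u', v'⟫| ≤ ‖u'‖ * ‖v'‖ := abs_real_inner_le_norm u' v'
      _ = 1 := by rw [hnu', hnv']; ring
  have hθ0 : 0 ≤ θ := hθ ▸ Real.arccos_nonneg _
  have hθπ : θ ≤ Real.pi := hθ ▸ Real.arccos_le_pi _
  have hcos : Real.cos θ = c := by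
    rw [hθ]
    exact Real.cos_arccos (abs_le.mp hc_le).1 (abs_le.mp hc_le).2
  have hsin : Real.sin θ = Real.sqrt (1 - c^2) := by rw [hθ]; exact Real.sin_arccos c
  have hsin0 : 0 ≤ Real.sin θ := Real.sin_nonneg_of_nonneg_of_le_pi hθ0 hθπ
  -- obtain orthonormal pair decomposition
  obtain ⟨e₂, he2n, he2o, hv'dec⟩ : ∃ e₂ : Euc n, ‖e₂‖ = 1 ∧ ⟪u', e₂⟫ = 0 ∧
      v' = Real.cos θ • u' + Real.sin θ • e₂ := by
    by_cases hs : Real.sin θ = 0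
    · obtain ⟨e₂, he1, he2⟩ := exists_unit_orthogonal hn u' hnu'
      have hc2 : c^2 = 1 := by
        have h0 : Real.sqrt (1 - c^2) = 0 := by rw [← hsin]; exact hs
        have h1c : 1 - c^2 ≤ 0 := by
          by_contra hcon
          push_neg at hcon
          exact absurd h0 (Real.sqrt_pos.mpr hcon).ne'
        nlinarith [sq_abs c, abs_le.mp hc_le]
      have hveq : v' = c • u' := by
        have hfac : (c - 1) * (c + 1) = 0 := by nlinarith
        rcases mul_eq_zero.mp hfac with h | h
        · have hc1 : c = 1 := by linarith
          have : ⟪u', v'⟫ = 1 := by rw [hinner_u'v', hc1]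
          have := (inner_eq_one_iff_of_norm_eq_one hnu' hnv').mp this
          rw [← this, hc1, one_smul]
        · have hc1 : c = -1 := by linarith
          have hin : ⟪u', -v'⟫ = 1 := by
            rw [inner_neg_right, hinner_u'v', hc1]
            ring
          have hnnv : ‖-v'‖ = 1 := by rw [norm_neg]; exact hnv'
          have := (inner_eq_one_iff_of_norm_eq_one hnu' hnnv).mp hin
          rw [hc1, neg_one_smul, this, neg_neg]
      exact ⟨e₂, he1, he2, by rw [hveq, hs, hcos]; simp⟩
    · have hsinpos : 0 < Real.sin θ := lt_of_le_of_ne hsin0 (Ne.symm hs)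
      set w : Euc n := v' - c • u' with hw
      have hworth : ⟪u', w⟫ = 0 := by
        rw [hw, inner_sub_right,
          show (⟪u', c • u'⟫:ℝ) = c * ⟪u', u'⟫ from real_inner_smul_right u' u' c,
          hinner_u'v', real_inner_self_eq_norm_mul_norm, hnu']
        ring
      have hwnorm : ‖w‖ = Real.sin θ := by
        have hsq : ‖w‖^2 = 1 - c^2 := by
          have ha : (⟪v', c • u'⟫:ℝ) = c * ⟪v', u'⟫ := real_inner_smul_right v' u' c
          have hb : (⟪v', u'⟫:ℝ) = c := by rw [real_inner_comm]; exact hinner_u'v'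
          rw [hw, norm_sub_sq_real, ha, hb, hnv', norm_smul, hnu', Real.norm_eq_abs,
            mul_one, sq_abs]
          ring
        rw [← Real.sqrt_sq (norm_nonneg w), hsq, hsin]
      refine ⟨(Real.sin θ)⁻¹ • w, ?_, ?_, ?_⟩
      · rw [norm_smul, hwnorm, Real.norm_eq_abs, abs_of_pos (inv_pos.mpr hsinpos)]
        field_simp
      · rw [real_inner_smul_right, hworth]; ring
      · rw [show Real.sin θ • (Real.sin θ)⁻¹ • w = w from smul_inv_smul₀ hs w, hcos, hw]
        abel
  obtain ⟨b, hb0, hb1⟩ := exists_onb hn u' e₂ hnu' he2n he2o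
  set i0 : Fin n := ⟨0, by omega⟩ with hi0
  set i1 : Fin n := ⟨1, by omega⟩ with hi1
  obtain ⟨D, hD⟩ : ∃ D : ℝ × ℝ → Prop, D =
      fun w => ¬ ((0 ≤ w.1) ↔ (0 ≤ Real.cos θ * w.1 + Real.sin θ * w.2)) := ⟨_, rfl⟩
  have hDmeas : MeasurableSet {w : ℝ × ℝ | D w} := by
    have hA : MeasurableSet {w : ℝ × ℝ | 0 ≤ w.1} :=
      measurableSet_le measurable_const measurable_fst
    have hB : MeasurableSet {w : ℝ × ℝ | 0 ≤ Real.cos θ * w.1 + Real.sin θ * w.2} :=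
      measurableSet_le measurable_const
        ((measurable_fst.const_mul _).add (measurable_snd.const_mul _))
    have : {w : ℝ × ℝ | D w} = ({w : ℝ × ℝ | 0 ≤ w.1} ∩ {w : ℝ × ℝ | 0 ≤ Real.cos θ * w.1
          + Real.sin θ * w.2}ᶜ) ∪ ({w : ℝ × ℝ | 0 ≤ w.1}ᶜ ∩ {w : ℝ × ℝ | 0 ≤ Real.cos θ * w.1
          + Real.sin θ * w.2}) := by
      ext w
      simp only [hD, mem_setOf_eq, mem_union, mem_inter_iff, mem_compl_iff, mem_setOf_eq]
      tauto
    rw [this]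
    exact (hA.inter hB.compl).union (hA.compl.inter hB)
  have hDscale : ∀ r : ℝ, 0 < r → ∀ a cc : ℝ, D (r*a, r*cc) ↔ D (a, cc) := by
    intro r hr a cc
    simp only [hD]
    have h1 : (0 ≤ r * a) ↔ (0 ≤ a) := pos_mul_nonneg_iff hr a
    have h2 : Real.cos θ * (r*a) + Real.sin θ * (r*cc) = r * (Real.cos θ * a + Real.sin θ * cc) := by
      ring
    rw [h1, h2, pos_mul_nonneg_iff hr]
  -- the sign condition in terms of coordinates
  have hcond : ∀ a : Euc n, (angHash a u ≠ angHash a v) ↔ D (b.repr a i0, b.repr a i1) := by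
    intro a
    have hru : b.repr a i0 = ‖u‖⁻¹ * ⟪a, u⟫ := by
      rw [OrthonormalBasis.repr_apply_apply, hb0, hu', real_inner_smul_left, real_inner_comm]
    have hre : b.repr a i1 = ⟪a, e₂⟫ := by
      rw [OrthonormalBasis.repr_apply_apply, hb1, real_inner_comm]
    have hrv : ‖v‖⁻¹ * ⟪a, v⟫ = Real.cos θ * b.repr a i0 + Real.sin θ * b.repr a i1 := by
      rw [hru, hre]
      have : (‖v‖⁻¹ * ⟪a, v⟫ : ℝ) = ⟪a, v'⟫ := by rw [hv', real_inner_smul_right]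
      rw [this, hv'dec, inner_add_right,
        show (⟪a, Real.cos θ • u'⟫:ℝ) = Real.cos θ * ⟪a, u'⟫ from real_inner_smul_right _ _ _,
        show (⟪a, Real.sin θ • e₂⟫:ℝ) = Real.sin θ * ⟪a, e₂⟫ from real_inner_smul_right _ _ _,
        show (⟪a, u'⟫:ℝ) = ‖u‖⁻¹ * ⟪a, u⟫ from by rw [hu', real_inner_smul_right]]
    rw [angHash_ne_iff]
    simp only [hD]
    have e1 : (0 ≤ ⟪a, u⟫) ↔ (0 ≤ b.repr a i0) := by
      rw [hru, pos_mul_nonneg_iff (inv_pos.mpr hun)]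
    have e2 : (0 ≤ ⟪a, v⟫) ↔ (0 ≤ Real.cos θ * b.repr a i0 + Real.sin θ * b.repr a i1) := by
      rw [← hrv, pos_mul_nonneg_iff (inv_pos.mpr hvn)]
    rw [e1, e2]
  -- the disagreement set on the sphere
  set S : Set (Metric.sphere (0 : Euc n) 1) :=
    {a : Metric.sphere (0 : Euc n) 1 | angHash (a : Euc n) u ≠ angHash (a : Euc n) v} with hSdef
  have hSmeas : MeasurableSet S := by
    have hW : MeasurableSet {x : Euc n | D (b.repr x i0, b.repr x i1)} := by
      have hcont : Continuous fun x : Euc n => (b.repr x i0, b.repr x i1) := by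
        apply Continuous.prodMk <;>
          exact (continuous_apply _).comp ((PiLp.continuous_ofLp 2 _).comp b.repr.continuous)
      exact hcont.measurable hDmeas
    have : S = Subtype.val ⁻¹' {x : Euc n | D (b.repr x i0, b.repr x i1)} := by
      ext a
      simp only [hSdef, mem_setOf_eq, mem_preimage]
      exact hcond _
    rw [this]
    exact hW.preimage measurable_subtype_coe
  -- the solid cone
  have hcone : Ioo (0:ℝ) 1 • (Subtype.val '' S)
      = {x : Euc n | ‖x‖ < 1 ∧ D (b.repr x i0, b.repr x i1)} := by
    ext x
    constructor
    · intro hx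
      rw [Set.mem_smul] at hx
      obtain ⟨r, hr, y, hy, rfl⟩ := hx
      obtain ⟨a, ha, rfl⟩ := hy
      have hna : ‖(a : Euc n)‖ = 1 := norm_eq_of_mem_sphere a
      constructor
      · rw [norm_smul, hna, Real.norm_eq_abs, abs_of_pos hr.1]
        simpa using hr.2
      · have hmap : ∀ i : Fin n, b.repr (r • (a : Euc n)) i = r * b.repr (a : Euc n) i := by
         intro i
         rw [_root_.map_smul]
         rfl
        rw [hmap i0, hmap i1, hDscale r hr.1]
        exact (hcond _).mp ha
    · rintro ⟨hx1, hx2⟩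
      have hx0 : x ≠ 0 := by
        intro h
        rw [hD] at hx2
        apply hx2
        rw [h]
        have : ∀ i : Fin n, b.repr (0 : Euc n) i = 0 := by intro i; rw [map_zero]; rfl
        rw [this i0, this i1]
        norm_num
      have hxn : (0:ℝ) < ‖x‖ := norm_pos_iff.mpr hx0
      rw [Set.mem_smul]
      refine ⟨‖x‖, ⟨hxn, hx1⟩, ‖x‖⁻¹ • x, ?_, ?_⟩
      · refine ⟨⟨‖x‖⁻¹ • x, ?_⟩, ?_, rfl⟩
        · rw [mem_sphere_zero_iff_norm]
          exact norm_smul_inv_norm hx0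
        · rw [hSdef, mem_setOf_eq, hcond]
          have hmap : ∀ i : Fin n, b.repr (‖x‖⁻¹ • x) i = ‖x‖⁻¹ * b.repr x i := by
            intro i
            rw [_root_.map_smul]
            rfl
          rw [hmap i0, hmap i1, hDscale _ (inv_pos.mpr hxn)]
          exact hx2
      · rw [smul_inv_smul₀ (ne_of_gt hxn)]
  -- volume computations
  have hfin : (Module.finrank ℝ (Euc n) : ℝ≥0∞) = (n : ℝ≥0∞) := by
    rw [finrank_euclideanSpace]
    simp
  set B : ℝ≥0∞ := volume (Metric.ball (0 : Euc n) 1) with hB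
  have hB0 : B ≠ 0 := (Metric.measure_ball_pos volume 0 one_pos).ne'
  have hBtop : B ≠ ⊤ := measure_ball_lt_top.ne
  have hangle : volume {φ : ℝ | φ ∈ Ioo (-Real.pi) Real.pi ∧ D (Real.cos φ, Real.sin φ)}
      = ENNReal.ofReal (2*θ) := by
    have : {φ : ℝ | φ ∈ Ioo (-Real.pi) Real.pi ∧ D (Real.cos φ, Real.sin φ)}
        = {φ : ℝ | φ ∈ Ioo (-Real.pi) Real.pi ∧
            ¬ ((0 ≤ Real.cos φ) ↔ (0 ≤ Real.cos (φ - θ)))} := by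
      ext φ
      have : Real.cos θ * Real.cos φ + Real.sin θ * Real.sin φ = Real.cos (φ - θ) := by
        rw [Real.cos_sub]
        ring
      simp only [hD, mem_setOf_eq, this]
    rw [this]
    exact angle_measure hθ0 hθπ
  have hT : volume {x : Euc n | ‖x‖ < 1 ∧ D (b.repr x i0, b.repr x i1)}
      = ENNReal.ofReal (θ / Real.pi) * B := by
    have hmul := vol_cone_mul hn b D hDmeas hDscale
    rw [hangle] at hmul
    have h2π : ENNReal.ofReal (2*Real.pi) ≠ 0 := by
      simp only [ne_eq, ENNReal.ofReal_eq_zero, not_le]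
      linarith
    have h2πtop : ENNReal.ofReal (2*Real.pi) ≠ ⊤ := ENNReal.ofReal_ne_top
    have hrhs : ENNReal.ofReal (θ / Real.pi) * B * ENNReal.ofReal (2*Real.pi)
        = ENNReal.ofReal (2*θ) * B := by
      rw [mul_comm (ENNReal.ofReal (θ / Real.pi)) B, mul_assoc,
        ← ENNReal.ofReal_mul (by positivity)]
      have : θ / Real.pi * (2*Real.pi) = 2*θ := by field_simp
      rw [this, mul_comm]
    have hmain := hmul.trans hrhs.symm
    have hxinv : ENNReal.ofReal (2*Real.pi) * (ENNReal.ofReal (2*Real.pi))⁻¹ = 1 :=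
      ENNReal.mul_inv_cancel h2π h2πtop
    calc volume {x : Euc n | ‖x‖ < 1 ∧ D (b.repr x i0, b.repr x i1)}
        = volume {x : Euc n | ‖x‖ < 1 ∧ D (b.repr x i0, b.repr x i1)}
            * ENNReal.ofReal (2*Real.pi) * (ENNReal.ofReal (2*Real.pi))⁻¹ := by
          rw [mul_assoc, hxinv, mul_one]
      _ = ENNReal.ofReal (θ / Real.pi) * B * ENNReal.ofReal (2*Real.pi)
            * (ENNReal.ofReal (2*Real.pi))⁻¹ := by rw [hmain]
      _ = ENNReal.ofReal (θ / Real.pi) * B := by rw [mul_assoc, hxinv, mul_one]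
  -- toSphere values
  have htoS : (volume : Measure (Euc n)).toSphere S
      = (Module.finrank ℝ (Euc n) : ℝ≥0∞) * (ENNReal.ofReal (θ / Real.pi) * B) := by
    rw [Measure.toSphere_apply' _ hSmeas]
    congr 1
    rw [show ((↑) '' S : Set (Euc n)) = Subtype.val '' S from rfl, hcone, hT]
  have htoU : (volume : Measure (Euc n)).toSphere Set.univ
      = (Module.finrank ℝ (Euc n) : ℝ≥0∞) * B := by
    rw [Measure.toSphere_apply_univ]
  have hfinne : (Module.finrank ℝ (Euc n) : ℝ≥0∞) ≠ 0 := by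
    rw [hfin]
    simp only [ne_eq, Nat.cast_eq_zero]
    omega
  have hU0 : (Module.finrank ℝ (Euc n) : ℝ≥0∞) * B ≠ 0 := mul_ne_zero hfinne hB0
  have hUtop : (Module.finrank ℝ (Euc n) : ℝ≥0∞) * B ≠ ⊤ := by
    rw [hfin]
    exact ENNReal.mul_ne_top (ENNReal.natCast_ne_top n) hBtop
  have hprob : unifSphere n S = ENNReal.ofReal (θ / Real.pi) := by
    rw [unifSphere, Measure.smul_apply, smul_eq_mul, htoS, htoU]
    rw [show (Module.finrank ℝ (Euc n) : ℝ≥0∞) * (ENNReal.ofReal (θ / Real.pi) * B)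
        = ENNReal.ofReal (θ / Real.pi) * ((Module.finrank ℝ (Euc n) : ℝ≥0∞) * B) by ring]
    rw [mul_comm (ENNReal.ofReal (θ / Real.pi)) _, ← mul_assoc,
      ENNReal.inv_mul_cancel hU0 hUtop, one_mul]
  have htotal : unifSphere n (Set.univ : Set (Metric.sphere (0 : Euc n) 1)) = 1 := by
    rw [unifSphere, Measure.smul_apply, smul_eq_mul, htoU]
    exact ENNReal.inv_mul_cancel hU0 hUtop
  have hcompl : {a : Metric.sphere (0 : Euc n) 1 |
      angHash (a : Euc n) u = angHash (a : Euc n) v} = Sᶜ := by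
    ext a
    simp only [hSdef, mem_setOf_eq, mem_compl_iff, not_not]
  have hfinS : unifSphere n S ≠ ⊤ := by
    rw [hprob]
    exact ENNReal.ofReal_ne_top
  have hCm : unifSphere n Sᶜ = ENNReal.ofReal (1 - θ/Real.pi) := by
    rw [measure_compl hSmeas hfinS, htotal, hprob]
    rw [← ENNReal.ofReal_one, ← ENNReal.ofReal_sub _ (div_nonneg hθ0 hπ.le)]
  refine ⟨hprob, ?_⟩
  intro θ₁ θ₂ _
  constructor
  · intro h1
    rw [hcompl, hCm]
    apply ENNReal.ofReal_le_ofReal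
    have : θ / Real.pi ≤ θ₁ / Real.pi := (div_le_div_iff_of_pos_right hπ).mpr h1
    linarith
  · intro h2
    rw [hcompl, hCm]
    apply ENNReal.ofReal_le_ofReal
    have : θ₂ / Real.pi ≤ θ / Real.pi := (div_le_div_iff_of_pos_right hπ).mpr h2
    linarith
end
end
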